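/- arXiv:1803.09227 — 7 statements merged into one kernel-verified Lean document; each statement's English description precedes it below -/
import Mathlib

section
/- (Additive drift, upper tail bound.) For all constants a, b, δ, ξ, η > 0 with a < b, and every function r = r(n) with r(n) = o(n/log n), there exist ρ > 0 and n₀ ∈ ℕ such that the following holds for all n ≥ n₀. Let (X^(t))_{t∈ℕ₀} be a Markov chain on a finite state space S ⊆ ℝ such that for all t ≥ 0: (1) E[X^(t) − X^(t+1) | X^(t) = s] ≥ δ for all s ∈ S with s > a·n, and (2) Pr[|X^(t) − X^(t+1)| ≥ j | X^(t) = s] ≤ r·(1+ξ)^{−j} for all j ∈ ℕ₀ and all s ∈ S. Let T_a := min{t ≥ 0 : X^(t) ≤ a·n}. Then Pr[T_a ≥ (1+η)(b−a)n/δ | X^(0) ≤ b·n] ≤ e^{−ρ·n/r}. -/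
open MeasureTheory ProbabilityTheory Filter
open scoped ENNReal

set_option linter.unusedSectionVars false
set_option maxHeartbeats 1000000


lemma aux_one_sub_mul_exp_le (x : ℝ) : (1 - x) * Real.exp x ≤ 1 := by
  have h1 := Real.add_one_le_exp (-x)
  have h2 := Real.exp_pos x
  have h3 : Real.exp (-x) * Real.exp x = 1 := by
    rw [← Real.exp_add]; simp
  nlinarith

lemma aux_exp_le_quad (x : ℝ) : Real.exp x ≤ 1 + x + x ^ 2 * Real.exp |x| := by
  rcases le_or_gt x 0 with hx | hx
  · have habs : |x| = -x := abs_of_nonpos hx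
    have h1 : Real.exp x ≤ 1 + x + x ^ 2 := by
      have h2 := aux_one_sub_mul_exp_le x
      have h3 := Real.exp_pos x
      nlinarith [sq_nonneg x, mul_pos h3 h3]
    have h4 : (1 : ℝ) ≤ Real.exp |x| := Real.one_le_exp (abs_nonneg x)
    nlinarith [sq_nonneg x]
  · have habs : |x| = x := abs_of_pos hx
    rw [habs]
    have h2 := aux_one_sub_mul_exp_le x
    have h3 := Real.exp_pos x
    nlinarith

lemma aux_sq_le_exp (ε x : ℝ) (hε : 0 < ε) : x ^ 2 ≤ 4 / ε ^ 2 * Real.exp (ε * |x|) := by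
  have h1 := Real.add_one_le_exp (ε * |x| / 2)
  have h2 : Real.exp (ε * |x| / 2) ^ 2 = Real.exp (ε * |x|) := by
    rw [sq, ← Real.exp_add]; ring_nf
  have h3 : 0 ≤ ε * |x| / 2 := by positivity
  have h4 : (ε * |x| / 2) ^ 2 ≤ Real.exp (ε * |x|) := by
    nlinarith [Real.exp_pos (ε * |x| / 2)]
  have h5 : ε ^ 2 * x ^ 2 / 4 ≤ Real.exp (ε * |x|) := by
    have : (ε * |x|) ^ 2 = ε ^ 2 * x ^ 2 := by
      rw [mul_pow, sq_abs]
    nlinarith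
  rw [div_mul_eq_mul_div, le_div_iff₀ (by positivity)]
  nlinarith


variable {Ω : Type} [MeasurableSpace Ω]

lemma aux_integrable {P : Measure Ω} [IsFiniteMeasure P] {f : Ω → ℝ} {C : ℝ}
    (hf : Measurable f) (hb : ∀ ω, |f ω| ≤ C) : Integrable f P :=
  (integrable_const C).mono' hf.aestronglyMeasurable (ae_of_all _ (by simpa using hb))

lemma aux_sum_exp (P : Measure Ω) [IsFiniteMeasure P] (S : Finset ℝ) (Y : Ω → ℝ)
    (hY : Measurable Y) (hmem : ∀ ω, Y ω ∈ S) (G : ℝ → ℝ) :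
    ∫ ω, G (Y ω) ∂P = ∑ s ∈ S, G s * (P {ω | Y ω = s}).toReal := by
  have hpt : ∀ ω, G (Y ω) = ∑ s ∈ S, ({ω | Y ω = s}).indicator (fun _ => G s) ω := by
    intro ω
    rw [Finset.sum_eq_single (Y ω)]
    · simp [Set.indicator, Set.mem_setOf_eq]
    · intro s _ hne
      apply Set.indicator_of_notMem
      simp only [Set.mem_setOf_eq]
      exact fun h => hne (h ▸ rfl)
    · intro h; exact absurd (hmem ω) h
  rw [integral_congr_ae (ae_of_all _ hpt), integral_finset_sum]
  · apply Finset.sum_congr rfl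
    intro s _
    have hms : MeasurableSet {ω | Y ω = s} := hY (measurableSet_singleton s)
    rw [integral_indicator_const (G s) hms]
    rw [smul_eq_mul, mul_comm]
    rfl
  · intro s _
    exact (integrable_const (G s)).indicator (hY (measurableSet_singleton s))

lemma aux_cond_integral (P : Measure Ω) [IsFiniteMeasure P] {A : Set Ω} (hA : MeasurableSet A)
    (hne : P A ≠ 0) (f : Ω → ℝ) :
    ∫ ω, A.indicator f ω ∂P = (P A).toReal * ∫ ω, f ω ∂(P[|A]) := by
  have h1 : (P[|A]) = (P A)⁻¹ • P.restrict A := rfl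
  rw [integral_indicator hA, h1, integral_smul_measure, smul_eq_mul, ← mul_assoc]
  have h2 : (P A).toReal ≠ 0 :=
    ENNReal.toReal_ne_zero.mpr ⟨hne, measure_ne_top P A⟩
  rw [ENNReal.toReal_inv, mul_inv_cancel₀ h2, one_mul]

lemma aux_ae_cond_mem (P : Measure Ω) {A : Set Ω} (hA : MeasurableSet A) :
    ∀ᵐ ω ∂(P[|A]), ω ∈ A := by
  rw [ae_iff]
  have : {ω | ¬ ω ∈ A} = Aᶜ := rfl
  rw [this, cond_apply hA]
  simp


/-- Extend a finite history (with values in `S`) to a function `ℕ → ℝ`. -/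
def extFun (t : ℕ) (S : Finset ℝ) (g : Fin (t + 1) → {x // x ∈ S}) : ℕ → ℝ :=
  fun u => if h : u < t + 1 then (g ⟨u, h⟩ : ℝ) else 0

variable {Ω : Type} [MeasurableSpace Ω]

lemma aux_hist_meas (X : ℕ → Ω → ℝ) (hX : ∀ t, Measurable (X t)) (t : ℕ) (g : ℕ → ℝ) :
    MeasurableSet {ω | ∀ u ≤ t, X u ω = g u} := by
  have : {ω | ∀ u ≤ t, X u ω = g u} = ⋂ u, ⋂ (_ : u ≤ t), (X u) ⁻¹' {g u} := by
    ext ω; simp [Set.mem_iInter]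
  rw [this]
  exact MeasurableSet.iInter fun u => MeasurableSet.iInter fun _ =>
    (hX u) (measurableSet_singleton _)

lemma aux_hist_unique (X : ℕ → Ω → ℝ) (S : Finset ℝ) (hmem : ∀ t ω, X t ω ∈ S) (t : ℕ)
    (ω : Ω) (g : Fin (t + 1) → {x // x ∈ S})
    (hω : ω ∈ {ω | ∀ u ≤ t, X u ω = extFun t S g u}) :
    g = fun u : Fin (t + 1) => (⟨X u ω, hmem u ω⟩ : {x // x ∈ S}) := by
  funext u
  have h1 := hω u (Nat.lt_succ_iff.mp u.isLt)
  apply Subtype.ext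
  simp only [extFun] at h1
  rw [dif_pos u.isLt] at h1
  simp only [Fin.eta] at h1
  exact h1.symm

lemma aux_hist_mem (X : ℕ → Ω → ℝ) (S : Finset ℝ) (hmem : ∀ t ω, X t ω ∈ S) (t : ℕ) (ω : Ω) :
    ω ∈ {ω | ∀ u ≤ t, X u ω =
      extFun t S (fun u : Fin (t + 1) => (⟨X u ω, hmem u ω⟩ : {x // x ∈ S})) u} := by
  intro u hu
  simp only [extFun]
  rw [dif_pos (Nat.lt_succ_of_le hu)]

/-- pointwise partition of unity over histories -/
lemma aux_hist_pt (X : ℕ → Ω → ℝ) (S : Finset ℝ) (hmem : ∀ t ω, X t ω ∈ S) (t : ℕ)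
    (F : Ω → ℝ) (ω : Ω) :
    F ω = ∑ g : Fin (t + 1) → {x // x ∈ S},
      ({ω | ∀ u ≤ t, X u ω = extFun t S g u}).indicator F ω := by
  rw [Fintype.sum_eq_single (fun u : Fin (t + 1) => (⟨X u ω, hmem u ω⟩ : {x // x ∈ S}))]
  · exact (Set.indicator_of_mem (aux_hist_mem X S hmem t ω) F).symm
  · intro g hg
    apply Set.indicator_of_notMem
    intro hω
    exact hg (aux_hist_unique X S hmem t ω g hω)

lemma aux_hist_integral (P : Measure Ω) [IsFiniteMeasure P] (X : ℕ → Ω → ℝ)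
    (hX : ∀ t, Measurable (X t)) (S : Finset ℝ) (hmem : ∀ t ω, X t ω ∈ S) (t : ℕ)
    (F : Ω → ℝ) (hF : Integrable F P) :
    ∫ ω, F ω ∂P = ∑ g : Fin (t + 1) → {x // x ∈ S},
      ∫ ω, ({ω | ∀ u ≤ t, X u ω = extFun t S g u}).indicator F ω ∂P := by
  rw [← integral_finset_sum _ (fun g _ => hF.indicator (aux_hist_meas X hX t _))]
  exact integral_congr_ae (ae_of_all _ (aux_hist_pt X S hmem t F))

lemma aux_hist_measure (P : Measure Ω) (X : ℕ → Ω → ℝ)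
    (hX : ∀ t, Measurable (X t)) (S : Finset ℝ) (hmem : ∀ t ω, X t ω ∈ S) (t : ℕ)
    (C : Set Ω) (hC : MeasurableSet C) :
    P C = ∑ g : Fin (t + 1) → {x // x ∈ S},
      P ({ω | ∀ u ≤ t, X u ω = extFun t S g u} ∩ C) := by
  have hun : C = ⋃ g ∈ (Finset.univ : Finset (Fin (t + 1) → {x // x ∈ S})),
      ({ω | ∀ u ≤ t, X u ω = extFun t S g u} ∩ C) := by
    ext ω
    constructor
    · intro hω
      refine Set.mem_biUnion (Finset.mem_univ
        (fun u : Fin (t + 1) => (⟨X u ω, hmem u ω⟩ : {x // x ∈ S}))) ?_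
      exact ⟨aux_hist_mem X S hmem t ω, hω⟩
    · intro hω
      rw [Set.mem_iUnion₂] at hω
      obtain ⟨g, -, -, h⟩ := hω
      exact h
  conv_lhs => rw [hun]
  rw [measure_biUnion_finset]
  · intro g₁ _ g₂ _ hne
    apply Set.disjoint_left.mpr
    rintro ω ⟨h1, -⟩ ⟨h2, -⟩
    exact hne ((aux_hist_unique X S hmem t ω g₁ h1).trans
      (aux_hist_unique X S hmem t ω g₂ h2).symm)
  · exact fun g _ => (aux_hist_meas X hX t _).inter hC




lemma aux_law_eq (μ : Measure Ω) [IsProbabilityMeasure μ] (S : Finset ℝ) (X : ℕ → Ω → ℝ)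
    (hmem : ∀ t ω, X t ω ∈ S) (hXm : ∀ t, Measurable (X t))
    (p : ℝ → ℝ → ℝ≥0∞)
    (hp : ∀ (t : ℕ) (h : ℕ → ℝ) (s' : ℝ), μ {ω | ∀ u ≤ t, X u ω = h u} ≠ 0 →
      (μ[|{ω | ∀ u ≤ t, X u ω = h u}]) {ω | X (t + 1) ω = s'} = p (h t) s')
    (t : ℕ) (s s' : ℝ) (hs : μ {ω | X t ω = s} ≠ 0) :
    (μ[|{ω | X t ω = s}]) {ω | X (t + 1) ω = s'} = p s s' := by
  have hms : MeasurableSet {ω | X t ω = s} := hXm t (measurableSet_singleton s)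
  have hms' : MeasurableSet {ω | X (t + 1) ω = s'} := hXm (t + 1) (measurableSet_singleton s')
  rw [cond_apply hms]
  have key : μ ({ω | X t ω = s} ∩ {ω | X (t + 1) ω = s'}) = μ {ω | X t ω = s} * p s s' := by
    rw [aux_hist_measure μ X hXm S hmem t _ (hms.inter hms'),
        aux_hist_measure μ X hXm S hmem t _ hms, Finset.sum_mul]
    apply Finset.sum_congr rfl
    intro g _
    set E := {ω | ∀ u ≤ t, X u ω = extFun t S g u} with hE
    by_cases hgt : extFun t S g t = s
    · have hsub : E ⊆ {ω | X t ω = s} := fun ω hω => (hω t le_rfl).trans hgt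
      have h1 : E ∩ {ω | X t ω = s} = E := Set.inter_eq_left.mpr hsub
      have h2 : E ∩ ({ω | X t ω = s} ∩ {ω | X (t + 1) ω = s'})
          = E ∩ {ω | X (t + 1) ω = s'} := by
        rw [← Set.inter_assoc, Set.inter_eq_left.mpr hsub]
      rw [h1, h2]
      by_cases hEz : μ E = 0
      · rw [hEz, zero_mul]
        exact le_antisymm (le_trans (measure_mono Set.inter_subset_left) hEz.le) zero_le
      · have := hp t (extFun t S g) s' hEz
        rw [hgt, cond_apply (aux_hist_meas X hXm t _)] at this
        calc μ (E ∩ {ω | X (t + 1) ω = s'})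
            = μ E * ((μ E)⁻¹ * μ (E ∩ {ω | X (t + 1) ω = s'})) := by
              rw [← mul_assoc, ENNReal.mul_inv_cancel hEz (measure_ne_top μ E), one_mul]
          _ = μ E * p s s' := by rw [this]
    · have hdisj : E ∩ {ω | X t ω = s} = ∅ := by
        ext ω
        simp only [Set.mem_inter_iff, Set.mem_setOf_eq, Set.mem_empty_iff_false, iff_false]
        rintro ⟨h1, h2⟩
        exact hgt ((h1 t le_rfl).symm.trans h2)
      have hdisj2 : E ∩ ({ω | X t ω = s} ∩ {ω | X (t + 1) ω = s'}) = ∅ := by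
        rw [← Set.inter_assoc, hdisj, Set.empty_inter]
      rw [hdisj, hdisj2, measure_empty, zero_mul]
  rw [key, ← mul_assoc, ENNReal.inv_mul_cancel hs (measure_ne_top μ _), one_mul]



lemma aux_mgf_core (P : Measure Ω) [IsProbabilityMeasure P] (S : Finset ℝ) (Y Z : Ω → ℝ)
    (hY : Measurable Y) (hZ : Measurable Z) (hYm : ∀ ω, Y ω ∈ S) (hZm : ∀ ω, Z ω ∈ S)
    (s δ ξ β R lam : ℝ) (hδ : 0 < δ) (hξ : 0 < ξ) (hβ : 0 < β) (hβ1 : β ≤ 1) (hR : 0 ≤ R)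
    (hlam : 0 < lam)
    (hlam2 : lam ≤ Real.log (1 + ξ) / 4)
    (hlam3 : lam * (4 * (Real.exp (Real.log (1 + ξ) / 2) /
        (1 - Real.exp (Real.log (1 + ξ) / 2) / (1 + ξ))) / (Real.log (1 + ξ) / 4) ^ 2) * R
      ≤ δ * β)
    (hYs : ∀ᵐ ω ∂P, Y ω = s)
    (hdrift : δ ≤ ∫ ω, (Y ω - Z ω) ∂P)
    (hstep : ∀ j : ℕ, P {ω | (j : ℝ) ≤ |Y ω - Z ω|} ≤ ENNReal.ofReal (R * ((1 + ξ)⁻¹) ^ j)) :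
    ∫ ω, Real.exp (lam * Z ω) ∂P ≤ Real.exp (lam * (s - δ * (1 - β))) := by
  have hlog : 0 < Real.log (1 + ξ) := Real.log_pos (by linarith)
  set m : ℝ := Real.log (1 + ξ) / 2 with hm_def
  set ε : ℝ := Real.log (1 + ξ) / 4 with hε_def
  have hm : 0 < m := by rw [hm_def]; positivity
  have hε : 0 < ε := by rw [hε_def]; positivity
  have hεm : ε + lam ≤ m := by
    have h2m : m = 2 * ε := by rw [hm_def, hε_def]; ring
    linarith [hlam2]
  set em : ℝ := Real.exp m with hem_def
  have hem0 : 0 < em := Real.exp_pos m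
  set q : ℝ := em / (1 + ξ) with hq_def
  have hq0 : 0 ≤ q := by rw [hq_def]; positivity
  have hq1 : q < 1 := by
    rw [hq_def, div_lt_one (by linarith)]
    calc em = Real.exp m := hem_def
      _ < Real.exp (Real.log (1 + ξ)) := by
          apply Real.exp_lt_exp.mpr; rw [hm_def]; linarith
      _ = 1 + ξ := Real.exp_log (by linarith)
  set C₀ : ℝ := em / (1 - q) with hC₀_def
  have hC₀ : 0 < C₀ := by rw [hC₀_def]; exact div_pos hem0 (by linarith)
  -- nonemptiness and bound on states
  have hΩ : Nonempty Ω := by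
    by_contra h
    rw [not_nonempty_iff] at h
    have h2 := measure_univ (μ := P)
    rw [Set.univ_eq_empty_iff.mpr h, measure_empty] at h2
    exact zero_ne_one h2
  obtain ⟨ω₀⟩ := hΩ
  have hSne : S.Nonempty := ⟨Y ω₀, hYm ω₀⟩
  set M : ℝ := S.sup' hSne (fun x => |x|) with hM_def
  have hM : ∀ x ∈ S, |x| ≤ M := fun x hx => Finset.le_sup' _ hx
  have hM0 : 0 ≤ M := le_trans (abs_nonneg _) (hM _ (hYm ω₀))
  have hVb : ∀ ω, |Y ω - Z ω| ≤ 2 * M := by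
    intro ω
    have h1 := hM _ (hYm ω)
    have h2 := hM _ (hZm ω)
    calc |Y ω - Z ω| ≤ |Y ω| + |Z ω| := abs_sub _ _
      _ ≤ 2 * M := by linarith
  -- measurability and integrability
  have hMeasV : Measurable (fun ω => Y ω - Z ω) := hY.sub hZ
  have hIntV : Integrable (fun ω => Y ω - Z ω) P := aux_integrable hMeasV hVb
  have hIntZ : Integrable (fun ω => Real.exp (lam * Z ω)) P := by
    refine aux_integrable ((hZ.const_mul lam).exp) (C := Real.exp (lam * M)) fun ω => ?_
    rw [Real.abs_exp]
    exact Real.exp_le_exp.mpr (mul_le_mul_of_nonneg_left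
      (le_trans (le_abs_self _) (hM _ (hZm ω))) hlam.le)
  have hIntQ : Integrable (fun ω => (Y ω - Z ω) ^ 2 * Real.exp (lam * |Y ω - Z ω|)) P := by
    refine aux_integrable ((hMeasV.pow_const 2).mul ((hMeasV.abs.const_mul lam).exp))
      (C := (2 * M) ^ 2 * Real.exp (lam * (2 * M))) fun ω => ?_
    rw [abs_of_nonneg (by positivity)]
    have h1 : (Y ω - Z ω) ^ 2 ≤ (2 * M) ^ 2 := by
      have := abs_le.mp (hVb ω); nlinarith
    have h2 : Real.exp (lam * |Y ω - Z ω|) ≤ Real.exp (lam * (2 * M)) :=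
      Real.exp_le_exp.mpr (mul_le_mul_of_nonneg_left (hVb ω) hlam.le)
    exact mul_le_mul h1 h2 (Real.exp_pos _).le (by positivity)
  have hIntE : Integrable (fun ω => Real.exp (m * |Y ω - Z ω|)) P := by
    refine aux_integrable ((hMeasV.abs.const_mul m).exp) (C := Real.exp (m * (2 * M)))
      fun ω => ?_
    rw [Real.abs_exp]
    exact Real.exp_le_exp.mpr (mul_le_mul_of_nonneg_left (hVb ω) hm.le)
  have hIntNeg : Integrable (fun ω => Real.exp (-(lam * (Y ω - Z ω)))) P := by
    refine aux_integrable (((hMeasV.const_mul lam).neg).exp) (C := Real.exp (lam * (2 * M)))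
      fun ω => ?_
    rw [Real.abs_exp]
    apply Real.exp_le_exp.mpr
    have h2 := neg_le_abs (lam * (Y ω - Z ω))
    rw [abs_mul, abs_of_pos hlam] at h2
    have h3 := hVb ω
    nlinarith
  -- Step A: factor out exp(lam*s)
  have stepA : ∫ ω, Real.exp (lam * Z ω) ∂P
      = Real.exp (lam * s) * ∫ ω, Real.exp (-(lam * (Y ω - Z ω))) ∂P := by
    rw [← integral_const_mul]
    apply integral_congr_ae
    filter_upwards [hYs] with ω hω
    rw [← Real.exp_add]
    congr 1
    rw [hω]; ring
  -- Step B6 : exponential moment of |V|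
  set J : ℕ := ⌈2 * M⌉₊ with hJ_def
  have hmeasSet : ∀ j : ℕ, MeasurableSet {ω | (j : ℝ) ≤ |Y ω - Z ω|} :=
    fun j => measurableSet_le measurable_const hMeasV.abs
  have hint6 : ∀ j : ℕ,
      Integrable (({ω | (j : ℝ) ≤ |Y ω - Z ω|}).indicator
        (fun _ => Real.exp (m * ((j : ℝ) + 1)))) P :=
    fun j => (integrable_const _).indicator (hmeasSet j)
  have hpt6 : ∀ ω, Real.exp (m * |Y ω - Z ω|) ≤ ∑ j ∈ Finset.range (J + 1),
      ({ω | (j : ℝ) ≤ |Y ω - Z ω|}).indicator (fun _ => Real.exp (m * ((j : ℝ) + 1))) ω := by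
    intro ω
    have hx0 : (0 : ℝ) ≤ |Y ω - Z ω| := abs_nonneg _
    have hk1 : (⌊|Y ω - Z ω|⌋₊ : ℝ) ≤ |Y ω - Z ω| := Nat.floor_le hx0
    have hk2 : |Y ω - Z ω| < ⌊|Y ω - Z ω|⌋₊ + 1 := Nat.lt_floor_add_one _
    have hkJ : ⌊|Y ω - Z ω|⌋₊ ∈ Finset.range (J + 1) := by
      rw [Finset.mem_range, Nat.lt_succ_iff]
      have hc : ((⌊|Y ω - Z ω|⌋₊ : ℕ) : ℝ) ≤ (J : ℝ) :=
        le_trans hk1 (le_trans (hVb ω) (Nat.le_ceil _))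
      exact_mod_cast hc
    have hterm : Real.exp (m * |Y ω - Z ω|)
        ≤ ({ω' | ((⌊|Y ω - Z ω|⌋₊ : ℕ) : ℝ) ≤ |Y ω' - Z ω'|}).indicator
          (fun _ => Real.exp (m * (((⌊|Y ω - Z ω|⌋₊ : ℕ) : ℝ) + 1))) ω := by
      have hmem1 : ω ∈ {ω' | ((⌊|Y ω - Z ω|⌋₊ : ℕ) : ℝ) ≤ |Y ω' - Z ω'|} := hk1
      rw [Set.indicator_of_mem hmem1]
      exact Real.exp_le_exp.mpr (mul_le_mul_of_nonneg_left hk2.le hm.le)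
    refine le_trans hterm (Finset.single_le_sum
      (f := fun j : ℕ => ({ω' | (j : ℝ) ≤ |Y ω' - Z ω'|}).indicator
        (fun _ => Real.exp (m * ((j : ℝ) + 1))) ω) (fun j _ => ?_) hkJ)
    exact Set.indicator_nonneg (fun _ _ => (Real.exp_pos _).le) ω
  have hB6 : ∫ ω, Real.exp (m * |Y ω - Z ω|) ∂P ≤ C₀ * R := by
    calc ∫ ω, Real.exp (m * |Y ω - Z ω|) ∂P
        ≤ ∫ ω, (∑ j ∈ Finset.range (J + 1),
            ({ω | (j : ℝ) ≤ |Y ω - Z ω|}).indicator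
              (fun _ => Real.exp (m * ((j : ℝ) + 1))) ω) ∂P :=
          integral_mono hIntE (integrable_finset_sum _ (fun j _ => hint6 j)) hpt6
      _ = ∑ j ∈ Finset.range (J + 1),
            (P {ω | (j : ℝ) ≤ |Y ω - Z ω|}).toReal * Real.exp (m * ((j : ℝ) + 1)) := by
          rw [integral_finset_sum _ (fun j _ => hint6 j)]
          exact Finset.sum_congr rfl fun j _ => by
            rw [integral_indicator_const _ (hmeasSet j), smul_eq_mul]; rfl
      _ ≤ ∑ j ∈ Finset.range (J + 1),
            (R * ((1 + ξ)⁻¹) ^ j) * Real.exp (m * ((j : ℝ) + 1)) := by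
          apply Finset.sum_le_sum
          intro j _
          have h1 := ENNReal.toReal_le_of_le_ofReal (by positivity) (hstep j)
          exact mul_le_mul_of_nonneg_right h1 (Real.exp_pos _).le
      _ = ∑ j ∈ Finset.range (J + 1), (R * em) * q ^ j := by
          apply Finset.sum_congr rfl
          intro j _
          rw [show m * ((j : ℝ) + 1) = (j : ℝ) * m + m by ring, Real.exp_add,
            Real.exp_nat_mul, hq_def, div_eq_mul_inv, mul_pow]
          ring
      _ = (R * em) * ∑ j ∈ Finset.range (J + 1), q ^ j := by rw [Finset.mul_sum]
      _ ≤ (R * em) * (1 - q)⁻¹ := by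
          apply mul_le_mul_of_nonneg_left _ (by positivity)
          refine le_trans (Summable.sum_le_tsum _ (fun i _ => by positivity)
            (summable_geometric_of_lt_one hq0 hq1)) ?_
          rw [tsum_geometric_of_lt_one hq0 hq1]
      _ = C₀ * R := by rw [hC₀_def, div_eq_mul_inv]; ring
  -- Step B5 : second-moment bound
  have hB5 : ∫ ω, (Y ω - Z ω) ^ 2 * Real.exp (lam * |Y ω - Z ω|) ∂P
      ≤ (4 / ε ^ 2) * (C₀ * R) := by
    have hpt5 : ∀ ω, (Y ω - Z ω) ^ 2 * Real.exp (lam * |Y ω - Z ω|)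
        ≤ (4 / ε ^ 2) * Real.exp (m * |Y ω - Z ω|) := by
      intro ω
      have h1 := aux_sq_le_exp ε (Y ω - Z ω) hε
      have h2 : Real.exp (ε * |Y ω - Z ω|) * Real.exp (lam * |Y ω - Z ω|)
          = Real.exp ((ε + lam) * |Y ω - Z ω|) := by
        rw [← Real.exp_add]; ring_nf
      have h3 : Real.exp ((ε + lam) * |Y ω - Z ω|) ≤ Real.exp (m * |Y ω - Z ω|) :=
        Real.exp_le_exp.mpr (mul_le_mul_of_nonneg_right hεm (abs_nonneg _))
      calc (Y ω - Z ω) ^ 2 * Real.exp (lam * |Y ω - Z ω|)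
          ≤ (4 / ε ^ 2 * Real.exp (ε * |Y ω - Z ω|)) * Real.exp (lam * |Y ω - Z ω|) :=
            mul_le_mul_of_nonneg_right h1 (Real.exp_pos _).le
        _ = 4 / ε ^ 2 * Real.exp ((ε + lam) * |Y ω - Z ω|) := by rw [mul_assoc, h2]
        _ ≤ 4 / ε ^ 2 * Real.exp (m * |Y ω - Z ω|) :=
            mul_le_mul_of_nonneg_left h3 (by positivity)
    calc ∫ ω, (Y ω - Z ω) ^ 2 * Real.exp (lam * |Y ω - Z ω|) ∂P
        ≤ ∫ ω, (4 / ε ^ 2) * Real.exp (m * |Y ω - Z ω|) ∂P :=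
          integral_mono hIntQ (hIntE.const_mul _) hpt5
      _ = (4 / ε ^ 2) * ∫ ω, Real.exp (m * |Y ω - Z ω|) ∂P := integral_const_mul _ _
      _ ≤ (4 / ε ^ 2) * (C₀ * R) := mul_le_mul_of_nonneg_left hB6 (by positivity)
  -- Step B : assemble
  have hBpt : ∀ ω, Real.exp (-(lam * (Y ω - Z ω)))
      ≤ 1 - lam * (Y ω - Z ω) + lam ^ 2 * ((Y ω - Z ω) ^ 2 * Real.exp (lam * |Y ω - Z ω|)) := by
    intro ω
    have h := aux_exp_le_quad (-(lam * (Y ω - Z ω)))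
    have habs : |(-(lam * (Y ω - Z ω)))| = lam * |Y ω - Z ω| := by
      rw [abs_neg, abs_mul, abs_of_pos hlam]
    rw [habs] at h
    calc Real.exp (-(lam * (Y ω - Z ω)))
        ≤ 1 + -(lam * (Y ω - Z ω)) + (-(lam * (Y ω - Z ω))) ^ 2
            * Real.exp (lam * |Y ω - Z ω|) := h
      _ = 1 - lam * (Y ω - Z ω) + lam ^ 2 * ((Y ω - Z ω) ^ 2
            * Real.exp (lam * |Y ω - Z ω|)) := by ring
  have hIntg : Integrable (fun ω => 1 - lam * (Y ω - Z ω)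
      + lam ^ 2 * ((Y ω - Z ω) ^ 2 * Real.exp (lam * |Y ω - Z ω|))) P :=
    ((integrable_const 1).sub (hIntV.const_mul lam)).add (hIntQ.const_mul _)
  have hB : ∫ ω, Real.exp (-(lam * (Y ω - Z ω))) ∂P
      ≤ 1 - lam * δ + lam ^ 2 * ((4 / ε ^ 2) * (C₀ * R)) := by
    have h1 := integral_mono hIntNeg hIntg hBpt
    have h2 : ∫ ω, (1 - lam * (Y ω - Z ω)
        + lam ^ 2 * ((Y ω - Z ω) ^ 2 * Real.exp (lam * |Y ω - Z ω|))) ∂P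
        = 1 - lam * ∫ ω, (Y ω - Z ω) ∂P
          + lam ^ 2 * ∫ ω, (Y ω - Z ω) ^ 2 * Real.exp (lam * |Y ω - Z ω|) ∂P := by
      have e1 : ∫ ω, (1 - lam * (Y ω - Z ω)
          + lam ^ 2 * ((Y ω - Z ω) ^ 2 * Real.exp (lam * |Y ω - Z ω|))) ∂P
          = ∫ ω, (1 - lam * (Y ω - Z ω)) ∂P
            + ∫ ω, lam ^ 2 * ((Y ω - Z ω) ^ 2 * Real.exp (lam * |Y ω - Z ω|)) ∂P :=
        integral_add ((integrable_const 1).sub (hIntV.const_mul lam)) (hIntQ.const_mul _)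
      have e2 : ∫ ω, (1 - lam * (Y ω - Z ω)) ∂P
          = ∫ ω, (1 : ℝ) ∂P - ∫ ω, lam * (Y ω - Z ω) ∂P :=
        integral_sub (integrable_const 1) (hIntV.const_mul lam)
      rw [e1, e2, integral_const_mul, integral_const_mul, integral_const]
      simp
    rw [h2] at h1
    have h3 : lam * δ ≤ lam * ∫ ω, (Y ω - Z ω) ∂P := mul_le_mul_of_nonneg_left hdrift hlam.le
    have h4 : lam ^ 2 * ∫ ω, (Y ω - Z ω) ^ 2 * Real.exp (lam * |Y ω - Z ω|) ∂P
        ≤ lam ^ 2 * ((4 / ε ^ 2) * (C₀ * R)) := mul_le_mul_of_nonneg_left hB5 (by positivity)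
    linarith
  -- Step C
  have hC : 1 - lam * δ + lam ^ 2 * ((4 / ε ^ 2) * (C₀ * R)) ≤ 1 - lam * (δ * (1 - β)) := by
    have h5 : lam ^ 2 * ((4 / ε ^ 2) * (C₀ * R)) = lam * (lam * (4 * C₀ / ε ^ 2) * R) := by
      ring
    have h6 : lam * (lam * (4 * C₀ / ε ^ 2) * R) ≤ lam * (δ * β) :=
      mul_le_mul_of_nonneg_left hlam3 hlam.le
    nlinarith [h5, h6]
  -- Step D
  have hD : 1 - lam * (δ * (1 - β)) ≤ Real.exp (-(lam * (δ * (1 - β)))) := by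
    have := Real.add_one_le_exp (-(lam * (δ * (1 - β))))
    linarith
  rw [stepA]
  calc Real.exp (lam * s) * ∫ ω, Real.exp (-(lam * (Y ω - Z ω))) ∂P
      ≤ Real.exp (lam * s) * Real.exp (-(lam * (δ * (1 - β)))) :=
        mul_le_mul_of_nonneg_left (le_trans hB (le_trans hC hD)) (Real.exp_pos _).le
    _ = Real.exp (lam * (s - δ * (1 - β))) := by rw [← Real.exp_add]; ring_nf

/-- **Additive drift, upper tail bound.**  For all constants `a, b, δ, ξ, η > 0`
with `a < b` and every `r = r(n) = o(n/log n)` there exist `ρ > 0` and `n₀`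
such that for all `n ≥ n₀` the following holds.  Let `X` be a time-homogeneous
Markov chain on a finite state space `S ⊆ ℝ` satisfying the drift condition (1)
and the step-size condition (2).  Then with `T_a = min{t : X t ≤ a·n}`,
`Pr[T_a ≥ (1+η)(b−a)n/δ | X 0 ≤ b·n] ≤ e^{−ρ·n/r(n)}`.  The event
`{T_a ≥ τ}` is expressed as `{∀ t < τ, X t > a·n}`. -/
theorem stmt1
    (a b δ ξ η : ℝ) (ha : 0 < a) (hb : 0 < b) (hδ : 0 < δ) (hξ : 0 < ξ) (hη : 0 < η)
    (hab : a < b)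
    (r : ℕ → ℝ) (hrpos : ∀ n, 0 < r n)
    (hr : r =o[atTop] fun n : ℕ => (n : ℝ) / Real.log n) :
    ∃ ρ : ℝ, 0 < ρ ∧ ∃ n₀ : ℕ, ∀ n : ℕ, n₀ ≤ n →
      ∀ (Ω : Type) (_ : MeasurableSpace Ω) (μ : Measure Ω), IsProbabilityMeasure μ →
      ∀ (S : Finset ℝ) (X : ℕ → Ω → ℝ),
        (∀ t ω, X t ω ∈ S) →
        (∀ t, Measurable (X t)) →
        -- time-homogeneous Markov property
        (∃ p : ℝ → ℝ → ℝ≥0∞, ∀ (t : ℕ) (h : ℕ → ℝ) (s' : ℝ),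
          μ {ω | ∀ u ≤ t, X u ω = h u} ≠ 0 →
          (μ[|{ω | ∀ u ≤ t, X u ω = h u}]) {ω | X (t + 1) ω = s'} = p (h t) s') →
        -- (1) drift condition
        (∀ (t : ℕ) (s : ℝ), s ∈ S → a * n < s → μ {ω | X t ω = s} ≠ 0 →
          δ ≤ ∫ ω, (X t ω - X (t + 1) ω) ∂(μ[|{ω | X t ω = s}])) →
        -- (2) step-size condition
        (∀ (t : ℕ) (s : ℝ) (j : ℕ), s ∈ S → μ {ω | X t ω = s} ≠ 0 →
          (μ[|{ω | X t ω = s}]) {ω | (j : ℝ) ≤ |X t ω - X (t + 1) ω|}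
            ≤ ENNReal.ofReal (r n * ((1 + ξ)⁻¹) ^ j)) →
        μ {ω | X 0 ω ≤ b * n} ≠ 0 →
        (μ[|{ω | X 0 ω ≤ b * n}])
            {ω | ∀ t : ℕ, (t : ℝ) < (1 + η) * (b - a) * n / δ → a * n < X t ω}
          ≤ ENNReal.ofReal (Real.exp (-(ρ * n / r n))) := by
  -- global constants
  have hlog : 0 < Real.log (1 + ξ) := Real.log_pos (by linarith)
  set ε : ℝ := Real.log (1 + ξ) / 4 with hε_def
  have hε : 0 < ε := by rw [hε_def]; positivity
  set em : ℝ := Real.exp (Real.log (1 + ξ) / 2) with hem_def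
  have hem0 : 0 < em := Real.exp_pos _
  set q : ℝ := em / (1 + ξ) with hq_def
  have hq1 : q < 1 := by
    rw [hq_def, div_lt_one (by linarith)]
    calc em = Real.exp (Real.log (1 + ξ) / 2) := hem_def
      _ < Real.exp (Real.log (1 + ξ)) := by apply Real.exp_lt_exp.mpr; linarith
      _ = 1 + ξ := Real.exp_log (by linarith)
  set C₀ : ℝ := em / (1 - q) with hC₀_def
  have hC₀ : 0 < C₀ := by rw [hC₀_def]; exact div_pos hem0 (by linarith)
  set β : ℝ := η / (2 * (1 + η)) with hβ_def
  have hβ : 0 < β := by rw [hβ_def]; positivity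
  have hβ1 : β ≤ 1 := by
    rw [hβ_def, div_le_one (by positivity)]; linarith
  have hβhalf : (1 - β) * (1 + η) = 1 + η / 2 := by
    rw [hβ_def]; field_simp; ring
  set θ : ℝ := min ε (δ * β * ε ^ 2 / (4 * C₀)) with hθ_def
  have hθ : 0 < θ := lt_min hε (by positivity)
  have hθε : θ ≤ ε := min_le_left _ _
  set ρ : ℝ := θ * (b - a) * η / 4 with hρ_def
  have hba : 0 < b - a := sub_pos.mpr hab
  have hρ : 0 < ρ := by rw [hρ_def]; positivity
  refine ⟨ρ, hρ, ?_⟩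
  have hcpos : (0 : ℝ) < ρ / (θ * δ) := by positivity
  obtain ⟨N₁, hN₁⟩ := Filter.eventually_atTop.mp (hr.def hcpos)
  refine ⟨max N₁ 3, ?_⟩
  intro n hn Ω mΩ μ hprob S X hmem hXm hMark hdrift hstep hB0
  haveI := hprob
  obtain ⟨p, hp⟩ := hMark
  -- basic numbers about n
  have h3n : 3 ≤ n := le_trans (le_max_right N₁ 3) hn
  have hNn : N₁ ≤ n := le_trans (le_max_left N₁ 3) hn
  have hn0 : (0 : ℝ) < n := by
    have : (3 : ℝ) ≤ n := by exact_mod_cast h3n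
    linarith
  have hlogn : 1 ≤ Real.log n := by
    rw [Real.le_log_iff_exp_le hn0]
    calc Real.exp 1 ≤ 2.7182818286 := Real.exp_one_lt_d9.le
      _ ≤ 3 := by norm_num
      _ ≤ n := by exact_mod_cast h3n
  have hrb := hN₁ n hNn
  rw [Real.norm_of_nonneg (hrpos n).le,
    Real.norm_of_nonneg (div_nonneg hn0.le (by linarith))] at hrb
  have hnr : θ * δ * r n ≤ ρ * n := by
    have hdivle : (n : ℝ) / Real.log n ≤ n := div_le_self hn0.le hlogn
    have hrn : r n ≤ ρ / (θ * δ) * n :=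
      le_trans hrb (mul_le_mul_of_nonneg_left hdivle hcpos.le)
    calc θ * δ * r n ≤ θ * δ * (ρ / (θ * δ) * n) :=
          mul_le_mul_of_nonneg_left hrn (by positivity)
      _ = ρ * n := by field_simp
  -- the chain is on a nonempty space
  set B : Set Ω := {ω | X 0 ω ≤ b * n} with hB_def
  have hBmeas : MeasurableSet B := measurableSet_le (hXm 0) measurable_const
  obtain ⟨ω₁, hω₁⟩ : B.Nonempty := nonempty_of_measure_ne_zero hB0
  have hSne : S.Nonempty := ⟨X 0 ω₁, hmem 0 ω₁⟩
  -- r n ≥ 1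
  have hr1 : 1 ≤ r n := by
    have hex : ∃ s ∈ S, μ {ω | X 0 ω = s} ≠ 0 := by
      by_contra hcon
      push_neg at hcon
      have hcov : (Set.univ : Set Ω) ⊆ ⋃ s ∈ S, {ω | X 0 ω = s} := by
        intro ω _
        exact Set.mem_biUnion (hmem 0 ω) rfl
      have h1 : (1 : ℝ≥0∞) ≤ 0 := by
        calc (1 : ℝ≥0∞) = μ Set.univ := (measure_univ).symm
          _ ≤ μ (⋃ s ∈ S, {ω | X 0 ω = s}) := measure_mono hcov
          _ ≤ ∑ s ∈ S, μ {ω | X 0 ω = s} := measure_biUnion_finset_le S _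
          _ = 0 := by
              apply Finset.sum_eq_zero
              intro s hs
              exact hcon s hs
      simp at h1
    obtain ⟨s₀, hs₀S, hs₀⟩ := hex
    haveI := cond_isProbabilityMeasure (μ := μ) hs₀
    have h2 := hstep 0 s₀ 0 hs₀S hs₀
    have h3 : {ω | ((0 : ℕ) : ℝ) ≤ |X 0 ω - X 1 ω|} = Set.univ := by
      ext ω; simp [abs_nonneg]
    rw [h3, pow_zero, mul_one, measure_univ] at h2
    exact ENNReal.one_le_ofReal.mp h2
  -- the tilt parameter
  set lam : ℝ := θ / r n with hlam_def
  have hlam : 0 < lam := by rw [hlam_def]; exact div_pos hθ (hrpos n)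
  have hlamθ : lam ≤ θ := by
    rw [hlam_def]; exact div_le_self hθ.le hr1
  have hlam2 : lam ≤ Real.log (1 + ξ) / 4 := by
    rw [← hε_def]; exact le_trans hlamθ hθε
  have hlam3 : lam * (4 * (Real.exp (Real.log (1 + ξ) / 2) /
      (1 - Real.exp (Real.log (1 + ξ) / 2) / (1 + ξ))) / (Real.log (1 + ξ) / 4) ^ 2) * r n
      ≤ δ * β := by
    rw [← hem_def, ← hq_def, ← hC₀_def, ← hε_def]
    have hrne : r n ≠ 0 := (hrpos n).ne'
    have e1 : lam * (4 * C₀ / ε ^ 2) * r n = θ * (4 * C₀ / ε ^ 2) := by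
      rw [hlam_def]; field_simp
    rw [e1]
    calc θ * (4 * C₀ / ε ^ 2) ≤ (δ * β * ε ^ 2 / (4 * C₀)) * (4 * C₀ / ε ^ 2) :=
          mul_le_mul_of_nonneg_right (min_le_right _ _) (by positivity)
      _ = δ * β := by field_simp
  -- the conditional measure
  set ν : Measure Ω := μ[|B] with hν_def
  haveI hνprob : IsProbabilityMeasure ν := cond_isProbabilityMeasure hB0
  have hνae : ∀ᵐ ω ∂ν, X 0 ω ≤ b * n := by
    have := aux_ae_cond_mem μ hBmeas
    rw [← hν_def] at this
    exact this.mono fun ω h => h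
  -- the events
  set A : ℕ → Set Ω := fun t => {ω | ∀ u ≤ t, a * (n : ℝ) < X u ω} with hA_def
  have hAmeas : ∀ t, MeasurableSet (A t) := by
    intro t
    have : A t = ⋂ u, ⋂ (_ : u ≤ t), {ω | a * (n : ℝ) < X u ω} := by
      ext ω; simp [hA_def, Set.mem_iInter]
    rw [this]
    exact MeasurableSet.iInter fun u => MeasurableSet.iInter fun _ =>
      measurableSet_lt measurable_const (hXm u)
  have hAsub : ∀ t, A (t + 1) ⊆ A t := fun t ω hω u hu => hω u (le_trans hu (Nat.le_succ t))
  -- bounds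
  set M : ℝ := S.sup' hSne (fun x => |x|) with hM_def
  have hM : ∀ x ∈ S, |x| ≤ M := fun x hx => Finset.le_sup' _ hx
  have hexpB : ∀ (t : ℕ) (ω : Ω), |Real.exp (lam * X t ω)| ≤ Real.exp (lam * M) := by
    intro t ω
    rw [Real.abs_exp]
    exact Real.exp_le_exp.mpr (mul_le_mul_of_nonneg_left
      (le_trans (le_abs_self _) (hM _ (hmem t ω))) hlam.le)
  have hIntExp : ∀ t, Integrable (fun ω => Real.exp (lam * X t ω)) ν :=
    fun t => aux_integrable ((hXm t).const_mul lam).exp (hexpB t)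
  have hIntf : ∀ t, Integrable ((A t).indicator fun ω => Real.exp (lam * X t ω)) ν :=
    fun t => (hIntExp t).indicator (hAmeas t)
  -- the key one-step estimate
  have key : ∀ t : ℕ,
      ∫ ω, (A (t + 1)).indicator (fun ω => Real.exp (lam * X (t + 1) ω)) ω ∂ν
      ≤ Real.exp (-(lam * (δ * (1 - β)))) *
        ∫ ω, (A t).indicator (fun ω => Real.exp (lam * X t ω)) ω ∂ν := by
    intro t
    have hIntg : Integrable ((A t).indicator fun ω => Real.exp (lam * X (t + 1) ω)) ν :=
      (hIntExp (t + 1)).indicator (hAmeas t)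
    have hmono1 : ∫ ω, (A (t + 1)).indicator (fun ω => Real.exp (lam * X (t + 1) ω)) ω ∂ν
        ≤ ∫ ω, (A t).indicator (fun ω => Real.exp (lam * X (t + 1) ω)) ω ∂ν := by
      apply integral_mono (hIntf (t + 1)) hIntg
      exact Set.indicator_le_indicator_of_subset (hAsub t) (fun ω => (Real.exp_pos _).le)
    have hsum1 := aux_hist_integral ν X hXm S hmem t
      ((A t).indicator fun ω => Real.exp (lam * X (t + 1) ω)) hIntg
    have hsum2 := aux_hist_integral ν X hXm S hmem t
      ((A t).indicator fun ω => Real.exp (lam * X t ω)) (hIntf t)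
    have hterm : ∀ g : Fin (t + 1) → {x // x ∈ S},
        ∫ ω, ({ω | ∀ u ≤ t, X u ω = extFun t S g u}).indicator
          ((A t).indicator fun ω => Real.exp (lam * X (t + 1) ω)) ω ∂ν
        ≤ Real.exp (-(lam * (δ * (1 - β)))) *
          ∫ ω, ({ω | ∀ u ≤ t, X u ω = extFun t S g u}).indicator
            ((A t).indicator fun ω => Real.exp (lam * X t ω)) ω ∂ν := by
      intro g
      have hEmeas : MeasurableSet {ω | ∀ u ≤ t, X u ω = extFun t S g u} :=
        aux_hist_meas X hXm t _
      by_cases hgood : ∀ u ≤ t, a * (n : ℝ) < extFun t S g u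
      · -- good history
        have hEA : {ω | ∀ u ≤ t, X u ω = extFun t S g u} ⊆ A t := by
          intro ω hω u hu
          rw [hω u hu]
          exact hgood u hu
        have hEind1 : ({ω | ∀ u ≤ t, X u ω = extFun t S g u}).indicator
            ((A t).indicator fun ω => Real.exp (lam * X (t + 1) ω))
            = ({ω | ∀ u ≤ t, X u ω = extFun t S g u}).indicator
              (fun ω => Real.exp (lam * X (t + 1) ω)) := by
          apply Set.indicator_congr
          intro ω hω
          rw [Set.indicator_of_mem (hEA hω)]
        have hEind2 : ({ω | ∀ u ≤ t, X u ω = extFun t S g u}).indicator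
            ((A t).indicator fun ω => Real.exp (lam * X t ω))
            = ({ω | ∀ u ≤ t, X u ω = extFun t S g u}).indicator
              (fun _ => Real.exp (lam * extFun t S g t)) := by
          apply Set.indicator_congr
          intro ω hω
          rw [Set.indicator_of_mem (hEA hω), hω t le_rfl]
        rw [hEind1, hEind2, integral_indicator_const _ hEmeas, smul_eq_mul]
        by_cases hE0 : ν {ω | ∀ u ≤ t, X u ω = extFun t S g u} = 0
        · rw [integral_indicator hEmeas, Measure.restrict_eq_zero.mpr hE0,
            integral_zero_measure, Measure.real, hE0]
          simp
        · -- main case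
          have hBE : B ∩ {ω | ∀ u ≤ t, X u ω = extFun t S g u}
              = {ω | ∀ u ≤ t, X u ω = extFun t S g u} := by
            have hμBE : μ (B ∩ {ω | ∀ u ≤ t, X u ω = extFun t S g u}) ≠ 0 := by
              intro hzero
              apply hE0
              rw [hν_def, cond_apply hBmeas, hzero, mul_zero]
            obtain ⟨ω₂, hω₂B, hω₂E⟩ := nonempty_of_measure_ne_zero hμBE
            apply Set.inter_eq_right.mpr
            intro ω hω
            show X 0 ω ≤ b * n
            have e0 : X 0 ω = X 0 ω₂ := by
              rw [hω 0 (Nat.zero_le t), hω₂E 0 (Nat.zero_le t)]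
            rw [e0]
            exact hω₂B
          have hμE0 : μ {ω | ∀ u ≤ t, X u ω = extFun t S g u} ≠ 0 := by
            intro hzero
            apply hE0
            rw [hν_def, cond_apply hBmeas, hBE, hzero, mul_zero]
          haveI := cond_isProbabilityMeasure (μ := μ) hμE0
          set s : ℝ := extFun t S g t with hs_def
          have hsS : s ∈ S := by
            rw [hs_def]
            simp only [extFun]
            rw [dif_pos (Nat.lt_succ_self t)]
            exact (g _).2
          have hsa : a * (n : ℝ) < s := hgood t le_rfl
          have hEsub : {ω | ∀ u ≤ t, X u ω = extFun t S g u} ⊆ {ω | X t ω = s} :=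
            fun ω hω => hω t le_rfl
          have hμXt : μ {ω | X t ω = s} ≠ 0 := by
            intro hzero
            exact hμE0 (le_antisymm (le_trans (measure_mono hEsub) hzero.le) zero_le)
          haveI := cond_isProbabilityMeasure (μ := μ) hμXt
          have hccond : ν[|{ω | ∀ u ≤ t, X u ω = extFun t S g u}]
              = μ[|{ω | ∀ u ≤ t, X u ω = extFun t S g u}] := by
            rw [hν_def, cond_cond_eq_cond_inter hBmeas hEmeas, hBE]
          have hXtmeas : MeasurableSet {ω | X t ω = s} := hXm t (measurableSet_singleton s)
          have haes : ∀ᵐ ω ∂(μ[|{ω | X t ω = s}]), X t ω = s :=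
            (aux_ae_cond_mem μ hXtmeas).mono fun ω h => h
          have hmgf := aux_mgf_core (μ[|{ω | X t ω = s}]) S (X t) (X (t + 1))
            (hXm t) (hXm (t + 1)) (hmem t) (hmem (t + 1)) s δ ξ β (r n) lam
            hδ hξ hβ hβ1 (hrpos n).le hlam hlam2 hlam3 haes
            (hdrift t s hsS hsa hμXt) (fun j => hstep t s j hsS hμXt)
          calc ∫ ω, ({ω | ∀ u ≤ t, X u ω = extFun t S g u}).indicator
                (fun ω => Real.exp (lam * X (t + 1) ω)) ω ∂ν
              = (ν {ω | ∀ u ≤ t, X u ω = extFun t S g u}).toReal *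
                ∫ ω, Real.exp (lam * X (t + 1) ω)
                  ∂(ν[|{ω | ∀ u ≤ t, X u ω = extFun t S g u}]) :=
                aux_cond_integral ν hEmeas hE0 _
            _ = (ν {ω | ∀ u ≤ t, X u ω = extFun t S g u}).toReal *
                ∫ ω, Real.exp (lam * X (t + 1) ω)
                  ∂(μ[|{ω | ∀ u ≤ t, X u ω = extFun t S g u}]) := by rw [hccond]
            _ = (ν {ω | ∀ u ≤ t, X u ω = extFun t S g u}).toReal *
                ∑ s' ∈ S, Real.exp (lam * s') *
                  ((μ[|{ω | ∀ u ≤ t, X u ω = extFun t S g u}])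
                    {ω | X (t + 1) ω = s'}).toReal := by
                rw [aux_sum_exp (μ[|{ω | ∀ u ≤ t, X u ω = extFun t S g u}]) S (X (t + 1))
                  (hXm (t + 1)) (hmem (t + 1)) (fun x => Real.exp (lam * x))]
            _ = (ν {ω | ∀ u ≤ t, X u ω = extFun t S g u}).toReal *
                ∑ s' ∈ S, Real.exp (lam * s') *
                  ((μ[|{ω | X t ω = s}]) {ω | X (t + 1) ω = s'}).toReal := by
                congr 1
                apply Finset.sum_congr rfl
                intro s' _
                rw [hp t (extFun t S g) s' hμE0,
                  aux_law_eq μ S X hmem hXm p hp t s s' hμXt, hs_def]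
            _ = (ν {ω | ∀ u ≤ t, X u ω = extFun t S g u}).toReal *
                ∫ ω, Real.exp (lam * X (t + 1) ω) ∂(μ[|{ω | X t ω = s}]) := by
                rw [aux_sum_exp (μ[|{ω | X t ω = s}]) S (X (t + 1))
                  (hXm (t + 1)) (hmem (t + 1)) (fun x => Real.exp (lam * x))]
            _ ≤ (ν {ω | ∀ u ≤ t, X u ω = extFun t S g u}).toReal *
                Real.exp (lam * (s - δ * (1 - β))) :=
                mul_le_mul_of_nonneg_left hmgf ENNReal.toReal_nonneg
            _ = Real.exp (-(lam * (δ * (1 - β)))) *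
                ((ν {ω | ∀ u ≤ t, X u ω = extFun t S g u}).toReal *
                  Real.exp (lam * s)) := by
                rw [show lam * (s - δ * (1 - β))
                  = -(lam * (δ * (1 - β))) + lam * s by ring, Real.exp_add]
                ring
      · -- bad history : both sides vanish
        have hzero : ∀ F : Ω → ℝ, ({ω | ∀ u ≤ t, X u ω = extFun t S g u}).indicator
            ((A t).indicator F) = fun _ => (0 : ℝ) := by
          intro F
          funext ω
          by_cases hω : ω ∈ {ω | ∀ u ≤ t, X u ω = extFun t S g u}
          · rw [Set.indicator_of_mem hω]
            apply Set.indicator_of_notMem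
            intro hA
            push_neg at hgood
            obtain ⟨u₀, hu₀, hle⟩ := hgood
            have := hA u₀ hu₀
            rw [hω u₀ hu₀] at this
            linarith
          · exact Set.indicator_of_notMem hω _
        rw [hzero, hzero, integral_zero, mul_zero]
    calc ∫ ω, (A (t + 1)).indicator (fun ω => Real.exp (lam * X (t + 1) ω)) ω ∂ν
        ≤ ∫ ω, (A t).indicator (fun ω => Real.exp (lam * X (t + 1) ω)) ω ∂ν := hmono1
      _ = ∑ g : Fin (t + 1) → {x // x ∈ S},
            ∫ ω, ({ω | ∀ u ≤ t, X u ω = extFun t S g u}).indicator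
              ((A t).indicator fun ω => Real.exp (lam * X (t + 1) ω)) ω ∂ν := hsum1
      _ ≤ ∑ g : Fin (t + 1) → {x // x ∈ S},
            Real.exp (-(lam * (δ * (1 - β)))) *
            ∫ ω, ({ω | ∀ u ≤ t, X u ω = extFun t S g u}).indicator
              ((A t).indicator fun ω => Real.exp (lam * X t ω)) ω ∂ν :=
          Finset.sum_le_sum fun g _ => hterm g
      _ = Real.exp (-(lam * (δ * (1 - β)))) *
          ∑ g : Fin (t + 1) → {x // x ∈ S},
            ∫ ω, ({ω | ∀ u ≤ t, X u ω = extFun t S g u}).indicator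
              ((A t).indicator fun ω => Real.exp (lam * X t ω)) ω ∂ν :=
          by rw [← Finset.mul_sum]
      _ = Real.exp (-(lam * (δ * (1 - β)))) *
          ∫ ω, (A t).indicator (fun ω => Real.exp (lam * X t ω)) ω ∂ν := by rw [← hsum2]
  -- iterate the key estimate
  have grow : ∀ t : ℕ, ∫ ω, (A t).indicator (fun ω => Real.exp (lam * X t ω)) ω ∂ν
      ≤ Real.exp (lam * (b * n)) * Real.exp (-(lam * (δ * (1 - β)))) ^ t := by
    intro t
    induction t with
    | zero =>
      rw [pow_zero, mul_one]
      calc ∫ ω, (A 0).indicator (fun ω => Real.exp (lam * X 0 ω)) ω ∂ν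
          ≤ ∫ ω, Real.exp (lam * X 0 ω) ∂ν :=
            integral_mono (hIntf 0) (hIntExp 0)
              (Set.indicator_le_self' fun ω _ => (Real.exp_pos _).le)
        _ ≤ ∫ _ω, Real.exp (lam * (b * n)) ∂ν := by
            apply integral_mono_ae (hIntExp 0) (integrable_const _)
            exact hνae.mono fun ω h =>
              Real.exp_le_exp.mpr (mul_le_mul_of_nonneg_left h hlam.le)
        _ = Real.exp (lam * (b * n)) := by simp
    | succ t ih =>
      calc ∫ ω, (A (t + 1)).indicator (fun ω => Real.exp (lam * X (t + 1) ω)) ω ∂ν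
          ≤ Real.exp (-(lam * (δ * (1 - β)))) *
            ∫ ω, (A t).indicator (fun ω => Real.exp (lam * X t ω)) ω ∂ν := key t
        _ ≤ Real.exp (-(lam * (δ * (1 - β)))) *
            (Real.exp (lam * (b * n)) * Real.exp (-(lam * (δ * (1 - β)))) ^ t) :=
            mul_le_mul_of_nonneg_left ih (Real.exp_pos _).le
        _ = Real.exp (lam * (b * n)) * Real.exp (-(lam * (δ * (1 - β)))) ^ (t + 1) := by
            ring
  -- the final event
  set T : ℕ := ⌈(1 + η) * (b - a) * (n : ℝ) / δ⌉₊ with hT_def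
  have hτpos : 0 < (1 + η) * (b - a) * (n : ℝ) / δ :=
    div_pos (mul_pos (mul_pos (by linarith) hba) hn0) hδ
  have hT1 : 1 ≤ T := by
    rw [hT_def]
    exact Nat.one_le_ceil_iff.mpr hτpos
  have hEsubA : {ω | ∀ t : ℕ, (t : ℝ) < (1 + η) * (b - a) * n / δ → a * n < X t ω}
      ⊆ A (T - 1) := by
    intro ω hω u hu
    apply hω u
    have h1 : ((u : ℕ) : ℝ) ≤ ((T - 1 : ℕ) : ℝ) := by exact_mod_cast hu
    have h2 : ((T - 1 : ℕ) : ℝ) = (T : ℝ) - 1 := by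
      rw [Nat.cast_sub hT1, Nat.cast_one]
    have h3 : (T : ℝ) < (1 + η) * (b - a) * (n : ℝ) / δ + 1 := by
      rw [hT_def]
      exact Nat.ceil_lt_add_one hτpos.le
    rw [h2] at h1
    linarith
  have hν2 : ν {ω | ∀ t : ℕ, (t : ℝ) < (1 + η) * (b - a) * n / δ → a * n < X t ω}
      ≤ ν (A (T - 1)) := measure_mono hEsubA
  -- bound (ν (A (T-1))).toReal
  have h1 : Real.exp (lam * (a * n)) * (ν (A (T - 1))).toReal
      ≤ ∫ ω, (A (T - 1)).indicator (fun ω => Real.exp (lam * X (T - 1) ω)) ω ∂ν := by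
    have hpt : ∀ ω, (A (T - 1)).indicator (fun _ => Real.exp (lam * (a * n))) ω
        ≤ (A (T - 1)).indicator (fun ω => Real.exp (lam * X (T - 1) ω)) ω := by
      intro ω
      by_cases hω : ω ∈ A (T - 1)
      · rw [Set.indicator_of_mem hω, Set.indicator_of_mem hω]
        have := hω (T - 1) le_rfl
        exact Real.exp_le_exp.mpr (mul_le_mul_of_nonneg_left (by linarith) hlam.le)
      · rw [Set.indicator_of_notMem hω, Set.indicator_of_notMem hω]
    have := integral_mono ((integrable_const _).indicator (hAmeas (T - 1))) (hIntf (T - 1)) hpt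
    rwa [integral_indicator_const _ (hAmeas (T - 1)), smul_eq_mul, mul_comm] at this
  have hfinalReal : (ν (A (T - 1))).toReal
      ≤ Real.exp (-(ρ * n / r n)) := by
    have hgrow' : ∫ ω, (A (T - 1)).indicator (fun ω => Real.exp (lam * X (T - 1) ω)) ω ∂ν
        ≤ Real.exp (lam * (b * n) + ((T - 1 : ℕ) : ℝ) * -(lam * (δ * (1 - β)))) := by
      have := grow (T - 1)
      rw [← Real.exp_nat_mul, ← Real.exp_add] at this
      exact this
    have h4 : (ν (A (T - 1))).toReal
        ≤ Real.exp (lam * (b * n) + ((T - 1 : ℕ) : ℝ) * -(lam * (δ * (1 - β)))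
            - lam * (a * n)) := by
      rw [Real.exp_sub, le_div_iff₀ (Real.exp_pos _)]
      calc (ν (A (T - 1))).toReal * Real.exp (lam * (a * n))
          = Real.exp (lam * (a * n)) * (ν (A (T - 1))).toReal := by ring
        _ ≤ _ := le_trans h1 hgrow'
    refine le_trans h4 (Real.exp_le_exp.mpr ?_)
    -- the exponent computation
    have hcast : ((T - 1 : ℕ) : ℝ) = (T : ℝ) - 1 := by
      rw [Nat.cast_sub hT1, Nat.cast_one]
    have hTτ : (1 + η) * (b - a) * (n : ℝ) / δ ≤ (T : ℝ) := by
      rw [hT_def]; exact Nat.le_ceil _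
    have hc1 : 0 ≤ lam * (δ * (1 - β)) :=
      mul_nonneg hlam.le (mul_nonneg hδ.le (by linarith))
    have hstep1 : ((T - 1 : ℕ) : ℝ) * -(lam * (δ * (1 - β)))
        ≤ ((1 + η) * (b - a) * (n : ℝ) / δ - 1) * -(lam * (δ * (1 - β))) := by
      apply mul_le_mul_of_nonpos_right _ (by linarith)
      rw [hcast]; linarith
    have hτc : lam * (δ * (1 - β)) * ((1 + η) * (b - a) * (n : ℝ) / δ)
        = lam * (1 + η / 2) * ((b - a) * (n : ℝ)) := by
      rw [show lam * (δ * (1 - β)) * ((1 + η) * (b - a) * (n : ℝ) / δ)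
          = lam * ((1 - β) * (1 + η)) * ((b - a) * (n : ℝ)) * (δ / δ) by ring,
        div_self hδ.ne', mul_one, hβhalf]
    have hρn : lam * (η / 2) * ((b - a) * (n : ℝ)) = 2 * (ρ * n / r n) := by
      rw [hlam_def, hρ_def]
      field_simp
      ring
    have hθδρ : θ * δ ≤ ρ * n / r n := (le_div_iff₀ (hrpos n)).mpr hnr
    have hlamδ : lam * (δ * (1 - β)) ≤ θ * δ := by
      have h5 : lam * (δ * (1 - β)) ≤ lam * δ := by
        have h8 : δ * (1 - β) ≤ δ := by
          have h9 : 0 ≤ δ * β := mul_nonneg hδ.le hβ.le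
          have h10 : δ * (1 - β) = δ - δ * β := by ring
          linarith
        have h7 := mul_le_mul_of_nonneg_left h8 hlam.le
        linarith
      have h6 : lam * δ ≤ θ * δ := mul_le_mul_of_nonneg_right hlamθ hδ.le
      linarith
    have f2 : ((1 + η) * (b - a) * (n : ℝ) / δ - 1) * -(lam * (δ * (1 - β)))
        = -(lam * (δ * (1 - β)) * ((1 + η) * (b - a) * (n : ℝ) / δ)) + lam * (δ * (1 - β)) := by
      ring
    have f4 : lam * (1 + η / 2) * ((b - a) * (n : ℝ))
        = lam * ((b - a) * (n : ℝ)) + lam * (η / 2) * ((b - a) * (n : ℝ)) := by ring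
    have f5 : lam * (b * (n : ℝ)) - lam * (a * (n : ℝ)) = lam * ((b - a) * (n : ℝ)) := by ring
    linarith [hstep1, hτc, hρn, hθδρ, hlamδ, f2, f4, f5]
  -- conclude
  have hEvtoReal :
      (ν {ω | ∀ t : ℕ, (t : ℝ) < (1 + η) * (b - a) * n / δ → a * n < X t ω}).toReal
      ≤ Real.exp (-(ρ * n / r n)) :=
    le_trans (ENNReal.toReal_mono (measure_ne_top _ _) hν2) hfinalReal
  have hofr := ENNReal.ofReal_le_ofReal hEvtoReal
  rwa [ENNReal.ofReal_toReal (measure_ne_top ν _)] at hofr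
end

section
/- (Generic easyness proof.) Fix constants δ > 0 and C > 0. For each n, consider the following Markov chain on {0,1}^n: the process starts at an arbitrary point x^(0); in each round, given the current point x, an offspring y is drawn from a probability distribution K_x on {0,1}^n (which may depend arbitrarily on x and n), and x is replaced by y if and only if f(y) ≥ f(x), where f : {0,1}^n → ℝ is strictly monotone. For parent x and offspring y ~ K_x, let s₀₁ be the number of coordinates i with x_i = 0 and y_i = 1, and s₁₀ the number of coordinates i with x_i = 1 and y_i = 0. Assume that for all n and all x ∈ {0,1}^n: (1) E[s₁₀ | parent = x and s₀₁ > 0] ≤ 1 − δ, and (2) Pr[s₀₁ > 0 | parent = x] ≥ C·(n − OM(x))/n. Then there exists a constant C′ > 0 such that, for every sequence (f_n) of strictly monotone functions f_n : {0,1}^n → ℝ, the probability that the process run on f_n reaches the all-ones string within C′·n·ln n rounds tends to 1 as n → ∞. -/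
open MeasureTheory ProbabilityTheory Filter Topology
open scoped ENNReal

attribute [local instance] Classical.propDecidable

/-- `f : {0,1}^n → ℝ` is strictly monotone: `x ≠ y` and `yᵢ ≤ xᵢ` for all `i`
implies `f y < f x`. -/
def StrictMonoBool {n : ℕ} (f : (Fin n → Bool) → ℝ) : Prop :=
  ∀ x y : Fin n → Bool, x ≠ y → (∀ i, y i ≤ x i) → f y < f x

/-- `OM(x)`: the number of one-bits of `x`. -/
def onesCount {n : ℕ} (x : Fin n → Bool) : ℕ :=
  (Finset.univ.filter fun i => x i = true).card

/-- `s₀₁`: number of coordinates that are `0` in the parent `x` and `1` in the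
offspring `y`. -/
def s01 {n : ℕ} (x y : Fin n → Bool) : ℕ :=
  (Finset.univ.filter fun i => x i = false ∧ y i = true).card

/-- `s₁₀`: number of coordinates that are `1` in the parent `x` and `0` in the
offspring `y`. -/
def s10 {n : ℕ} (x y : Fin n → Bool) : ℕ :=
  (Finset.univ.filter fun i => x i = true ∧ y i = false).card

def zeros {n : ℕ} (x : Fin n → Bool) : ℕ :=
  (Finset.univ.filter fun i => x i = false).card

lemma zeros_add {n : ℕ} (x y : Fin n → Bool) :
    zeros y + s01 x y = zeros x + s10 x y := by
  classical
  simp only [zeros, s01, s10, Finset.card_filter]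
  rw [← Finset.sum_add_distrib, ← Finset.sum_add_distrib]
  refine Finset.sum_congr rfl fun i _ => ?_
  cases hx : x i <;> cases hy : y i <;> simp [hx, hy]

lemma zeros_le {n : ℕ} (x : Fin n → Bool) : zeros x ≤ n := by
  simpa [zeros] using Finset.card_filter_le Finset.univ (fun i => x i = false)

lemma zeros_eq_zero_iff {n : ℕ} (x : Fin n → Bool) :
    zeros x = 0 ↔ x = fun _ => true := by
  constructor
  · intro h
    funext i
    by_contra hi
    have hif : x i = false := by cases hxi : x i <;> simp_all
    have : i ∈ Finset.univ.filter fun j => x j = false := by simp [hif]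
    simp [zeros, Finset.card_eq_zero] at h
    exact hi (@h i)
  · intro h; simp [zeros, h]

lemma zeros_cast {n : ℕ} (x : Fin n → Bool) :
    (zeros x : ℝ) = (n : ℝ) - (onesCount x : ℝ) := by
  have : zeros x + onesCount x = n := by
    classical
    simp only [zeros, onesCount]
    rw [add_comm]
    have h2 := Finset.card_filter_add_card_filter_not
      (s := (Finset.univ : Finset (Fin n))) (p := fun i => x i = true)
    have h3 : (Finset.filter (fun a => ¬(fun i => x i = true) a)
        (Finset.univ : Finset (Fin n))) = Finset.filter (fun i => x i = false) Finset.univ := by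
      refine Finset.filter_congr fun i _ => ?_
      cases hx : x i <;> simp [hx]
    rw [h3] at h2
    simpa using h2
  have := congrArg (fun m : ℕ => (m : ℝ)) this
  push_cast at this
  linarith

lemma s01_zero_le {n : ℕ} {x y : Fin n → Bool} (h : s01 x y = 0) :
    ∀ i, y i ≤ x i := by
  intro i
  have : ¬ (x i = false ∧ y i = true) := by
    intro hi
    have : i ∈ Finset.univ.filter fun j => x j = false ∧ y j = true := by simp [hi]
    simp only [s01, Finset.card_eq_zero] at h
    rw [h] at this
    exact absurd this (Finset.notMem_empty i)
  cases hx : x i <;> cases hy : y i <;> simp_all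

lemma s10_zero_le {n : ℕ} {x y : Fin n → Bool} (h : s10 x y = 0) :
    ∀ i, x i ≤ y i := by
  intro i
  have : ¬ (x i = true ∧ y i = false) := by
    intro hi
    have : i ∈ Finset.univ.filter fun j => x j = true ∧ y j = false := by simp [hi]
    simp only [s10, Finset.card_eq_zero] at h
    rw [h] at this
    exact absurd this (Finset.notMem_empty i)
  cases hx : x i <;> cases hy : y i <;> simp_all

lemma s01_pos_ne {n : ℕ} {x y : Fin n → Bool} (h : 0 < s01 x y) : x ≠ y := by
  intro he
  subst he
  simp only [s01] at h
  have : (Finset.univ.filter fun i => x i = false ∧ x i = true) = ∅ := by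
    refine Finset.filter_false_of_mem fun i _ => ?_
    rintro ⟨h1, h2⟩; simp [h1] at h2
  simp [this] at h

lemma res_eq_of_s01_zero {n : ℕ} {f : (Fin n → Bool) → ℝ} (hf : StrictMonoBool f)
    {x y : Fin n → Bool} (h : s01 x y = 0) :
    (if f x ≤ f y then y else x) = x := by
  by_cases hxy : y = x
  · simp [hxy]
  · have : f y < f x := hf x y (Ne.symm hxy) (s01_zero_le h)
    rw [if_neg (not_le.mpr this)]

lemma res_key {n : ℕ} {f : (Fin n → Bool) → ℝ} (hf : StrictMonoBool f)
    {x y : Fin n → Bool} (h : 0 < s01 x y) :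
    zeros (if f x ≤ f y then y else x) + 1 ≤ zeros x + s10 x y := by
  by_cases hs10 : s10 x y = 0
  · -- then x < y pointwise, accepted
    have hle : f x < f y := hf y x (Ne.symm (s01_pos_ne h)) (s10_zero_le hs10)
    rw [if_pos hle.le]
    have := zeros_add x y
    omega
  · -- s10 ≥ 1
    split
    · have := zeros_add x y
      omega
    · omega
lemma step_bound {n : ℕ} (hn : 1 ≤ n) {δ C : ℝ} (hδ0 : 0 < δ) (hδ1 : δ ≤ 1)
    (hC0 : 0 < C) (hC1 : C ≤ 1)
    (K : PMF (Fin n → Bool)) (f : (Fin n → Bool) → ℝ) (hf : StrictMonoBool f)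
    (x : Fin n → Bool)
    (h1 : (∑ y : Fin n → Bool, if 0 < s01 x y then K y else 0) ≠ 0 →
      (∑ y : Fin n → Bool, if 0 < s01 x y then K y * (s10 x y : ℝ≥0∞) else 0)
        ≤ ENNReal.ofReal (1 - δ) * ∑ y : Fin n → Bool, if 0 < s01 x y then K y else 0)
    (h2 : ENNReal.ofReal (C * (zeros x : ℝ) / (n : ℝ))
        ≤ ∑ y : Fin n → Bool, if 0 < s01 x y then K y else 0) :
    ∑ y : Fin n → Bool, K y * (zeros (if f x ≤ f y then y else x) : ℝ≥0∞)
      ≤ ENNReal.ofReal (1 - δ * C / (n : ℝ)) * (zeros x : ℝ≥0∞) := by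
  classical
  set F : (Fin n → Bool) → ℝ≥0∞ :=
    fun y => K y * (zeros (if f x ≤ f y then y else x) : ℝ≥0∞) with hF
  set A : ℝ≥0∞ := ∑ y : Fin n → Bool, if 0 < s01 x y then K y else 0 with hA
  have hn' : (0:ℝ) < n := by exact_mod_cast hn
  have hsum : ∑ y : Fin n → Bool, (K y : ℝ≥0∞) = 1 := by
    have := K.tsum_coe; rwa [tsum_fintype] at this
  by_cases hA0 : A = 0
  · have h2' : ENNReal.ofReal (C * (zeros x : ℝ) / n) = 0 :=
      le_antisymm (le_trans h2 (le_of_eq hA0)) zero_le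
    have hz : zeros x = 0 := by
      by_contra hz
      have h3 : 0 < C * (zeros x : ℝ) / n := by
        apply div_pos (mul_pos hC0 _) hn'
        exact_mod_cast Nat.pos_of_ne_zero hz
      rw [ENNReal.ofReal_eq_zero] at h2'
      linarith
    have hterm : ∀ y : Fin n → Bool, F y = 0 := by
      intro y
      by_cases hy : 0 < s01 x y
      · have hky : (K y : ℝ≥0∞) = 0 := by
          have hA0' : (∑ y : Fin n → Bool, if 0 < s01 x y then (K y : ℝ≥0∞) else 0) = 0 := by
            rw [← hA]; exact hA0
          have h4 := (Finset.sum_eq_zero_iff.mp hA0') y (Finset.mem_univ y)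
          simpa [hy] using h4
        simp [hF, hky]
      · have hy0 : s01 x y = 0 := by omega
        simp [hF, res_eq_of_s01_zero hf hy0, hz]
    rw [Finset.sum_congr rfl fun y _ => hterm y]
    simp
  · have hA1 : A ≤ 1 := by
      rw [hA, ← hsum]
      exact Finset.sum_le_sum fun y _ => by split <;> simp
    have hAtop : A ≠ ⊤ := ne_top_of_le_ne_top ENNReal.one_ne_top hA1
    have key := h1 hA0
    set P := Finset.univ.filter (fun y : Fin n → Bool => 0 < s01 x y) with hP
    set Q := Finset.univ.filter (fun y : Fin n → Bool => ¬ 0 < s01 x y) with hQ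
    have hAP : ∑ y ∈ P, (K y : ℝ≥0∞) = A := by rw [hA, hP, Finset.sum_filter]
    have hs10 : ∑ y ∈ P, K y * (s10 x y : ℝ≥0∞)
        = ∑ y : Fin n → Bool, if 0 < s01 x y then K y * (s10 x y : ℝ≥0∞) else 0 := by
      rw [hP, Finset.sum_filter]
    have hQsum : ∑ y ∈ Q, F y = (∑ y ∈ Q, (K y : ℝ≥0∞)) * (zeros x : ℝ≥0∞) := by
      rw [Finset.sum_mul]
      refine Finset.sum_congr rfl fun y hy => ?_
      have hy0 : s01 x y = 0 := by
        have := (Finset.mem_filter.mp hy).2; omega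
      simp only [hF, res_eq_of_s01_zero hf hy0]
    have hPsum : (∑ y ∈ P, F y) + A
        ≤ (zeros x : ℝ≥0∞) * A + ENNReal.ofReal (1 - δ) * A := by
      calc (∑ y ∈ P, F y) + A = ∑ y ∈ P, (F y + K y) := by
            rw [← hAP, ← Finset.sum_add_distrib]
        _ ≤ ∑ y ∈ P, (K y * ((zeros x : ℝ≥0∞) + (s10 x y : ℝ≥0∞))) := by
            refine Finset.sum_le_sum fun y hy => ?_
            have hy' : 0 < s01 x y := by simpa using (Finset.mem_filter.mp hy).2
            have hk := res_key hf (x := x) (y := y) hy'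
            have hcast : ((zeros (if f x ≤ f y then y else x) : ℝ≥0∞) + 1)
                ≤ ((zeros x : ℝ≥0∞) + (s10 x y : ℝ≥0∞)) := by
              have := Nat.cast_le (α := ℝ≥0∞) |>.mpr hk
              push_cast at this
              convert this using 2 <;> push_cast <;> ring
            calc F y + K y = K y * ((zeros (if f x ≤ f y then y else x) : ℝ≥0∞) + 1) := by
                  simp only [hF]; ring
              _ ≤ _ := mul_le_mul_right hcast _
        _ = (zeros x : ℝ≥0∞) * A + ∑ y ∈ P, K y * (s10 x y : ℝ≥0∞) := by
            simp only [mul_add]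
            rw [Finset.sum_add_distrib, ← Finset.sum_mul, hAP, mul_comm]
        _ ≤ (zeros x : ℝ≥0∞) * A + ENNReal.ofReal (1 - δ) * A := by
            gcongr
            rw [hs10]; exact key
    have hone : A + ∑ y ∈ Q, (K y : ℝ≥0∞) = 1 := by
      rw [← hAP, ← hsum, hP, hQ]
      exact Finset.sum_filter_add_sum_filter_not _ _ _
    have main : (∑ y : Fin n → Bool, F y) + A
        ≤ (zeros x : ℝ≥0∞) + ENNReal.ofReal (1 - δ) * A := by
      have hsplit : (∑ y : Fin n → Bool, F y) = (∑ y ∈ P, F y) + ∑ y ∈ Q, F y := by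
        rw [hP, hQ]; exact (Finset.sum_filter_add_sum_filter_not _ _ _).symm
      calc (∑ y : Fin n → Bool, F y) + A
          = ((∑ y ∈ P, F y) + A) + ∑ y ∈ Q, F y := by rw [hsplit]; ring
        _ ≤ ((zeros x : ℝ≥0∞) * A + ENNReal.ofReal (1 - δ) * A)
              + (∑ y ∈ Q, (K y : ℝ≥0∞)) * (zeros x : ℝ≥0∞) := by
            rw [hQsum]; exact add_le_add_left hPsum _
        _ = (zeros x : ℝ≥0∞) * (A + ∑ y ∈ Q, (K y : ℝ≥0∞))
              + ENNReal.ofReal (1 - δ) * A := by ring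
        _ = (zeros x : ℝ≥0∞) + ENNReal.ofReal (1 - δ) * A := by rw [hone, mul_one]
    have hAsplit : ENNReal.ofReal δ * A + ENNReal.ofReal (1 - δ) * A = A := by
      rw [← add_mul, ← ENNReal.ofReal_add hδ0.le (by linarith)]
      norm_num
    have main2 : (∑ y : Fin n → Bool, F y) + ENNReal.ofReal δ * A ≤ (zeros x : ℝ≥0∞) := by
      have hfin : ENNReal.ofReal (1 - δ) * A ≠ ⊤ := ENNReal.mul_ne_top ENNReal.ofReal_ne_top hAtop
      rw [← ENNReal.add_le_add_iff_right hfin]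
      calc (∑ y : Fin n → Bool, F y) + ENNReal.ofReal δ * A + ENNReal.ofReal (1 - δ) * A
          = (∑ y : Fin n → Bool, F y) + A := by rw [add_assoc, hAsplit]
        _ ≤ (zeros x : ℝ≥0∞) + ENNReal.ofReal (1 - δ) * A := main
    have h5 : ENNReal.ofReal (δ * C / n * (zeros x : ℝ)) ≤ ENNReal.ofReal δ * A := by
      calc ENNReal.ofReal (δ * C / n * (zeros x : ℝ))
          = ENNReal.ofReal δ * ENNReal.ofReal (C * (zeros x : ℝ) / n) := by
            rw [← ENNReal.ofReal_mul hδ0.le]; ring_nf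
        _ ≤ ENNReal.ofReal δ * A := mul_le_mul_right h2 _
    have main3 : (∑ y : Fin n → Bool, F y) + ENNReal.ofReal (δ * C / n * (zeros x : ℝ))
        ≤ (zeros x : ℝ≥0∞) :=
      le_trans (add_le_add_right h5 _) main2
    have hcoef0 : (0:ℝ) ≤ δ * C / n := by positivity
    have hcoef1 : δ * C / n ≤ 1 := by
      rw [div_le_one hn']
      have h1n : (1:ℝ) ≤ n := by exact_mod_cast hn
      have : δ * C ≤ 1 := by nlinarith
      linarith
    have hZx : (zeros x : ℝ≥0∞)
        = ENNReal.ofReal ((1 - δ * C / n) * (zeros x : ℝ))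
          + ENNReal.ofReal (δ * C / n * (zeros x : ℝ)) := by
      rw [← ENNReal.ofReal_add (mul_nonneg (by linarith) (Nat.cast_nonneg _)) (by positivity)]
      rw [show (1 - δ * C / n) * (zeros x : ℝ) + δ * C / n * (zeros x : ℝ)
            = (zeros x : ℝ) by ring]
      exact (ENNReal.ofReal_natCast _).symm
    have final : (∑ y : Fin n → Bool, F y) ≤ ENNReal.ofReal ((1 - δ * C / n) * (zeros x : ℝ)) := by
      rw [← ENNReal.add_le_add_iff_right
        (ENNReal.ofReal_ne_top (r := δ * C / n * (zeros x : ℝ)))]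
      calc (∑ y : Fin n → Bool, F y) + ENNReal.ofReal (δ * C / n * (zeros x : ℝ))
          ≤ (zeros x : ℝ≥0∞) := main3
        _ = _ := hZx
    calc ∑ y : Fin n → Bool, F y ≤ ENNReal.ofReal ((1 - δ * C / n) * (zeros x : ℝ)) := final
      _ = ENNReal.ofReal (1 - δ * C / n) * ENNReal.ofReal (zeros x : ℝ) := by
          rw [ENNReal.ofReal_mul (by linarith)]
      _ = ENNReal.ofReal (1 - δ * C / n) * (zeros x : ℝ≥0∞) := by
          rw [ENNReal.ofReal_natCast]

lemma traj_bound {n : ℕ} (ρ : ℝ≥0∞)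
    (f : (Fin n → Bool) → ℝ)
    (K : (Fin n → Bool) → PMF (Fin n → Bool))
    (hstep : ∀ x : Fin n → Bool,
      ∑ y : Fin n → Bool, K x y * (zeros (if f x ≤ f y then y else x) : ℝ≥0∞)
        ≤ ρ * (zeros x : ℝ≥0∞))
    (x0 : Fin n → Bool)
    (Ω : Type*) [MeasurableSpace Ω] (μ : Measure Ω) [IsProbabilityMeasure μ]
    (X : ℕ → Ω → (Fin n → Bool))
    (hX0 : ∀ ω, X 0 ω = x0)
    (hM : ∀ (t : ℕ) (h : ℕ → (Fin n → Bool)),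
      μ {ω | ∀ u ≤ t, X u ω = h u} ≠ 0 →
      ∀ z : Fin n → Bool,
        (μ[|{ω | ∀ u ≤ t, X u ω = h u}]) {ω | X (t + 1) ω = z}
          = ∑ y : Fin n → Bool, if (if f (h t) ≤ f y then y else h t) = z then K (h t) y else 0) :
    ∀ T : ℕ, μ {ω | X T ω ≠ fun _ => true} ≤ ρ ^ T * (zeros x0 : ℝ≥0∞) := by
  classical
  let H : ∀ t : ℕ, (Fin (t+1) → (Fin n → Bool)) → Set Ω :=
    fun t g => {ω | ∀ u : Fin (t+1), X u ω = g u}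
  let V : ℕ → ℝ≥0∞ :=
    fun t => ∑ g : Fin (t+1) → (Fin n → Bool), μ (H t g) * (zeros (g (Fin.last t)) : ℝ≥0∞)
  have hV0 : V 0 ≤ (zeros x0 : ℝ≥0∞) := by
    have hle : ∀ g : Fin 1 → (Fin n → Bool),
        μ (H 0 g) * (zeros (g (Fin.last 0)) : ℝ≥0∞)
          ≤ if g = (fun _ => x0) then (zeros x0 : ℝ≥0∞) else 0 := by
      intro g
      by_cases hg : g = fun _ => x0
      · rw [if_pos hg, hg]
        exact mul_le_of_le_one_left zero_le prob_le_one
      · rw [if_neg hg]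
        have hempty : H 0 g = ∅ := by
          ext ω
          simp only [H, Set.mem_setOf_eq, Set.mem_empty_iff_false, iff_false, not_forall]
          by_contra hω
          push_neg at hω
          apply hg
          funext u
          have hu : u = 0 := Subsingleton.elim u 0
          subst hu
          have h0 := hω 0
          simp only [Fin.val_zero] at h0
          rw [hX0 ω] at h0
          exact h0.symm
        simp [hempty]
    calc V 0 ≤ ∑ g : Fin 1 → (Fin n → Bool),
          if g = (fun _ => x0) then (zeros x0 : ℝ≥0∞) else 0 :=
          Finset.sum_le_sum fun g _ => hle g
      _ = (zeros x0 : ℝ≥0∞) := by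
          rw [Finset.sum_ite_eq' Finset.univ]
          simp
  have hVstep : ∀ t : ℕ, V (t+1) ≤ ρ * V t := by
    intro t
    have key : ∀ g0 : Fin (t+1) → (Fin n → Bool),
        (∑ z : Fin n → Bool, μ (H (t+1) (Fin.snoc g0 z)) * (zeros z : ℝ≥0∞))
          ≤ μ (H t g0) * (ρ * (zeros (g0 (Fin.last t)) : ℝ≥0∞)) := by
      intro g0
      have hHsub : ∀ z : Fin n → Bool,
          H (t+1) (Fin.snoc g0 z) = H t g0 ∩ {ω | X (t+1) ω = z} := by
        intro z
        ext ω
        simp only [H, Set.mem_setOf_eq, Set.mem_inter_iff]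
        constructor
        · intro hω
          refine ⟨fun u => ?_, ?_⟩
          · have h1 := hω u.castSucc
            rwa [Fin.snoc_castSucc, Fin.coe_castSucc] at h1
          · have h2 := hω (Fin.last (t+1))
            rwa [Fin.snoc_last, Fin.val_last] at h2
        · rintro ⟨hpre, hlast⟩ u
          refine Fin.lastCases ?_ ?_ u
          · rw [Fin.snoc_last, Fin.val_last]
            exact hlast
          · intro v
            rw [Fin.snoc_castSucc, Fin.coe_castSucc]
            exact hpre v
      by_cases ha : μ (H t g0) = 0
      · have hz : ∀ z : Fin n → Bool, μ (H (t+1) (Fin.snoc g0 z)) = 0 := fun z =>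
          le_antisymm ((measure_mono (by rw [hHsub z]; exact Set.inter_subset_left)).trans
            ha.le) zero_le
        simp only [hz, zero_mul, Finset.sum_const_zero]
        exact zero_le
      · set x := g0 (Fin.last t) with hx
        set h : ℕ → (Fin n → Bool) :=
          fun u => if hu : u < t + 1 then g0 ⟨u, hu⟩ else x with hh
        have hHeq : {ω | ∀ u ≤ t, X u ω = h u} = H t g0 := by
          ext ω
          simp only [Set.mem_setOf_eq, H]
          constructor
          · intro hω u
            have h1 := hω u (Nat.lt_succ_iff.mp u.isLt)
            rw [hh] at h1
            simp only at h1
            rw [dif_pos u.isLt] at h1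
            simpa using h1
          · intro hω u hu
            have h2 := hω ⟨u, Nat.lt_succ_of_le hu⟩
            rw [hh]
            simp only
            rw [dif_pos (Nat.lt_succ_of_le hu)]
            exact h2
        have hht : h t = x := by
          rw [hh]
          simp only
          rw [dif_pos (Nat.lt_succ_self t)]
          rfl
        have ha' : μ {ω | ∀ u ≤ t, X u ω = h u} ≠ 0 := by rw [hHeq]; exact ha
        have hcond := hM t h ha'
        have hfin : μ (H t g0) ≠ ⊤ := measure_ne_top μ _
        have hbound : ∀ z : Fin n → Bool, μ (H (t+1) (Fin.snoc g0 z))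
            ≤ μ (H t g0) * ∑ y : Fin n → Bool,
                if (if f x ≤ f y then y else x) = z then K x y else 0 := by
          intro z
          have hcz := hcond z
          rw [hHeq, hht] at hcz
          rw [hHsub z]
          calc μ (H t g0 ∩ {ω | X (t+1) ω = z})
              ≤ μ.restrict (H t g0) {ω | X (t+1) ω = z} := by
                rw [Set.inter_comm]
                exact Measure.le_restrict_apply _ _
            _ = μ (H t g0) * (μ[|H t g0]) {ω | X (t+1) ω = z} := by
                rw [ProbabilityTheory.cond, Measure.smul_apply, smul_eq_mul, ← mul_assoc,
                  ENNReal.mul_inv_cancel ha hfin, one_mul]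
            _ = _ := by rw [hcz]
        have hswap : ∀ z : Fin n → Bool,
            (∑ y : Fin n → Bool, if (if f x ≤ f y then y else x) = z then K x y else 0)
              * (zeros z : ℝ≥0∞)
            = ∑ y : Fin n → Bool,
                if (if f x ≤ f y then y else x) = z then K x y * (zeros z : ℝ≥0∞) else 0 := by
          intro z
          rw [Finset.sum_mul]
          exact Finset.sum_congr rfl fun y _ => by split <;> simp
        calc ∑ z : Fin n → Bool, μ (H (t+1) (Fin.snoc g0 z)) * (zeros z : ℝ≥0∞)
            ≤ ∑ z : Fin n → Bool,
                (μ (H t g0) * ∑ y : Fin n → Bool,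
                  if (if f x ≤ f y then y else x) = z then K x y else 0)
                * (zeros z : ℝ≥0∞) :=
              Finset.sum_le_sum fun z _ => mul_le_mul_left (hbound z) _
          _ = μ (H t g0) * ∑ z : Fin n → Bool, ∑ y : Fin n → Bool,
                (if (if f x ≤ f y then y else x) = z then K x y * (zeros z : ℝ≥0∞) else 0) := by
              rw [Finset.mul_sum]
              exact Finset.sum_congr rfl fun z _ => by rw [mul_assoc, hswap z]
          _ = μ (H t g0) * ∑ y : Fin n → Bool, K x y
                * (zeros (if f x ≤ f y then y else x) : ℝ≥0∞) := by
              congr 1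
              rw [Finset.sum_comm]
              refine Finset.sum_congr rfl fun y _ => ?_
              rw [Finset.sum_ite_eq Finset.univ (if f x ≤ f y then y else x)
                (fun z => K x y * (zeros z : ℝ≥0∞))]
              simp
          _ ≤ μ (H t g0) * (ρ * (zeros x : ℝ≥0∞)) := mul_le_mul_right (hstep x) _
    have reindex : V (t+1) = ∑ z : Fin n → Bool, ∑ g0 : Fin (t+1) → (Fin n → Bool),
        μ (H (t+1) (Fin.snoc g0 z)) * (zeros z : ℝ≥0∞) := by
      show (∑ g : Fin (t+2) → (Fin n → Bool),
        μ (H (t+1) g) * (zeros (g (Fin.last (t+1))) : ℝ≥0∞)) = _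
      rw [← Equiv.sum_comp (Fin.snocEquiv (fun _ => (Fin n → Bool)))
        (fun g : Fin (t+2) → (Fin n → Bool) =>
          μ (H (t+1) g) * (zeros (g (Fin.last (t+1))) : ℝ≥0∞)), Fintype.sum_prod_type]
      refine Finset.sum_congr rfl fun z _ => Finset.sum_congr rfl fun g0 _ => ?_
      have he : (Fin.snocEquiv (fun _ => (Fin n → Bool))) (z, g0) = Fin.snoc g0 z := by
        funext i
        simp [Fin.snocEquiv]
      rw [he, Fin.snoc_last]
    calc V (t+1) = ∑ z : Fin n → Bool, ∑ g0 : Fin (t+1) → (Fin n → Bool),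
          μ (H (t+1) (Fin.snoc g0 z)) * (zeros z : ℝ≥0∞) := reindex
      _ = ∑ g0 : Fin (t+1) → (Fin n → Bool), ∑ z : Fin n → Bool,
          μ (H (t+1) (Fin.snoc g0 z)) * (zeros z : ℝ≥0∞) := Finset.sum_comm
      _ ≤ ∑ g0 : Fin (t+1) → (Fin n → Bool),
          μ (H t g0) * (ρ * (zeros (g0 (Fin.last t)) : ℝ≥0∞)) :=
          Finset.sum_le_sum fun g0 _ => key g0
      _ = ρ * V t := by
          rw [Finset.mul_sum]
          exact Finset.sum_congr rfl fun g0 _ => by ring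
  have hVT : ∀ T : ℕ, V T ≤ ρ ^ T * (zeros x0 : ℝ≥0∞) := by
    intro T
    induction T with
    | zero => simpa using hV0
    | succ T ih =>
        calc V (T+1) ≤ ρ * V T := hVstep T
          _ ≤ ρ * (ρ ^ T * (zeros x0 : ℝ≥0∞)) := mul_le_mul_right ih _
          _ = ρ ^ (T+1) * (zeros x0 : ℝ≥0∞) := by rw [pow_succ]; ring
  intro T
  have hcover : {ω | X T ω ≠ fun _ => true}
      ⊆ ⋃ g ∈ Finset.univ.filter
          (fun g : Fin (T+1) → (Fin n → Bool) => g (Fin.last T) ≠ fun _ => true),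
        H T g := by
    intro ω hω
    simp only [Set.mem_iUnion, exists_prop]
    refine ⟨fun u => X u ω, ?_, fun u => rfl⟩
    rw [Finset.mem_filter]
    refine ⟨Finset.mem_univ _, ?_⟩
    simpa [Fin.val_last] using hω
  calc μ {ω | X T ω ≠ fun _ => true}
      ≤ ∑ g ∈ Finset.univ.filter
          (fun g : Fin (T+1) → (Fin n → Bool) => g (Fin.last T) ≠ fun _ => true),
        μ (H T g) :=
        (measure_mono hcover).trans (measure_biUnion_finset_le _ _)
    _ ≤ ∑ g ∈ Finset.univ.filter
          (fun g : Fin (T+1) → (Fin n → Bool) => g (Fin.last T) ≠ fun _ => true),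
        μ (H T g) * (zeros (g (Fin.last T)) : ℝ≥0∞) := by
        refine Finset.sum_le_sum fun g hg => ?_
        have hne : g (Fin.last T) ≠ fun _ => true := (Finset.mem_filter.mp hg).2
        have h1 : 1 ≤ zeros (g (Fin.last T)) :=
          Nat.pos_of_ne_zero fun h0 => hne ((zeros_eq_zero_iff _).mp h0)
        exact le_mul_of_one_le_right zero_le (by exact_mod_cast h1)
    _ ≤ V T := Finset.sum_le_sum_of_subset (Finset.subset_univ _)
    _ ≤ ρ ^ T * (zeros x0 : ℝ≥0∞) := hVT T

lemma num_bound (n : ℕ) (hn : 1 ≤ n) (ε : ℝ) (hε0 : 0 < ε) (hε1 : ε ≤ 1) :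
    ENNReal.ofReal (1 - ε / n) ^ ⌈2 / ε * (n:ℝ) * Real.log n⌉₊ * (n : ℝ≥0∞)
      ≤ ENNReal.ofReal ((n:ℝ)⁻¹) := by
  set T := ⌈2 / ε * (n:ℝ) * Real.log n⌉₊ with hT
  have hn' : (1:ℝ) ≤ n := by exact_mod_cast hn
  have hn0 : (0:ℝ) < n := by linarith
  have ha0 : (0:ℝ) ≤ 1 - ε / n := by
    have : ε / n ≤ 1 := by rw [div_le_one hn0]; linarith
    linarith
  have hreal : (1 - ε / n) ^ T * (n:ℝ) ≤ (n:ℝ)⁻¹ := by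
    have hexp : 1 - ε / n ≤ Real.exp (-(ε / n)) := by
      have := Real.add_one_le_exp (-(ε / n)); linarith
    have h2 : (1 - ε / n) ^ T ≤ Real.exp (-(ε / n)) ^ T := pow_le_pow_left₀ ha0 hexp T
    have h3 : Real.exp (-(ε / n)) ^ T = Real.exp ((T:ℝ) * (-(ε / n))) := by
      rw [← Real.exp_nat_mul]
    have h4 : Real.exp ((T:ℝ) * (-(ε / n))) ≤ Real.exp (-(2 * Real.log n)) := by
      apply Real.exp_le_exp.mpr
      have hceil : 2 / ε * (n:ℝ) * Real.log n ≤ (T:ℝ) := Nat.le_ceil _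
      have hlog : 0 ≤ Real.log n := Real.log_nonneg hn'
      have hkey : 2 * Real.log n ≤ (T:ℝ) * (ε / n) := by
        have h5 : 2 / ε * (n:ℝ) * Real.log n * (ε / n) = 2 * Real.log n := by
          field_simp
        calc 2 * Real.log n = 2 / ε * (n:ℝ) * Real.log n * (ε / n) := h5.symm
          _ ≤ (T:ℝ) * (ε / n) := mul_le_mul_of_nonneg_right hceil (by positivity)
      rw [mul_neg]
      exact neg_le_neg hkey
    have h6 : Real.exp (-(2 * Real.log n)) = ((n:ℝ)^2)⁻¹ := by
      rw [Real.exp_neg]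
      congr 1
      rw [show (2:ℝ) * Real.log n = ((2:ℕ):ℝ) * Real.log n by norm_num,
        Real.exp_nat_mul, Real.exp_log hn0]
    calc (1 - ε / n) ^ T * (n:ℝ) ≤ Real.exp (-(2 * Real.log n)) * n := by
          apply mul_le_mul_of_nonneg_right _ (le_of_lt hn0)
          exact h2.trans (h3 ▸ h4)
      _ = ((n:ℝ)^2)⁻¹ * n := by rw [h6]
      _ = (n:ℝ)⁻¹ := by
          rw [sq, mul_inv, mul_assoc, inv_mul_cancel₀ hn0.ne', mul_one]
  calc ENNReal.ofReal (1 - ε / n) ^ T * (n : ℝ≥0∞)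
      = ENNReal.ofReal ((1 - ε / n) ^ T * (n:ℝ)) := by
        rw [ENNReal.ofReal_mul (pow_nonneg ha0 T), ENNReal.ofReal_pow ha0,
          ENNReal.ofReal_natCast]
    _ ≤ ENNReal.ofReal ((n:ℝ)⁻¹) := ENNReal.ofReal_le_ofReal hreal
/-- **Generic easiness proof.**  Suppose the offspring kernels `K` satisfy, for
all `n` and all parents `x`: (1) `E[s₁₀ | s₀₁ > 0] ≤ 1 − δ` (stated in the
product form `E[s₁₀·1_{s₀₁>0}] ≤ (1−δ)·Pr[s₀₁ > 0]`), and
(2) `Pr[s₀₁ > 0] ≥ C·(n − OM(x))/n`.  Then there is a constant `C' > 0` such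
that for every sequence of strictly monotone functions, the elitist
(accept iff `f y ≥ f x`) process started at an arbitrary point reaches the
all-ones string within `C'·n·ln n` rounds with probability tending to `1`. -/
theorem stmt4
    (δ C : ℝ) (hδ : 0 < δ) (hC : 0 < C)
    (K : ∀ n : ℕ, (Fin n → Bool) → PMF (Fin n → Bool))
    (h1 : ∀ (n : ℕ) (x : Fin n → Bool),
      (∑ y : Fin n → Bool, if 0 < s01 x y then K n x y else 0) ≠ 0 →
      (∑ y : Fin n → Bool, if 0 < s01 x y then K n x y * (s10 x y : ℝ≥0∞) else 0)
        ≤ ENNReal.ofReal (1 - δ)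
          * ∑ y : Fin n → Bool, if 0 < s01 x y then K n x y else 0)
    (h2 : ∀ (n : ℕ) (x : Fin n → Bool),
      ENNReal.ofReal (C * ((n : ℝ) - (onesCount x : ℝ)) / (n : ℝ))
        ≤ ∑ y : Fin n → Bool, if 0 < s01 x y then K n x y else 0) :
    ∃ C' : ℝ, 0 < C' ∧
      ∀ (f : ∀ n : ℕ, (Fin n → Bool) → ℝ), (∀ n, StrictMonoBool (f n)) →
      ∀ (x0 : ∀ n : ℕ, Fin n → Bool),
      ∀ (Ω : ℕ → Type) [∀ n, MeasurableSpace (Ω n)] (μ : ∀ n, Measure (Ω n)),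
        (∀ n, IsProbabilityMeasure (μ n)) →
      ∀ (X : ∀ n : ℕ, ℕ → Ω n → (Fin n → Bool)),
        (∀ n ω, X n 0 ω = x0 n) →
        (∀ (n t : ℕ) (h : ℕ → (Fin n → Bool)),
          μ n {ω | ∀ u ≤ t, X n u ω = h u} ≠ 0 →
          ∀ z : Fin n → Bool,
            ((μ n)[|{ω | ∀ u ≤ t, X n u ω = h u}]) {ω | X n (t + 1) ω = z}
              = ∑ y : Fin n → Bool,
                  if (if f n (h t) ≤ f n y then y else h t) = z then K n (h t) y else 0) →
        Tendsto
          (fun n => μ n {ω | ∃ t ≤ ⌈C' * (n : ℝ) * Real.log (n : ℝ)⌉₊,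
            X n t ω = fun _ => true})
          atTop (𝓝 (1 : ℝ≥0∞)) := by


  classical
  have hδ'0 : 0 < min δ 1 := lt_min hδ one_pos
  have hδ'1 : min δ 1 ≤ 1 := min_le_right _ _
  have hC''0 : 0 < min C 1 := lt_min hC one_pos
  have hC''1 : min C 1 ≤ 1 := min_le_right _ _
  set ε : ℝ := min δ 1 * min C 1 with hεdef
  have hε0 : 0 < ε := mul_pos hδ'0 hC''0
  have hε1 : ε ≤ 1 := by
    have h := mul_le_mul hδ'1 hC''1 hC''0.le zero_le_one
    simpa using h
  refine ⟨2 / ε, by positivity, ?_⟩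
  intro f hf x0 Ω _inst μ hμ X hX0 hM
  have hfail : ∀ n : ℕ, 1 ≤ n →
      μ n {ω | X n (⌈2 / ε * (n:ℝ) * Real.log (n:ℝ)⌉₊) ω ≠ fun _ => true}
        ≤ ENNReal.ofReal ((n:ℝ)⁻¹) := by
    intro n hn
    haveI := hμ n
    have hn0 : (0:ℝ) < n := by exact_mod_cast hn
    have hstep : ∀ x : Fin n → Bool,
        ∑ y : Fin n → Bool, K n x y * (zeros (if f n x ≤ f n y then y else x) : ℝ≥0∞)
          ≤ ENNReal.ofReal (1 - ε / n) * (zeros x : ℝ≥0∞) := by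
      intro x
      have h1' : (∑ y : Fin n → Bool, if 0 < s01 x y then K n x y else 0) ≠ 0 →
          (∑ y : Fin n → Bool, if 0 < s01 x y then K n x y * (s10 x y : ℝ≥0∞) else 0)
            ≤ ENNReal.ofReal (1 - min δ 1)
              * ∑ y : Fin n → Bool, if 0 < s01 x y then K n x y else 0 := by
        intro hA0
        refine (h1 n x hA0).trans (mul_le_mul_left ?_ _)
        apply ENNReal.ofReal_le_ofReal
        have := min_le_left δ 1
        linarith
      have h2' : ENNReal.ofReal (min C 1 * (zeros x : ℝ) / n)
          ≤ ∑ y : Fin n → Bool, if 0 < s01 x y then K n x y else 0 := by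
        refine le_trans (ENNReal.ofReal_le_ofReal ?_) (h2 n x)
        rw [zeros_cast]
        have hnn : (0:ℝ) ≤ (n:ℝ) - (onesCount x : ℝ) := by
          rw [← zeros_cast]
          exact Nat.cast_nonneg _
        gcongr
        exact min_le_left _ _
      have hres := step_bound hn hδ'0 hδ'1 hC''0 hC''1 (K n x) (f n) (hf n) x h1' h2'
      rw [hεdef]
      exact hres
    have htraj := traj_bound (ENNReal.ofReal (1 - ε / n)) (f n) (K n) hstep (x0 n)
      (Ω n) (μ n) (X n) (fun ω => hX0 n ω) (hM n) (⌈2 / ε * (n:ℝ) * Real.log (n:ℝ)⌉₊)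
    calc μ n {ω | X n (⌈2 / ε * (n:ℝ) * Real.log (n:ℝ)⌉₊) ω ≠ fun _ => true}
        ≤ ENNReal.ofReal (1 - ε / n) ^ (⌈2 / ε * (n:ℝ) * Real.log (n:ℝ)⌉₊)
            * (zeros (x0 n) : ℝ≥0∞) := htraj
      _ ≤ ENNReal.ofReal (1 - ε / n) ^ (⌈2 / ε * (n:ℝ) * Real.log (n:ℝ)⌉₊) * (n : ℝ≥0∞) :=
          mul_le_mul_right (by exact_mod_cast zeros_le (x0 n)) _
      _ ≤ ENNReal.ofReal ((n:ℝ)⁻¹) := num_bound n hn ε hε0 hε1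
  apply tendsto_of_tendsto_of_tendsto_of_le_of_le'
    (g := fun n : ℕ => 1 - ENNReal.ofReal ((n:ℝ)⁻¹)) (h := fun _ : ℕ => (1:ℝ≥0∞))
  · have l0 : Tendsto (fun n : ℕ => ENNReal.ofReal ((n:ℝ)⁻¹)) atTop (𝓝 0) := by
      have : Tendsto (fun n : ℕ => ((n:ℝ))⁻¹) atTop (𝓝 0) :=
        tendsto_inv_atTop_zero.comp tendsto_natCast_atTop_atTop
      have h := ENNReal.tendsto_ofReal (a := 0) this
      simpa using h
    have := ENNReal.Tendsto.sub (tendsto_const_nhds (x := (1:ℝ≥0∞))) l0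
      (Or.inl ENNReal.one_ne_top)
    simpa using this
  · exact tendsto_const_nhds
  · filter_upwards [eventually_ge_atTop 1] with n hn
    haveI := hμ n
    rw [tsub_le_iff_right]
    have hcover : (Set.univ : Set (Ω n))
        ⊆ {ω | ∃ t ≤ ⌈2 / ε * (n:ℝ) * Real.log (n:ℝ)⌉₊, X n t ω = fun _ => true}
          ∪ {ω | X n (⌈2 / ε * (n:ℝ) * Real.log (n:ℝ)⌉₊) ω ≠ fun _ => true} := by
      intro ω _
      by_cases hs : ∃ t ≤ ⌈2 / ε * (n:ℝ) * Real.log (n:ℝ)⌉₊, X n t ω = fun _ => true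
      · exact Or.inl hs
      · push_neg at hs
        exact Or.inr (hs _ le_rfl)
    calc (1:ℝ≥0∞) = μ n Set.univ := measure_univ.symm
      _ ≤ μ n ({ω | ∃ t ≤ ⌈2 / ε * (n:ℝ) * Real.log (n:ℝ)⌉₊, X n t ω = fun _ => true}
            ∪ {ω | X n (⌈2 / ε * (n:ℝ) * Real.log (n:ℝ)⌉₊) ω ≠ fun _ => true}) :=
          measure_mono hcover
      _ ≤ μ n {ω | ∃ t ≤ ⌈2 / ε * (n:ℝ) * Real.log (n:ℝ)⌉₊, X n t ω = fun _ => true}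
            + μ n {ω | X n (⌈2 / ε * (n:ℝ) * Real.log (n:ℝ)⌉₊) ω ≠ fun _ => true} :=
          measure_union_le _ _
      _ ≤ μ n {ω | ∃ t ≤ ⌈2 / ε * (n:ℝ) * Real.log (n:ℝ)⌉₊, X n t ω = fun _ => true}
            + ENNReal.ofReal ((n:ℝ)⁻¹) := add_le_add_right (hfail n hn) _
  · filter_upwards with n
    haveI := hμ n
    exact prob_le_one
end

section
/- (The (1+λ)-EA with c < 1 is fast on all monotone functions.) Fix constants δ ∈ (0,1), c ∈ (0, 1−δ], and λ ∈ ℕ. The (1+λ)-EA with mutation parameter c maintains a single search point x ∈ {0,1}^n, initialized uniformly at random; in each generation it creates λ offspring, each obtained independently from x by flipping every bit independently with probability c/n; letting y be a fittest offspring (ties broken uniformly at random), it replaces x by y if and only if f(y) ≥ f(x). Then there exists a constant C > 0 such that, for every sequence (f_n) of strictly monotone functions f_n : {0,1}^n → ℝ, the probability that the (1+λ)-EA run on f_n reaches the all-ones string within C·n·ln n generations tends to 1 as n → ∞. -/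
open MeasureTheory ProbabilityTheory Filter Topology
open scoped ENNReal

attribute [local instance] Classical.propDecidable

/-- Standard bit mutation with rate `c/n`: probability that mutating `x`
produces `y` (each bit flipped independently with probability `c/n`). -/
noncomputable def mutP (c : ℝ) (n : ℕ) (x y : Fin n → Bool) : ℝ≥0∞ :=
  ENNReal.ofReal (∏ i, if y i = x i then 1 - c / n else c / n)

/-- One-generation transition probability of the (1+λ)-EA on `f` from `x` to
`z`: create `lam` independent standard-bit-mutation offspring, pick a fittest
one uniformly at random among the ties, and accept it iff its `f`-value is at
least `f x`. -/
noncomputable def stepP (n lam : ℕ) (c : ℝ) (f : (Fin n → Bool) → ℝ)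
    (x z : Fin n → Bool) : ℝ≥0∞ :=
  ∑ ys : Fin lam → (Fin n → Bool),
    (∏ j, mutP c n x (ys j)) *
      (((Finset.univ.filter fun j : Fin lam =>
            (∀ k, f (ys k) ≤ f (ys j)) ∧ (if f x ≤ f (ys j) then ys j else x) = z).card
          : ℝ≥0∞)
        / ((Finset.univ.filter fun j : Fin lam => ∀ k, f (ys k) ≤ f (ys j)).card : ℝ≥0∞))

namespace EA

variable {n lam : ℕ}

/-- number of zeros -/
def Zc (x : Fin n → Bool) : ℕ := (Finset.univ.filter fun i => x i = false).card

noncomputable def mutR (c : ℝ) (n : ℕ) (x y : Fin n → Bool) : ℝ :=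
  ∏ i, if y i = x i then 1 - c / n else c / n

noncomputable def W (c : ℝ) (x : Fin n → Bool) (ys : Fin lam → Fin n → Bool) : ℝ :=
  ∏ j, mutR c n x (ys j)

noncomputable def Amax (f : (Fin n → Bool) → ℝ) (ys : Fin lam → Fin n → Bool) : Finset (Fin lam) :=
  Finset.univ.filter fun j => ∀ k, f (ys k) ≤ f (ys j)

noncomputable def stepR (n lam : ℕ) (c : ℝ) (f : (Fin n → Bool) → ℝ)
    (x z : Fin n → Bool) : ℝ :=
  ∑ ys : Fin lam → (Fin n → Bool),
    (W c x ys) *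
      (((Finset.univ.filter fun j : Fin lam =>
            (∀ k, f (ys k) ≤ f (ys j)) ∧ (if f x ≤ f (ys j) then ys j else x) = z).card
          : ℝ)
        / ((Amax f ys).card : ℝ))

section Basic

variable (c : ℝ) (x : Fin n → Bool)

lemma mutR_nonneg (h0 : 0 ≤ c / n) (h1 : c / n ≤ 1) (y : Fin n → Bool) :
    0 ≤ mutR c n x y := by
  apply Finset.prod_nonneg
  intro i _
  by_cases h : y i = x i <;> simp [h] <;> linarith

lemma mutR_sum : (∑ y : Fin n → Bool, mutR c n x y) = 1 := by
  have key := Finset.prod_univ_sum (fun _ : Fin n => (Finset.univ : Finset Bool))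
    (fun i b => if b = x i then 1 - c/(n:ℝ) else c/n)
  rw [Fintype.piFinset_univ] at key
  have h2 : (∑ y : Fin n → Bool, mutR c n x y)
      = ∑ y : Fin n → Bool, ∏ i, (fun i (b : Bool) => if b = x i then 1 - c/(n:ℝ) else c/n) i (y i) := rfl
  rw [h2, ← key]
  have : ∀ i : Fin n, (∑ b : Bool, if b = x i then 1 - c/(n:ℝ) else c/n) = 1 := by
    intro i; cases hxi : x i <;> simp [Fintype.sum_bool, hxi] <;> ring
  simp only [this, Finset.prod_const_one]

lemma W_nonneg (h0 : 0 ≤ c / n) (h1 : c / n ≤ 1) (ys : Fin lam → Fin n → Bool) :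
    0 ≤ W c x ys :=
  Finset.prod_nonneg fun j _ => mutR_nonneg c x h0 h1 (ys j)

lemma W_sum : (∑ ys : Fin lam → Fin n → Bool, W c x ys) = 1 := by
  have key := Finset.prod_univ_sum (fun _ : Fin lam => (Finset.univ : Finset (Fin n → Bool)))
    (fun _ y => mutR c n x y)
  rw [Fintype.piFinset_univ] at key
  have h2 : (∑ ys : Fin lam → Fin n → Bool, W c x ys)
      = ∑ ys : Fin lam → Fin n → Bool, ∏ j, (fun (_ : Fin lam) y => mutR c n x y) j (ys j) := rfl
  rw [h2, ← key]
  simp [mutR_sum c x]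

lemma Amax_nonempty (f : (Fin n → Bool) → ℝ) (hlam : 0 < lam) (ys : Fin lam → Fin n → Bool) :
    (Amax f ys).Nonempty := by
  have hne : (Finset.univ : Finset (Fin lam)).Nonempty := by
    simpa [Finset.univ_nonempty_iff] using Fin.pos_iff_nonempty.mp hlam
  obtain ⟨j, _, hj⟩ := Finset.exists_max_image Finset.univ (fun j => f (ys j)) hne
  exact ⟨j, by simp [Amax]; intro k; exact hj k (Finset.mem_univ k)⟩

end Basic


section Drift

variable (f : (Fin n → Bool) → ℝ) (x : Fin n → Bool)

/-- selection weight of offspring `j` -/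
noncomputable def wjr (f : (Fin n → Bool) → ℝ) (ys : Fin lam → Fin n → Bool) (j : Fin lam) : ℝ :=
  if (∀ k, f (ys k) ≤ f (ys j)) then ((Amax f ys).card : ℝ)⁻¹ else 0

def Sc (x y : Fin n → Bool) : ℕ := (Finset.univ.filter fun i => x i = false ∧ y i = true).card
def Tc (x y : Fin n → Bool) : ℕ := (Finset.univ.filter fun i => x i = true ∧ y i = false).card

noncomputable def gw (f : (Fin n → Bool) → ℝ) (x : Fin n → Bool)
    (ys : Fin lam → Fin n → Bool) (j : Fin lam) : ℝ :=
  wjr f ys j * (if f x ≤ f (ys j) then 1 else 0) * (if 1 ≤ Sc x (ys j) then 1 else 0)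

lemma wjr_nonneg (ys : Fin lam → Fin n → Bool) (j : Fin lam) : 0 ≤ wjr f ys j := by
  unfold wjr; split <;> positivity

lemma gw_nonneg (ys : Fin lam → Fin n → Bool) (j : Fin lam) : 0 ≤ gw f x ys j := by
  unfold gw
  have := wjr_nonneg f ys j
  split <;> split <;> simp <;> positivity

lemma ZTS (y : Fin n → Bool) : Zc y + Sc x y = Zc x + Tc x y := by
  unfold Zc Sc Tc
  rw [Finset.card_filter, Finset.card_filter, Finset.card_filter, Finset.card_filter,
    ← Finset.sum_add_distrib, ← Finset.sum_add_distrib]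
  apply Finset.sum_congr rfl
  intro i _
  cases hx : x i <;> cases hy : y i <;> simp [hx, hy]

lemma ZTS_real (y : Fin n → Bool) : (Zc y : ℝ) = (Zc x : ℝ) + Tc x y - Sc x y := by
  have := ZTS x y
  have : ((Zc y + Sc x y : ℕ) : ℝ) = ((Zc x + Tc x y : ℕ) : ℝ) := by rw [this]
  push_cast at this
  linarith

lemma eq_of_acc_S0 (hf : StrictMonoBool f) (y : Fin n → Bool)
    (hacc : f x ≤ f y) (hS : Sc x y = 0) : y = x := by
  have hmem : ∀ i, ¬(x i = false ∧ y i = true) := by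
    intro i
    have := Finset.card_eq_zero.mp hS
    intro hi
    have : i ∈ (Finset.univ.filter fun i => x i = false ∧ y i = true) := by
      simp [hi.1, hi.2]
    rw [Finset.card_eq_zero.mp hS] at this
    exact absurd this (Finset.notMem_empty i)
  by_contra hne
  have hle : ∀ i, y i ≤ x i := by
    intro i
    cases hx : x i
    · cases hy : y i
      · simp
      · exact absurd ⟨hx, hy⟩ (hmem i)
    · simp [Bool.le_true]
  exact absurd hacc (not_le.mpr (hf x y (Ne.symm hne) hle))

lemma Tc_self : Tc x x = 0 := by
  unfold Tc
  rw [Finset.card_eq_zero]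
  rw [Finset.filter_eq_empty_iff]
  intro i _
  rintro ⟨h1, h2⟩
  rw [h1] at h2
  exact absurd h2 (by simp)


/-- flip bit `i` of offspring `j` to `true` -/
def flipT (j : Fin lam) (i : Fin n) (ys : Fin lam → Fin n → Bool) :
    Fin lam → Fin n → Bool :=
  Function.update ys j (Function.update (ys j) i true)

lemma flipT_apply_ne (j : Fin lam) (i : Fin n) (ys : Fin lam → Fin n → Bool)
    (m : Fin lam) (hm : m ≠ j) : flipT j i ys m = ys m :=
  Function.update_of_ne hm _ _

lemma flipT_apply (j : Fin lam) (i : Fin n) (ys : Fin lam → Fin n → Bool) :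
    flipT j i ys j = Function.update (ys j) i true :=
  Function.update_self _ _ _

lemma mutR_update (c : ℝ) (x y : Fin n → Bool) (i : Fin n)
    (hxi : x i = true) (hyi : y i = false) :
    mutR c n x y * (1 - c/n) = mutR c n x (Function.update y i true) * (c/n) := by
  unfold mutR
  rw [← Finset.mul_prod_erase Finset.univ _ (Finset.mem_univ i)]
  rw [← Finset.mul_prod_erase Finset.univ
    (fun i' => if Function.update y i true i' = x i' then 1 - c/(n:ℝ) else c/n) (Finset.mem_univ i)]
  have h1 : (if y i = x i then 1 - c/(n:ℝ) else c/n) = c/n := by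
    rw [hxi, hyi]; simp
  have h2 : (if Function.update y i true i = x i then 1 - c/(n:ℝ) else c/n) = 1 - c/n := by
    rw [Function.update_self, hxi]; simp
  have h3 : ∀ i' ∈ Finset.univ.erase i,
      (if Function.update y i true i' = x i' then 1 - c/(n:ℝ) else c/n)
        = (if y i' = x i' then 1 - c/(n:ℝ) else c/n) := by
    intro i' hi'
    rw [Function.update_of_ne (Finset.mem_erase.mp hi').1]
  rw [Finset.prod_congr rfl h3, h1, h2]
  ring

lemma W_flip (c : ℝ) (x : Fin n → Bool) (j : Fin lam) (i : Fin n)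
    (ys : Fin lam → Fin n → Bool) (hxi : x i = true) (hyi : ys j i = false) :
    W c x ys * (1 - c/n) = W c x (flipT j i ys) * (c/n) := by
  unfold W
  rw [← Finset.mul_prod_erase Finset.univ _ (Finset.mem_univ j)]
  rw [← Finset.mul_prod_erase Finset.univ (fun m => mutR c n x (flipT j i ys m)) (Finset.mem_univ j)]
  have h3 : ∀ m ∈ Finset.univ.erase j, mutR c n x (flipT j i ys m) = mutR c n x (ys m) := by
    intro m hm
    rw [flipT_apply_ne j i ys m (Finset.mem_erase.mp hm).1]
  rw [Finset.prod_congr rfl h3, flipT_apply]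
  have := mutR_update c x (ys j) i hxi hyi
  linear_combination (∏ m ∈ Finset.univ.erase j, mutR c n x (ys m)) * this


lemma Sc_update (x y : Fin n → Bool) (i : Fin n) (hxi : x i = true) :
    Sc x (Function.update y i true) = Sc x y := by
  unfold Sc
  congr 1
  apply Finset.filter_congr
  intro i' _
  by_cases hii : i' = i
  · subst hii; simp [hxi]
  · rw [Function.update_of_ne hii]

lemma f_flip_lt (hf : StrictMonoBool f) (y : Fin n → Bool) (i : Fin n)
    (hyi : y i = false) : f y < f (Function.update y i true) := by
  apply hf
  · intro h
    have := congrFun h i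
    rw [Function.update_self, hyi] at this
    exact absurd this (by simp)
  · intro i'
    by_cases hii : i' = i
    · subst hii; rw [Function.update_self, hyi]; simp
    · rw [Function.update_of_ne hii]

lemma g_flip_mono (hf : StrictMonoBool f) (j : Fin lam) (i : Fin n)
    (ys : Fin lam → Fin n → Bool) (hxi : x i = true) (hyi : ys j i = false) :
    gw f x ys j ≤ gw f x (flipT j i ys) j := by
  set ys' := flipT j i ys with hys'
  have hfy : f (ys j) < f (ys' j) := by
    rw [hys', flipT_apply]
    exact f_flip_lt f hf (ys j) i hyi
  by_cases hA : ∀ k, f (ys k) ≤ f (ys j)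
  swap
  · have : wjr f ys j = 0 := by unfold wjr; rw [if_neg hA]
    unfold gw; rw [this]
    simp only [zero_mul, mul_zero]
    exact gw_nonneg f x ys' j
  by_cases hacc : f x ≤ f (ys j)
  swap
  · unfold gw; rw [if_neg hacc]
    simp only [zero_mul, mul_zero]
    exact gw_nonneg f x ys' j
  by_cases hS : 1 ≤ Sc x (ys j)
  swap
  · unfold gw; rw [if_neg hS]
    simp only [zero_mul, mul_zero]
    exact gw_nonneg f x ys' j
  -- main case
  have hA' : ∀ k, f (ys' k) ≤ f (ys' j) := by
    intro k
    by_cases hkj : k = j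
    · subst hkj; exact le_rfl
    · rw [hys', flipT_apply_ne j i ys k hkj]
      exact le_trans (hA k) (le_of_lt hfy)
  have hAm : Amax f ys' = {j} := by
    apply Finset.ext
    intro m
    simp only [Amax, Finset.mem_filter, Finset.mem_univ, true_and, Finset.mem_singleton]
    constructor
    · intro hm
      by_contra hmj
      have h1 : f (ys' j) ≤ f (ys' m) := hm j
      rw [hys', flipT_apply_ne j i ys m hmj] at h1
      have h2 : f (ys m) ≤ f (ys j) := hA m
      rw [← hys'] at h1
      exact absurd (lt_of_le_of_lt (le_trans h1 h2) hfy) (lt_irrefl _)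
    · intro hm; subst hm; exact hA'
  have hacc' : f x ≤ f (ys' j) := le_trans hacc (le_of_lt hfy)
  have hS' : 1 ≤ Sc x (ys' j) := by
    rw [hys', flipT_apply, Sc_update x (ys j) i hxi]
    exact hS
  have hAmem : j ∈ Amax f ys := by simp [Amax, hA]
  have hcard : 1 ≤ ((Amax f ys).card : ℝ) := by
    have : 0 < (Amax f ys).card := Finset.card_pos.mpr ⟨j, hAmem⟩
    exact_mod_cast this
  have hL : gw f x ys j = ((Amax f ys).card : ℝ)⁻¹ := by
    unfold gw wjr
    rw [if_pos hA, if_pos hacc, if_pos hS]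
    ring
  have hR : gw f x ys' j = 1 := by
    unfold gw wjr
    rw [if_pos hA', if_pos hacc', if_pos hS', hAm]
    simp
  rw [hL, hR]
  exact inv_le_one_of_one_le₀ hcard


lemma pair_bound (c : ℝ) (hp0 : 0 ≤ c/n) (hp1 : c/n < 1) (hf : StrictMonoBool f)
    (j : Fin lam) (i : Fin n) (hxi : x i = true) :
    ∑ ys : Fin lam → Fin n → Bool,
        W c x ys * gw f x ys j * (if ys j i = false then 1 else 0)
      ≤ (c/n) * ∑ ys : Fin lam → Fin n → Bool, W c x ys * gw f x ys j := by
  set p := c/n with hp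
  have hW0 : ∀ ys : Fin lam → Fin n → Bool, 0 ≤ W c x ys :=
    fun ys => W_nonneg c x hp0 (le_of_lt hp1) ys
  set F : (Fin lam → Fin n → Bool) → ℝ := fun ys => W c x ys * gw f x ys j with hF
  have hF0 : ∀ ys, 0 ≤ F ys := fun ys => mul_nonneg (hW0 ys) (gw_nonneg f x ys j)
  set s := (Finset.univ : Finset (Fin lam → Fin n → Bool))
  set A := ∑ ys ∈ s.filter (fun ys => ys j i = false), F ys with hA
  set B := ∑ ys ∈ s.filter (fun ys => ¬ ys j i = false), F ys with hB
  have hLHS : ∑ ys : Fin lam → Fin n → Bool, F ys * (if ys j i = false then 1 else 0) = A := by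
    rw [hA, Finset.sum_filter]
    apply Finset.sum_congr rfl
    intro ys _
    by_cases h : ys j i = false <;> simp [h]
  have hsplit : A + B = ∑ ys : Fin lam → Fin n → Bool, F ys :=
    Finset.sum_filter_add_sum_filter_not s _ F
  have hB0 : 0 ≤ B := Finset.sum_nonneg fun ys _ => hF0 ys
  have hA0 : 0 ≤ A := Finset.sum_nonneg fun ys _ => hF0 ys
  have hkey : A * (1 - p) ≤ B * p := by
    have h1 : A * (1 - p) = ∑ ys ∈ s.filter (fun ys => ys j i = false), F ys * (1 - p) := by
      rw [hA, Finset.sum_mul]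
    have h2 : ∀ ys ∈ s.filter (fun ys => ys j i = false),
        F ys * (1 - p) ≤ (F (flipT j i ys)) * p := by
      intro ys hys
      have hyi : ys j i = false := (Finset.mem_filter.mp hys).2
      have hWf := W_flip c x j i ys hxi hyi
      have hgm := g_flip_mono f x hf j i ys hxi hyi
      have hW0' : 0 ≤ W c x (flipT j i ys) * p := by
        have : W c x ys * (1-p) = W c x (flipT j i ys) * p := hWf
        nlinarith [hW0 ys]
      calc F ys * (1 - p) = (W c x ys * (1-p)) * gw f x ys j := by rw [hF]; ring
        _ = (W c x (flipT j i ys) * p) * gw f x ys j := by rw [hWf]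
        _ ≤ (W c x (flipT j i ys) * p) * gw f x (flipT j i ys) j :=
            mul_le_mul_of_nonneg_left hgm hW0'
        _ = F (flipT j i ys) * p := by rw [hF]; ring
    have h3 : ∑ ys ∈ s.filter (fun ys => ys j i = false), F (flipT j i ys) * p
        = ∑ ys ∈ s.filter (fun ys => ¬ ys j i = false), F ys * p := by
      apply Finset.sum_nbij' (fun ys => flipT j i ys)
        (fun ys => Function.update ys j (Function.update (ys j) i false))
      · intro ys hys
        simp only [s, Finset.mem_filter, Finset.mem_univ, true_and] at *
        rw [flipT_apply]
        simp [Function.update_self]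
      · intro ys hys
        simp only [s, Finset.mem_filter, Finset.mem_univ, true_and] at *
        simp [Function.update_self]
      · intro ys hys
        simp only [s, Finset.mem_filter, Finset.mem_univ, true_and] at hys
        unfold flipT
        rw [Function.update_self]
        funext m
        by_cases hm : m = j
        · subst hm
          rw [Function.update_self]
          funext i'
          by_cases hi : i' = i
          · subst hi; rw [Function.update_self, hys]
          · rw [Function.update_of_ne hi, Function.update_of_ne hi]
        · rw [Function.update_of_ne hm, Function.update_of_ne hm]
      · intro ys hys
        simp only [s, Finset.mem_filter, Finset.mem_univ, true_and] at hys
        push_neg at hys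
        unfold flipT
        rw [Function.update_self]
        funext m
        by_cases hm : m = j
        · subst hm
          rw [Function.update_self]
          funext i'
          by_cases hi : i' = i
          · subst hi; rw [Function.update_self]
            simpa using hys
          · rw [Function.update_of_ne hi, Function.update_of_ne hi]
        · rw [Function.update_of_ne hm, Function.update_of_ne hm]
      · intro ys hys; rfl
    rw [h1, hB, Finset.sum_mul]
    rw [← h3]
    exact Finset.sum_le_sum h2
  rw [hLHS]
  have : A * (1 - p) ≤ B * p := hkey
  have goal : A ≤ p * (A + B) := by nlinarith
  rw [← hsplit]
  linarith


lemma Tc_sum_real (y : Fin n → Bool) :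
    (Tc x y : ℝ) = ∑ i ∈ Finset.univ.filter (fun i => x i = true),
      (if y i = false then (1:ℝ) else 0) := by
  unfold Tc
  rw [Finset.card_filter]
  push_cast
  rw [Finset.sum_filter]
  apply Finset.sum_congr rfl
  intro i _
  by_cases h1 : x i = true <;> by_cases h2 : y i = false <;> simp [h1, h2]

lemma Dj_bound (c δ : ℝ) (hn : 0 < n) (hδ0 : 0 < δ) (hc : 0 < c) (hc' : c ≤ 1 - δ)
    (hf : StrictMonoBool f) (j : Fin lam) :
    ∑ ys : Fin lam → Fin n → Bool,
        W c x ys * (gw f x ys j * ((Tc x (ys j) : ℝ) - (Sc x (ys j) : ℝ)))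
      ≤ -δ * ∑ ys : Fin lam → Fin n → Bool, W c x ys * gw f x ys j := by
  have hn' : (0:ℝ) < n := by exact_mod_cast hn
  have hp0 : 0 ≤ c/n := by positivity
  have hp1 : c/n < 1 := by
    rw [div_lt_one hn']
    calc c ≤ 1 - δ := hc'
      _ < 1 := by linarith
      _ ≤ n := by exact_mod_cast hn
  have hW0 : ∀ ys : Fin lam → Fin n → Bool, 0 ≤ W c x ys :=
    fun ys => W_nonneg c x hp0 (le_of_lt hp1) ys
  set SS := ∑ ys : Fin lam → Fin n → Bool, W c x ys * gw f x ys j with hSS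
  have hSS0 : 0 ≤ SS :=
    Finset.sum_nonneg fun ys _ => mul_nonneg (hW0 ys) (gw_nonneg f x ys j)
  -- T part
  have hT : ∑ ys : Fin lam → Fin n → Bool, W c x ys * gw f x ys j * (Tc x (ys j) : ℝ)
      ≤ (1 - δ) * SS := by
    have e1 : ∀ ys : Fin lam → Fin n → Bool,
        W c x ys * gw f x ys j * (Tc x (ys j) : ℝ)
          = ∑ i ∈ Finset.univ.filter (fun i => x i = true),
              W c x ys * gw f x ys j * (if ys j i = false then (1:ℝ) else 0) := by
      intro ys
      rw [Tc_sum_real, Finset.mul_sum]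
    rw [Finset.sum_congr rfl (fun ys _ => e1 ys)]
    rw [Finset.sum_comm]
    have e2 : ∀ i ∈ Finset.univ.filter (fun i => x i = true),
        ∑ ys : Fin lam → Fin n → Bool,
          W c x ys * gw f x ys j * (if ys j i = false then (1:ℝ) else 0) ≤ (c/n) * SS := by
      intro i hi
      exact pair_bound f x c hp0 hp1 hf j i (by simpa using (Finset.mem_filter.mp hi).2)
    calc ∑ i ∈ Finset.univ.filter (fun i => x i = true), ∑ ys : Fin lam → Fin n → Bool,
          W c x ys * gw f x ys j * (if ys j i = false then (1:ℝ) else 0)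
        ≤ ∑ i ∈ Finset.univ.filter (fun i => x i = true), (c/n) * SS := Finset.sum_le_sum e2
      _ = ((Finset.univ.filter (fun i => x i = true)).card : ℝ) * ((c/n) * SS) := by
          rw [Finset.sum_const, nsmul_eq_mul]
      _ ≤ (n : ℝ) * ((c/n) * SS) := by
          apply mul_le_mul_of_nonneg_right
          · have := Finset.card_filter_le (Finset.univ : Finset (Fin n)) (fun i => x i = true)
            simp only [Finset.card_univ, Fintype.card_fin] at this
            exact_mod_cast this
          · positivity
      _ = c * SS := by field_simp
      _ ≤ (1 - δ) * SS := mul_le_mul_of_nonneg_right hc' hSS0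
  -- S part
  have hS : SS ≤ ∑ ys : Fin lam → Fin n → Bool, W c x ys * gw f x ys j * (Sc x (ys j) : ℝ) := by
    apply Finset.sum_le_sum
    intro ys _
    by_cases h : 1 ≤ Sc x (ys j)
    · have h1 : (1:ℝ) ≤ (Sc x (ys j) : ℝ) := by exact_mod_cast h
      have h2 : 0 ≤ W c x ys * gw f x ys j :=
        mul_nonneg (hW0 ys) (gw_nonneg f x ys j)
      nlinarith
    · have : gw f x ys j = 0 := by
        unfold gw; rw [if_neg h]; ring
      simp [this]
  have expand : ∑ ys : Fin lam → Fin n → Bool,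
      W c x ys * (gw f x ys j * ((Tc x (ys j) : ℝ) - (Sc x (ys j) : ℝ)))
      = (∑ ys : Fin lam → Fin n → Bool, W c x ys * gw f x ys j * (Tc x (ys j) : ℝ))
        - ∑ ys : Fin lam → Fin n → Bool, W c x ys * gw f x ys j * (Sc x (ys j) : ℝ) := by
    rw [← Finset.sum_sub_distrib]
    apply Finset.sum_congr rfl
    intro ys _
    ring
  rw [expand]
  linarith


lemma wjr_sum (hlam : 0 < lam) (ys : Fin lam → Fin n → Bool) :
    ∑ j, wjr f ys j = 1 := by
  unfold wjr
  rw [← Finset.sum_filter]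
  have : (Finset.univ.filter fun j => ∀ k, f (ys k) ≤ f (ys j)) = Amax f ys := rfl
  rw [this, Finset.sum_const, nsmul_eq_mul]
  have hne := Amax_nonempty f hlam ys
  have : ((Amax f ys).card : ℝ) ≠ 0 := by
    have := Finset.card_pos.mpr hne
    positivity
  field_simp

lemma point_decomp (hf : StrictMonoBool f) (ys : Fin lam → Fin n → Bool) (j : Fin lam) :
    wjr f ys j * ((Zc (if f x ≤ f (ys j) then ys j else x) : ℝ))
      = wjr f ys j * (Zc x : ℝ)
        + gw f x ys j * ((Tc x (ys j) : ℝ) - (Sc x (ys j) : ℝ)) := by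
  by_cases hacc : f x ≤ f (ys j)
  swap
  · rw [if_neg hacc]; unfold gw; rw [if_neg hacc]; ring
  rw [if_pos hacc, ZTS_real x (ys j)]
  by_cases hS : 1 ≤ Sc x (ys j)
  · unfold gw; rw [if_pos hacc, if_pos hS]; ring
  · have hS0 : Sc x (ys j) = 0 := by omega
    have hyx : ys j = x := eq_of_acc_S0 f x hf (ys j) hacc hS0
    unfold gw
    rw [if_pos hacc, if_neg hS, hS0, hyx, Tc_self]
    push_cast
    ring

lemma step_decomp (c : ℝ) (hlam : 0 < lam) (hf : StrictMonoBool f) :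
    ∑ z : Fin n → Bool, (Zc z : ℝ) * stepR n lam c f x z
      = (Zc x : ℝ) + ∑ j : Fin lam, ∑ ys : Fin lam → Fin n → Bool,
          W c x ys * (gw f x ys j * ((Tc x (ys j) : ℝ) - (Sc x (ys j) : ℝ))) := by
  have s1 : ∀ (ys : Fin lam → Fin n → Bool) (z : Fin n → Bool),
      (((Finset.univ.filter fun j : Fin lam =>
            (∀ k, f (ys k) ≤ f (ys j)) ∧ (if f x ≤ f (ys j) then ys j else x) = z).card : ℝ)
        / ((Amax f ys).card : ℝ))
      = ∑ j, wjr f ys j * (if (if f x ≤ f (ys j) then ys j else x) = z then 1 else 0) := by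
    intro ys z
    rw [Finset.card_filter]
    push_cast
    rw [Finset.sum_div]
    apply Finset.sum_congr rfl
    intro j _
    by_cases hA : ∀ k, f (ys k) ≤ f (ys j)
    · by_cases hz : (if f x ≤ f (ys j) then ys j else x) = z
      · simp [wjr, hA, hz, one_div]
      · simp [wjr, hA, hz]
    · simp [wjr, hA]
  have e0 : ∀ z : Fin n → Bool, (Zc z : ℝ) * stepR n lam c f x z
      = ∑ ys : Fin lam → Fin n → Bool, ∑ j : Fin lam,
          W c x ys * wjr f ys j
            * ((Zc z : ℝ) * (if (if f x ≤ f (ys j) then ys j else x) = z then 1 else 0)) := by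
    intro z
    unfold stepR
    rw [Finset.mul_sum]
    apply Finset.sum_congr rfl
    intro ys _
    rw [s1 ys z, Finset.mul_sum, Finset.mul_sum]
    apply Finset.sum_congr rfl
    intro j _
    ring
  rw [Finset.sum_congr rfl (fun z _ => e0 z)]
  rw [Finset.sum_comm]
  have e1 : ∀ ys : Fin lam → Fin n → Bool,
      ∑ z : Fin n → Bool, ∑ j : Fin lam,
          W c x ys * wjr f ys j
            * ((Zc z : ℝ) * (if (if f x ≤ f (ys j) then ys j else x) = z then 1 else 0))
      = ∑ j : Fin lam, W c x ys * (wjr f ys j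
          * (Zc (if f x ≤ f (ys j) then ys j else x) : ℝ)) := by
    intro ys
    rw [Finset.sum_comm]
    apply Finset.sum_congr rfl
    intro j _
    have : ∑ z : Fin n → Bool,
        W c x ys * wjr f ys j
          * ((Zc z : ℝ) * (if (if f x ≤ f (ys j) then ys j else x) = z then 1 else 0))
        = W c x ys * wjr f ys j * ∑ z : Fin n → Bool,
            (if (if f x ≤ f (ys j) then ys j else x) = z then (Zc z : ℝ) else 0) := by
      rw [Finset.mul_sum]
      apply Finset.sum_congr rfl
      intro z _
      by_cases hz : (if f x ≤ f (ys j) then ys j else x) = z <;> simp [hz] <;> ring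
    rw [this, Finset.sum_ite_eq]
    simp
    ring
  rw [Finset.sum_congr rfl (fun ys _ => e1 ys)]
  have e2 : ∀ ys : Fin lam → Fin n → Bool,
      ∑ j : Fin lam, W c x ys * (wjr f ys j
          * (Zc (if f x ≤ f (ys j) then ys j else x) : ℝ))
      = W c x ys * (Zc x : ℝ)
        + ∑ j : Fin lam, W c x ys
            * (gw f x ys j * ((Tc x (ys j) : ℝ) - (Sc x (ys j) : ℝ))) := by
    intro ys
    have : ∀ j : Fin lam, W c x ys * (wjr f ys j
          * (Zc (if f x ≤ f (ys j) then ys j else x) : ℝ))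
        = W c x ys * wjr f ys j * (Zc x : ℝ)
          + W c x ys * (gw f x ys j * ((Tc x (ys j) : ℝ) - (Sc x (ys j) : ℝ))) := by
      intro j
      have := point_decomp f x hf ys j
      calc W c x ys * (wjr f ys j * (Zc (if f x ≤ f (ys j) then ys j else x) : ℝ))
          = W c x ys * (wjr f ys j * (Zc x : ℝ)
              + gw f x ys j * ((Tc x (ys j) : ℝ) - (Sc x (ys j) : ℝ))) := by rw [this]
        _ = _ := by ring
    rw [Finset.sum_congr rfl (fun j _ => this j), Finset.sum_add_distrib]
    congr 1
    rw [← Finset.sum_mul, ← Finset.mul_sum, wjr_sum f hlam ys]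
    ring
  rw [Finset.sum_congr rfl (fun ys _ => e2 ys), Finset.sum_add_distrib]
  congr 1
  · rw [← Finset.sum_mul, W_sum]
    ring
  · exact Finset.sum_comm


lemma gw_sum_on_E (hlam : 0 < lam) (hf : StrictMonoBool f)
    (ys : Fin lam → Fin n → Bool)
    (hE1 : ∀ j i, x i = true → ys j i = true) (hE2 : ys ≠ fun _ => x) :
    ∑ j, gw f x ys j = 1 := by
  have hj0 : ∃ j0, ys j0 ≠ x := by
    by_contra h
    push_neg at h
    exact hE2 (funext h)
  obtain ⟨j0, hj0⟩ := hj0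
  have hdom : ∀ i, x i ≤ ys j0 i := by
    intro i
    cases hx : x i
    · simp
    · rw [hE1 j0 i hx]
  have hfx : f x < f (ys j0) := hf (ys j0) x hj0 hdom
  have key : ∀ j, (∀ k, f (ys k) ≤ f (ys j)) → (f x ≤ f (ys j) ∧ 1 ≤ Sc x (ys j)) := by
    intro j hA
    have hacc : f x ≤ f (ys j) := le_of_lt (lt_of_lt_of_le hfx (hA j0))
    refine ⟨hacc, ?_⟩
    by_contra hS
    have hS0 : Sc x (ys j) = 0 := by omega
    have hyx : ys j = x := by
      funext i
      cases hx : x i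
      · cases hy : ys j i
        · rfl
        · exfalso
          have hmem : i ∈ (Finset.univ.filter fun i => x i = false ∧ ys j i = true) := by
            simp [hx, hy]
          rw [Finset.card_eq_zero.mp hS0] at hmem
          exact absurd hmem (Finset.notMem_empty i)
      · exact hE1 j i hx
    have : f x < f (ys j) := lt_of_lt_of_le hfx (hA j0)
    rw [hyx] at this
    exact absurd this (lt_irrefl _)
  have heq : ∀ j, gw f x ys j = wjr f ys j := by
    intro j
    unfold gw wjr
    by_cases hA : ∀ k, f (ys k) ≤ f (ys j)
    · obtain ⟨h1, h2⟩ := key j hA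
      rw [if_pos h1, if_pos h2]
      ring
    · simp [hA]
  rw [Finset.sum_congr rfl (fun j _ => heq j)]
  exact wjr_sum f hlam ys

lemma sum_W_E (c : ℝ) :
    ∑ ys ∈ Finset.univ.filter (fun ys : Fin lam → Fin n → Bool =>
        (∀ j i, x i = true → ys j i = true) ∧ ys ≠ fun _ => x), W c x ys
      = ((1 - c/n) ^ (Finset.univ.filter fun i => x i = true).card) ^ lam
        - ((1 - c/n) ^ n) ^ lam := by
  set Y1 := Fintype.piFinset (fun i : Fin n =>
    if x i = true then ({true} : Finset Bool) else Finset.univ) with hY1def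
  set E1 := Fintype.piFinset (fun _ : Fin lam => Y1) with hE1def
  have hY1 : ∀ y : Fin n → Bool, y ∈ Y1 ↔ ∀ i, x i = true → y i = true := by
    intro y
    rw [hY1def, Fintype.mem_piFinset]
    constructor
    · intro h i hxi
      have := h i
      rw [if_pos hxi] at this
      simpa using this
    · intro h i
      by_cases hxi : x i = true
      · rw [if_pos hxi]
        simp [h i hxi]
      · rw [if_neg hxi]
        simp
  have hfilter : Finset.univ.filter (fun ys : Fin lam → Fin n → Bool =>
      (∀ j i, x i = true → ys j i = true) ∧ ys ≠ fun _ => x)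
      = E1.erase (fun _ => x) := by
    apply Finset.ext
    intro ys
    simp only [Finset.mem_filter, Finset.mem_univ, true_and, Finset.mem_erase,
      hE1def, Fintype.mem_piFinset]
    constructor
    · rintro ⟨h1, h2⟩
      exact ⟨h2, fun j => (hY1 (ys j)).mpr (h1 j)⟩
    · rintro ⟨h1, h2⟩
      exact ⟨fun j i => (hY1 (ys j)).mp (h2 j) i, h1⟩
  have hconstE1 : (fun _ => x) ∈ E1 := by
    rw [hE1def, Fintype.mem_piFinset]
    intro j
    exact (hY1 x).mpr (fun i h => h)
  have herase : ∑ ys ∈ E1.erase (fun _ => x), W c x ys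
      = (∑ ys ∈ E1, W c x ys) - W c x (fun _ : Fin lam => x) := by
    have := Finset.sum_erase_add E1 (W c x) hconstE1
    linarith
  rw [hfilter, herase]
  have hmain : ∑ ys ∈ E1, W c x ys
      = ((1 - c/n) ^ (Finset.univ.filter fun i => x i = true).card) ^ lam := by
    have key := Finset.prod_univ_sum (fun _ : Fin lam => Y1)
      (fun (_ : Fin lam) y => mutR c n x y)
    have h0 : (∑ ys ∈ E1, W c x ys)
        = ∑ ys ∈ E1, ∏ j, (fun (_ : Fin lam) y => mutR c n x y) j (ys j) := rfl
    rw [h0, hE1def, ← key, Finset.prod_const, Finset.card_univ, Fintype.card_fin]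
    congr 1
    have key2 := Finset.prod_univ_sum (fun i : Fin n =>
        if x i = true then ({true} : Finset Bool) else Finset.univ)
      (fun i (b : Bool) => if b = x i then 1 - c/(n:ℝ) else c/n)
    have h1 : (∑ y ∈ Y1, mutR c n x y)
        = ∑ y ∈ Y1, ∏ i, (fun i (b : Bool) => if b = x i then 1 - c/(n:ℝ) else c/n) i (y i) := rfl
    rw [h1, hY1def, ← key2]
    have h2 : ∀ i : Fin n,
        (∑ b ∈ (if x i = true then ({true} : Finset Bool) else Finset.univ),
          if b = x i then 1 - c/(n:ℝ) else c/n)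
        = if x i = true then 1 - c/(n:ℝ) else 1 := by
      intro i
      by_cases hxi : x i = true
      · rw [if_pos hxi, if_pos hxi, Finset.sum_singleton]
        simp [hxi]
      · rw [if_neg hxi, if_neg hxi]
        have hxf : x i = false := by simpa using hxi
        rw [Fintype.sum_bool]
        simp only [hxf]
        norm_num
    rw [Finset.prod_congr rfl (fun i _ => h2 i), Finset.prod_ite]
    simp [Finset.prod_const]
  have hconst : W c x (fun _ : Fin lam => x) = ((1 - c/n) ^ n) ^ lam := by
    unfold W mutR
    simp only [eq_self_iff_true, if_true]
    rw [Finset.prod_const, Finset.prod_const, Finset.card_univ, Finset.card_univ,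
      Fintype.card_fin, Fintype.card_fin]
  rw [hmain, hconst]

lemma O_add_Z (x : Fin n → Bool) :
    (Finset.univ.filter fun i => x i = true).card + Zc x = n := by
  unfold Zc
  have : (Finset.univ.filter fun i => x i = false)
      = (Finset.univ.filter fun i => ¬ x i = true) := by
    apply Finset.filter_congr
    intro i _
    simp
  rw [this]
  rw [Finset.card_filter_add_card_filter_not]
  simp

lemma numeric_bound (c δ : ℝ) (hn : 0 < n) (hδ0 : 0 < δ) (hδ1 : δ < 1) (hc : 0 < c)
    (hc' : c ≤ 1 - δ) (hlam : 0 < lam) (O k : ℕ) (hOk : O + k = n) :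
    δ ^ lam * ((k : ℝ) * (c/n)) / 2
      ≤ ((1 - c/n) ^ O) ^ lam - ((1 - c/n) ^ n) ^ lam := by
  have hn' : (0:ℝ) < n := by exact_mod_cast hn
  have hn1 : (1:ℝ) ≤ n := by exact_mod_cast hn
  set p := c/n with hp
  have hp0 : 0 < p := by positivity
  have hpc : p ≤ c := by
    rw [hp]
    calc c / n ≤ c / 1 := by
          apply div_le_div_of_nonneg_left hc.le one_pos hn1
      _ = c := div_one c
  have hp1δ : p ≤ 1 - δ := le_trans hpc hc'
  have h1p0 : 0 ≤ 1 - p := by linarith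
  have h1p1 : 1 - p ≤ 1 := by linarith
  have hnp : (n:ℝ) * p = c := by rw [hp]; field_simp
  have hBern : 1 - c ≤ (1-p)^n := by
    have := one_add_mul_le_pow (a := -p) (by linarith) n
    have h2 : 1 + (n:ℝ) * (-p) = 1 - c := by rw [mul_neg, hnp]; ring
    rw [h2] at this
    rw [← sub_eq_add_neg] at this
    exact this
  have hδn : δ ≤ (1-p)^n := by linarith
  have hkn : k ≤ n := by omega
  have hkp1 : (k:ℝ) * p ≤ 1 := by
    have : (k:ℝ) ≤ n := by exact_mod_cast hkn
    nlinarith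
  have hkp0 : 0 ≤ (k:ℝ) * p := by positivity
  have A1 : δ^lam ≤ ((1-p)^O)^lam := by
    calc δ^lam ≤ ((1-p)^n)^lam := pow_le_pow_left₀ hδ0.le hδn lam
      _ = (1-p)^(n*lam) := by rw [← pow_mul]
      _ ≤ (1-p)^(O*lam) := pow_le_pow_of_le_one h1p0 h1p1 (Nat.mul_le_mul_right lam (by omega))
      _ = ((1-p)^O)^lam := by rw [← pow_mul]
  have e1 : ((1-p)^k)^lam ≤ (1-p)^k := by
    rw [← pow_mul]
    exact pow_le_pow_of_le_one h1p0 h1p1 (Nat.le_mul_of_pos_right k hlam)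
  have e2 : (1-p)^k * (1 + (k:ℝ)*p) ≤ 1 := by
    have b1 : 1 + (k:ℝ)*p ≤ (1+p)^k := by
      have := one_add_mul_le_pow (a := p) (by linarith) k
      linarith [this]
    have b2 : (1-p)^k * (1+p)^k ≤ 1 := by
      rw [← mul_pow]
      have hpp : (1-p)*(1+p) = 1 - p^2 := by ring
      rw [hpp]
      apply pow_le_one₀ <;> nlinarith
    have hq0 : (0:ℝ) ≤ (1-p)^k := pow_nonneg h1p0 k
    nlinarith
  have e3 : (1-p)^k ≤ 1 - (k:ℝ)*p/2 := by
    nlinarith [e2, hkp1, hkp0, pow_nonneg h1p0 k]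
  have A2 : (k:ℝ)*p/2 ≤ 1 - ((1-p)^k)^lam := by linarith
  have hsplit : ((1-p)^n)^lam = ((1-p)^O)^lam * ((1-p)^k)^lam := by
    rw [← mul_pow, ← pow_add, hOk]
  have hX0 : 0 ≤ ((1-p)^O)^lam := by positivity
  calc δ^lam * ((k:ℝ)*p) / 2 = δ^lam * ((k:ℝ)*p/2) := by ring
    _ ≤ ((1-p)^O)^lam * (1 - ((1-p)^k)^lam) := by
        apply mul_le_mul A1 A2 (by positivity) hX0
    _ = ((1-p)^O)^lam - ((1-p)^n)^lam := by rw [hsplit]; ring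


theorem drift_real (c δ : ℝ) (hn : 0 < n) (hδ0 : 0 < δ) (hδ1 : δ < 1) (hc : 0 < c)
    (hc' : c ≤ 1 - δ) (hlam : 0 < lam) (hf : StrictMonoBool f) :
    ∑ z : Fin n → Bool, (Zc z : ℝ) * stepR n lam c f x z
      ≤ (1 - (δ^(lam+1) * c / 2)/(n:ℝ)) * (Zc x : ℝ) := by
  have hn' : (0:ℝ) < n := by exact_mod_cast hn
  have hp0 : 0 ≤ c/n := by positivity
  have hp1 : c/n ≤ 1 := by
    rw [div_le_one hn']
    calc c ≤ 1 - δ := hc'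
      _ ≤ 1 := by linarith
      _ ≤ n := by exact_mod_cast hn
  have hW0 : ∀ ys : Fin lam → Fin n → Bool, 0 ≤ W c x ys :=
    fun ys => W_nonneg c x hp0 hp1 ys
  rw [step_decomp f x c hlam hf]
  have h1 : ∑ j : Fin lam, ∑ ys : Fin lam → Fin n → Bool,
      W c x ys * (gw f x ys j * ((Tc x (ys j) : ℝ) - (Sc x (ys j) : ℝ)))
      ≤ -δ * ∑ j : Fin lam, ∑ ys : Fin lam → Fin n → Bool, W c x ys * gw f x ys j := by
    rw [Finset.mul_sum]
    apply Finset.sum_le_sum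
    intro j _
    exact Dj_bound f x c δ hn hδ0 hc hc' hf j
  have h2 : ∑ j : Fin lam, ∑ ys : Fin lam → Fin n → Bool, W c x ys * gw f x ys j
      = ∑ ys : Fin lam → Fin n → Bool, W c x ys * ∑ j : Fin lam, gw f x ys j := by
    rw [Finset.sum_comm]
    apply Finset.sum_congr rfl
    intro ys _
    rw [Finset.mul_sum]
  have h3 : ∑ ys ∈ Finset.univ.filter (fun ys : Fin lam → Fin n → Bool =>
        (∀ j i, x i = true → ys j i = true) ∧ ys ≠ fun _ => x), W c x ys
      ≤ ∑ ys : Fin lam → Fin n → Bool, W c x ys * ∑ j : Fin lam, gw f x ys j := by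
    have e1 : ∀ ys ∈ Finset.univ.filter (fun ys : Fin lam → Fin n → Bool =>
        (∀ j i, x i = true → ys j i = true) ∧ ys ≠ fun _ => x),
        W c x ys = W c x ys * ∑ j : Fin lam, gw f x ys j := by
      intro ys hys
      obtain ⟨hE1, hE2⟩ := (Finset.mem_filter.mp hys).2
      rw [gw_sum_on_E f x hlam hf ys hE1 hE2, mul_one]
    rw [Finset.sum_congr rfl e1]
    apply Finset.sum_le_sum_of_subset_of_nonneg (Finset.filter_subset _ _)
    intro ys _ _
    exact mul_nonneg (hW0 ys) (Finset.sum_nonneg fun j _ => gw_nonneg f x ys j)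
  have h4 := sum_W_E (lam := lam) x c
  have h5 := numeric_bound c δ hn hδ0 hδ1 hc hc' hlam
    (Finset.univ.filter fun i => x i = true).card (Zc x) (O_add_Z x)
  have h6 : δ^lam * ((Zc x : ℝ) * (c/n)) / 2
      ≤ ∑ ys : Fin lam → Fin n → Bool, W c x ys * ∑ j : Fin lam, gw f x ys j := by
    calc δ^lam * ((Zc x : ℝ) * (c/n)) / 2
        ≤ ((1 - c/n) ^ (Finset.univ.filter fun i => x i = true).card) ^ lam
          - ((1 - c/n) ^ n) ^ lam := h5
      _ = ∑ ys ∈ Finset.univ.filter (fun ys : Fin lam → Fin n → Bool =>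
            (∀ j i, x i = true → ys j i = true) ∧ ys ≠ fun _ => x), W c x ys := h4.symm
      _ ≤ _ := h3
  have h7 : -δ * ∑ ys : Fin lam → Fin n → Bool, W c x ys * ∑ j : Fin lam, gw f x ys j
      ≤ -δ * (δ^lam * ((Zc x : ℝ) * (c/n)) / 2) := by
    apply mul_le_mul_of_nonpos_left h6 (by linarith)
  have total : ∑ j : Fin lam, ∑ ys : Fin lam → Fin n → Bool,
      W c x ys * (gw f x ys j * ((Tc x (ys j) : ℝ) - (Sc x (ys j) : ℝ)))
      ≤ -δ * (δ^lam * ((Zc x : ℝ) * (c/n)) / 2) := by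
    rw [h2] at h1
    linarith
  have final : (Zc x : ℝ) + -δ * (δ^lam * ((Zc x : ℝ) * (c/n)) / 2)
      = (1 - (δ^(lam+1) * c / 2)/(n:ℝ)) * (Zc x : ℝ) := by
    rw [pow_succ]
    ring
  linarith

lemma stepR_nonneg (c : ℝ) (f : (Fin n → Bool) → ℝ) (x z : Fin n → Bool)
    (hp0 : 0 ≤ c/n) (hp1 : c/n ≤ 1) : 0 ≤ stepR n lam c f x z := by
  apply Finset.sum_nonneg
  intro ys _
  apply mul_nonneg (W_nonneg c x hp0 hp1 ys)
  positivity

lemma stepP_eq_ofReal (c : ℝ) (f : (Fin n → Bool) → ℝ) (x z : Fin n → Bool)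
    (hp0 : 0 ≤ c/n) (hp1 : c/n ≤ 1) :
    stepP n lam c f x z = ENNReal.ofReal (stepR n lam c f x z) := by
  unfold stepP stepR
  rw [ENNReal.ofReal_sum_of_nonneg]
  swap
  · intro ys _
    apply mul_nonneg (W_nonneg c x hp0 hp1 ys)
    positivity
  apply Finset.sum_congr rfl
  intro ys _
  rw [ENNReal.ofReal_mul (W_nonneg c x hp0 hp1 ys)]
  congr 1
  · have e : ∀ j : Fin lam, mutP c n x (ys j) = ENNReal.ofReal (mutR c n x (ys j)) :=
      fun _ => rfl
    rw [Finset.prod_congr rfl (fun j _ => e j), ← ENNReal.ofReal_prod_of_nonneg]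
    · rfl
    · intro j _
      exact mutR_nonneg c x hp0 hp1 (ys j)
  · set A := (Finset.univ.filter fun j : Fin lam =>
        (∀ k, f (ys k) ≤ f (ys j)) ∧ (if f x ≤ f (ys j) then ys j else x) = z).card
    set B := (Finset.univ.filter fun j : Fin lam => ∀ k, f (ys k) ≤ f (ys j)).card
    rw [show (Amax f ys).card = B from rfl]
    rcases Nat.eq_zero_or_pos B with hB | hB
    · have hA : A = 0 := by
        have hsub : (Finset.univ.filter fun j : Fin lam =>
            (∀ k, f (ys k) ≤ f (ys j)) ∧ (if f x ≤ f (ys j) then ys j else x) = z)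
            ⊆ (Finset.univ.filter fun j : Fin lam => ∀ k, f (ys k) ≤ f (ys j)) := by
          intro j hj
          simp only [Finset.mem_filter] at hj ⊢
          exact ⟨hj.1, hj.2.1⟩
        have := Finset.card_le_card hsub
        omega
      rw [hA, hB]
      simp
    · have hB' : (0:ℝ) < B := by exact_mod_cast hB
      rw [ENNReal.ofReal_div_of_pos hB', ENNReal.ofReal_natCast, ENNReal.ofReal_natCast]

theorem drift_ennreal (c δ : ℝ) (hn : 0 < n) (hδ0 : 0 < δ) (hδ1 : δ < 1) (hc : 0 < c)
    (hc' : c ≤ 1 - δ) (hlam : 0 < lam) (hf : StrictMonoBool f) :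
    ∑ z : Fin n → Bool, (Zc z : ℝ≥0∞) * stepP n lam c f x z
      ≤ ENNReal.ofReal (1 - (δ^(lam+1) * c / 2)/(n:ℝ)) * (Zc x : ℝ≥0∞) := by
  have hn' : (0:ℝ) < n := by exact_mod_cast hn
  have hp0 : 0 ≤ c/n := by positivity
  have hp1 : c/n ≤ 1 := by
    rw [div_le_one hn']
    calc c ≤ 1 - δ := hc'
      _ ≤ 1 := by linarith
      _ ≤ n := by exact_mod_cast hn
  have key : ∑ z : Fin n → Bool, (Zc z : ℝ≥0∞) * stepP n lam c f x z
      = ENNReal.ofReal (∑ z : Fin n → Bool, (Zc z : ℝ) * stepR n lam c f x z) := by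
    rw [ENNReal.ofReal_sum_of_nonneg]
    swap
    · intro z _
      exact mul_nonneg (Nat.cast_nonneg _) (stepR_nonneg c f x z hp0 hp1)
    apply Finset.sum_congr rfl
    intro z _
    rw [ENNReal.ofReal_mul (Nat.cast_nonneg _), ENNReal.ofReal_natCast,
      stepP_eq_ofReal c f x z hp0 hp1]
  rw [key]
  calc ENNReal.ofReal (∑ z : Fin n → Bool, (Zc z : ℝ) * stepR n lam c f x z)
      ≤ ENNReal.ofReal ((1 - (δ^(lam+1) * c / 2)/(n:ℝ)) * (Zc x : ℝ)) :=
        ENNReal.ofReal_le_ofReal (drift_real f x c δ hn hδ0 hδ1 hc hc' hlam hf)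
    _ = ENNReal.ofReal (1 - (δ^(lam+1) * c / 2)/(n:ℝ)) * (Zc x : ℝ≥0∞) := by
        rw [ENNReal.ofReal_mul, ENNReal.ofReal_natCast]
        have hγ : δ^(lam+1) * c / 2 ≤ 1 := by
          have h1 : δ^(lam+1) ≤ 1 := pow_le_one₀ hδ0.le (by linarith)
          have h2 : c ≤ 1 := by linarith
          nlinarith
        have : δ^(lam+1) * c / 2 / (n:ℝ) ≤ 1 := by
          rw [div_le_one hn']
          calc δ^(lam+1) * c / 2 ≤ 1 := hγ
            _ ≤ n := by exact_mod_cast hn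
        linarith

end Drift


section Measure

variable {Ω : Type} [MeasurableSpace Ω]

def Cyl (X : ℕ → Ω → (Fin n → Bool)) (t : ℕ) (H : ℕ → (Fin n → Bool)) : Set Ω :=
  {ω | ∀ u ≤ t, X u ω = H u}

def extend {t : ℕ} (g : Fin t → Fin n → Bool) (x : Fin n → Bool) : ℕ → (Fin n → Bool) :=
  fun u => if h : u < t then g ⟨u, h⟩ else x

noncomputable def mAux (μ : Measure Ω) (X : ℕ → Ω → (Fin n → Bool)) (t : ℕ)
    (x : Fin n → Bool) : ℝ≥0∞ :=
  ∑ g : Fin t → Fin n → Bool, μ (Cyl X t (extend g x))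

lemma cyl_succ (X : ℕ → Ω → (Fin n → Bool)) (t : ℕ) (H : ℕ → (Fin n → Bool)) :
    Cyl X (t+1) H = Cyl X t H ∩ {ω | X (t+1) ω = H (t+1)} := by
  ext ω
  simp only [Cyl, Set.mem_setOf_eq, Set.mem_inter_iff]
  constructor
  · intro h
    exact ⟨fun u hu => h u (le_trans hu (Nat.le_succ t)), h (t+1) le_rfl⟩
  · rintro ⟨h1, h2⟩ u hu
    by_cases hut : u ≤ t
    · exact h1 u hut
    · have : u = t + 1 := by omega
      rw [this]
      exact h2

lemma cyl_congr (X : ℕ → Ω → (Fin n → Bool)) (t : ℕ) (H H' : ℕ → (Fin n → Bool))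
    (h : ∀ u ≤ t, H u = H' u) : Cyl X t H = Cyl X t H' := by
  ext ω
  simp only [Cyl, Set.mem_setOf_eq]
  constructor <;> intro hh u hu
  · rw [← h u hu]; exact hh u hu
  · rw [h u hu]; exact hh u hu

lemma restrict_ge (μ : Measure Ω) (s A : Set Ω) : μ (A ∩ s) ≤ μ.restrict s A := by
  rw [measure_eq_iInf (μ := μ.restrict s) A]
  apply le_iInf
  intro B
  apply le_iInf
  intro hAB
  apply le_iInf
  intro hB
  rw [Measure.restrict_apply hB]
  exact measure_mono (Set.inter_subset_inter_left s hAB)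

variable (lam : ℕ) (c : ℝ) (f : (Fin n → Bool) → ℝ)

lemma step_le (μ : Measure Ω) [IsProbabilityMeasure μ] (X : ℕ → Ω → (Fin n → Bool))
    (hcond : ∀ (t : ℕ) (h : ℕ → (Fin n → Bool)),
      μ {ω | ∀ u ≤ t, X u ω = h u} ≠ 0 →
      ∀ z : Fin n → Bool,
        (μ[|{ω | ∀ u ≤ t, X u ω = h u}]) {ω | X (t + 1) ω = z}
          = stepP n lam c f (h t) z)
    (hst : ∀ x z, stepP n lam c f x z ≠ ⊤)
    (t : ℕ) (H : ℕ → (Fin n → Bool)) :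
    μ (Cyl X (t+1) H) ≤ μ (Cyl X t H) * stepP n lam c f (H t) (H (t+1)) := by
  by_cases h0 : μ (Cyl X t H) = 0
  · have hle : μ (Cyl X (t+1) H) ≤ μ (Cyl X t H) := by
      apply measure_mono
      rw [cyl_succ]
      exact Set.inter_subset_left
    rw [h0] at hle
    rw [h0, zero_mul]
    exact hle
  · have hc' := hcond t H h0 (H (t+1))
    rw [ProbabilityTheory.cond, Measure.smul_apply, smul_eq_mul] at hc'
    rw [show {ω | ∀ u ≤ t, X u ω = H u} = Cyl X t H from rfl] at hc'
    have hs_ne_top : μ (Cyl X t H) ≠ ⊤ := measure_ne_top μ _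
    have hres : μ.restrict (Cyl X t H) {ω | X (t+1) ω = H (t+1)}
        = μ (Cyl X t H) * stepP n lam c f (H t) (H (t+1)) := by
      rw [← hc', ← mul_assoc, ENNReal.mul_inv_cancel h0 hs_ne_top, one_mul]
    rw [cyl_succ]
    calc μ (Cyl X t H ∩ {ω | X (t+1) ω = H (t+1)})
        = μ ({ω | X (t+1) ω = H (t+1)} ∩ Cyl X t H) := by rw [Set.inter_comm]
      _ ≤ μ.restrict (Cyl X t H) {ω | X (t+1) ω = H (t+1)} := restrict_ge μ _ _
      _ = _ := hres

lemma mAux_zero (μ : Measure Ω) (X : ℕ → Ω → (Fin n → Bool))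
    (hinit : ∀ x : Fin n → Bool, μ {ω | X 0 ω = x} = ((2 : ℝ≥0∞) ^ n)⁻¹)
    (x : Fin n → Bool) : mAux μ X 0 x = ((2 : ℝ≥0∞) ^ n)⁻¹ := by
  unfold mAux
  have hall : ∀ g : Fin 0 → Fin n → Bool, Cyl X 0 (extend g x) = {ω | X 0 ω = x} := by
    intro g
    ext ω
    simp only [Cyl, Set.mem_setOf_eq]
    constructor
    · intro h
      have := h 0 le_rfl
      rwa [show extend g x 0 = x from by unfold extend; simp] at this
    · intro h u hu
      have hu0 : u = 0 := by omega
      rw [hu0, show extend g x 0 = x from by unfold extend; simp]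
      exact h
  rw [Finset.sum_congr rfl (fun g _ => by rw [hall g])]
  rw [Finset.sum_const, Finset.card_univ]
  have hcard : Fintype.card (Fin 0 → Fin n → Bool) = 1 := by simp
  rw [hcard, one_smul, hinit]

lemma mAux_succ_le (μ : Measure Ω) [IsProbabilityMeasure μ] (X : ℕ → Ω → (Fin n → Bool))
    (hcond : ∀ (t : ℕ) (h : ℕ → (Fin n → Bool)),
      μ {ω | ∀ u ≤ t, X u ω = h u} ≠ 0 →
      ∀ z : Fin n → Bool,
        (μ[|{ω | ∀ u ≤ t, X u ω = h u}]) {ω | X (t + 1) ω = z}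
          = stepP n lam c f (h t) z)
    (hst : ∀ x z, stepP n lam c f x z ≠ ⊤)
    (t : ℕ) (z : Fin n → Bool) :
    mAux μ X (t+1) z ≤ ∑ x : Fin n → Bool, mAux μ X t x * stepP n lam c f x z := by
  have key : ∀ g' : Fin (t+1) → Fin n → Bool,
      μ (Cyl X (t+1) (extend g' z))
        ≤ μ (Cyl X t (extend (Fin.init g') (g' (Fin.last t))))
            * stepP n lam c f (g' (Fin.last t)) z := by
    intro g'
    have h1 := step_le lam c f μ X hcond hst t (extend g' z)
    have e1 : extend g' z (t+1) = z := by unfold extend; simp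
    have e2 : extend g' z t = g' (Fin.last t) := by
      unfold extend
      rw [dif_pos (Nat.lt_succ_self t)]
      rfl
    have e3 : Cyl X t (extend g' z) = Cyl X t (extend (Fin.init g') (g' (Fin.last t))) := by
      apply cyl_congr
      intro u hu
      unfold extend Fin.init
      by_cases hut : u < t
      · rw [dif_pos (by omega : u < t + 1), dif_pos hut]
        congr 1
      · have : u = t := by omega
        subst this
        rw [dif_pos (Nat.lt_succ_self u), dif_neg hut]
        rfl
    rw [e1, e2, e3] at h1
    exact h1
  calc mAux μ X (t+1) z
      ≤ ∑ g' : Fin (t+1) → Fin n → Bool,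
          μ (Cyl X t (extend (Fin.init g') (g' (Fin.last t))))
            * stepP n lam c f (g' (Fin.last t)) z :=
        Finset.sum_le_sum (fun g' _ => key g')
    _ = ∑ q : (Fin t → Fin n → Bool) × (Fin n → Bool),
          μ (Cyl X t (extend q.1 q.2)) * stepP n lam c f q.2 z := by
        apply Fintype.sum_equiv
          ⟨fun g' => (Fin.init g', g' (Fin.last t)), fun q => Fin.snoc q.1 q.2,
            fun g' => Fin.snoc_init_self g',
            fun q => by simp [Fin.init_snoc, Fin.snoc_last]⟩
        intro g'
        rfl
    _ = ∑ x : Fin n → Bool, mAux μ X t x * stepP n lam c f x z := by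
        rw [Fintype.sum_prod_type]
        rw [Finset.sum_comm]
        apply Finset.sum_congr rfl
        intro x _
        rw [mAux, Finset.sum_mul]

lemma marginal_le (μ : Measure Ω) (X : ℕ → Ω → (Fin n → Bool)) (t : ℕ) (x : Fin n → Bool) :
    μ {ω | X t ω = x} ≤ mAux μ X t x := by
  have hsub : {ω | X t ω = x} ⊆ ⋃ g ∈ (Finset.univ : Finset (Fin t → Fin n → Bool)),
      Cyl X t (extend g x) := by
    intro ω hω
    simp only [Set.mem_iUnion]
    refine ⟨fun u => X u.1 ω, Finset.mem_univ _, ?_⟩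
    intro u hu
    unfold extend
    by_cases hut : u < t
    · rw [dif_pos hut]
    · have : u = t := by omega
      subst this
      rw [dif_neg hut]
      exact hω
  calc μ {ω | X t ω = x} ≤ μ (⋃ g ∈ (Finset.univ : Finset (Fin t → Fin n → Bool)),
        Cyl X t (extend g x)) := measure_mono hsub
    _ ≤ ∑ g : Fin t → Fin n → Bool, μ (Cyl X t (extend g x)) :=
        measure_biUnion_finset_le _ _
    _ = mAux μ X t x := rfl

lemma total_ge (μ : Measure Ω) [IsProbabilityMeasure μ] (X : ℕ → Ω → (Fin n → Bool))
    (t : ℕ) : (1 : ℝ≥0∞) ≤ ∑ x : Fin n → Bool, μ {ω | X t ω = x} := by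
  have hsub : (Set.univ : Set Ω) ⊆ ⋃ x ∈ (Finset.univ : Finset (Fin n → Bool)),
      {ω | X t ω = x} := by
    intro ω _
    simp only [Set.mem_iUnion]
    exact ⟨X t ω, Finset.mem_univ _, rfl⟩
  calc (1 : ℝ≥0∞) = μ Set.univ := (measure_univ).symm
    _ ≤ μ (⋃ x ∈ (Finset.univ : Finset (Fin n → Bool)), {ω | X t ω = x}) := measure_mono hsub
    _ ≤ ∑ x : Fin n → Bool, μ {ω | X t ω = x} := measure_biUnion_finset_le _ _

end Measure


lemma Zc_pos (x : Fin n → Bool) (hx : x ≠ fun _ => true) : 1 ≤ Zc x := by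
  rw [Nat.one_le_iff_ne_zero]
  intro h0
  apply hx
  funext i
  by_contra hi
  have hif : x i = false := by simpa using hi
  have : i ∈ Finset.univ.filter fun i => x i = false := by simp [hif]
  rw [Finset.card_eq_zero.mp h0] at this
  exact absurd this (Finset.notMem_empty i)

lemma final_numeric (γ : ℝ) (hγ0 : 0 < γ) (hγ1 : γ ≤ 1) (n : ℕ) (hn : 1 ≤ n) :
    (1 - γ/(n:ℝ)) ^ (⌈(2/γ) * (n:ℝ) * Real.log n⌉₊) * (n:ℝ) ≤ 1/(n:ℝ) := by
  have hn' : (0:ℝ) < n := by exact_mod_cast hn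
  have hn1 : (1:ℝ) ≤ n := by exact_mod_cast hn
  set L := Real.log n with hL
  have hL0 : 0 ≤ L := Real.log_nonneg hn1
  set N := ⌈(2/γ) * (n:ℝ) * L⌉₊ with hN
  have hNle : (2/γ) * (n:ℝ) * L ≤ N := Nat.le_ceil _
  have hbase0 : 0 ≤ 1 - γ/(n:ℝ) := by
    have : γ/(n:ℝ) ≤ γ := by
      calc γ/(n:ℝ) ≤ γ/1 := div_le_div_of_nonneg_left hγ0.le one_pos hn1
        _ = γ := div_one γ
    linarith
  have h1 : 1 - γ/(n:ℝ) ≤ Real.exp (-(γ/n)) := by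
    have := Real.add_one_le_exp (-(γ/(n:ℝ)))
    linarith
  have h2 : (1 - γ/(n:ℝ))^N ≤ Real.exp (-(γ/n))^N := pow_le_pow_left₀ hbase0 h1 N
  have h3 : Real.exp (-(γ/(n:ℝ)))^N = Real.exp ((N:ℝ) * (-(γ/n))) := (Real.exp_nat_mul _ N).symm
  have h4 : 2*L ≤ (γ/(n:ℝ)) * N := by
    have heq : (γ/(n:ℝ)) * ((2/γ) * (n:ℝ) * L) = 2*L := by
      field_simp
    calc 2*L = (γ/(n:ℝ)) * ((2/γ) * (n:ℝ) * L) := heq.symm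
      _ ≤ (γ/(n:ℝ)) * N := by
          apply mul_le_mul_of_nonneg_left hNle
          positivity
  have h5 : Real.exp ((N:ℝ) * (-(γ/n))) ≤ Real.exp (-(2*L)) := by
    apply Real.exp_le_exp.mpr
    nlinarith
  have h6 : Real.exp (-(2*L)) = (n:ℝ)⁻¹ * (n:ℝ)⁻¹ := by
    rw [show -(2*L) = -L + -L by ring, Real.exp_add, Real.exp_neg, hL, Real.exp_log hn']
  have h7 : (1 - γ/(n:ℝ))^N ≤ (n:ℝ)⁻¹ * (n:ℝ)⁻¹ := by
    rw [h6] at h5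
    rw [h3] at h2
    linarith
  calc (1 - γ/(n:ℝ))^N * (n:ℝ) ≤ ((n:ℝ)⁻¹ * (n:ℝ)⁻¹) * n := by
        apply mul_le_mul_of_nonneg_right h7 hn'.le
    _ = 1/(n:ℝ) := by field_simp
end EA

open EA

/-- **The (1+λ)-EA with mutation parameter `c ≤ 1 − δ` optimises every monotone
function in `O(n log n)` generations whp.**  The search point is initialised
uniformly at random, and the chain transition (given the whole history) is
`stepP`. -/
theorem stmt5
    (δ c : ℝ) (lam : ℕ) (hδ : δ ∈ Set.Ioo (0 : ℝ) 1) (hc : 0 < c)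
    (hc' : c ≤ 1 - δ) (hlam : 0 < lam) :
    ∃ C : ℝ, 0 < C ∧
      ∀ (f : ∀ n : ℕ, (Fin n → Bool) → ℝ), (∀ n, StrictMonoBool (f n)) →
      ∀ (Ω : ℕ → Type) [∀ n, MeasurableSpace (Ω n)] (μ : ∀ n, Measure (Ω n)),
        (∀ n, IsProbabilityMeasure (μ n)) →
      ∀ (X : ∀ n : ℕ, ℕ → Ω n → (Fin n → Bool)),
        (∀ n (x : Fin n → Bool), μ n {ω | X n 0 ω = x} = ((2 : ℝ≥0∞) ^ n)⁻¹) →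
        (∀ (n t : ℕ) (h : ℕ → (Fin n → Bool)),
          μ n {ω | ∀ u ≤ t, X n u ω = h u} ≠ 0 →
          ∀ z : Fin n → Bool,
            ((μ n)[|{ω | ∀ u ≤ t, X n u ω = h u}]) {ω | X n (t + 1) ω = z}
              = stepP n lam c (f n) (h t) z) →
        Tendsto
          (fun n => μ n {ω | ∃ t ≤ ⌈C * (n : ℝ) * Real.log (n : ℝ)⌉₊,
            X n t ω = fun _ => true})
          atTop (𝓝 (1 : ℝ≥0∞)) := by
  obtain ⟨hδ0, hδ1⟩ := hδ
  set γ := δ^(lam+1) * c / 2 with hγ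
  have hγ0 : 0 < γ := by positivity
  have hγ1 : γ ≤ 1 := by
    have h1 : δ^(lam+1) ≤ 1 := pow_le_one₀ hδ0.le hδ1.le
    have h2 : c ≤ 1 := by linarith
    have h3 : 0 < δ^(lam+1) := by positivity
    rw [hγ]
    nlinarith
  refine ⟨2/γ, by positivity, ?_⟩
  intro f hf Ω _ μ hprob X hinit hcond
  apply tendsto_of_tendsto_of_tendsto_of_le_of_le'
    (g := fun n : ℕ => 1 - ENNReal.ofReal (1/(n:ℝ))) (h := fun _ : ℕ => (1:ℝ≥0∞))
  · have h1 : Tendsto (fun n : ℕ => ENNReal.ofReal (1/(n:ℝ))) atTop (𝓝 0) := by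
      have h2 := ENNReal.tendsto_ofReal (tendsto_one_div_atTop_nhds_zero_nat)
      simpa using h2
    have h2 := ENNReal.Tendsto.sub
      (tendsto_const_nhds : Tendsto (fun _ : ℕ => (1:ℝ≥0∞)) atTop (𝓝 1)) h1
      (Or.inl ENNReal.one_ne_top)
    simpa using h2
  · exact tendsto_const_nhds
  swap
  · filter_upwards with n
    exact prob_le_one
  filter_upwards [eventually_ge_atTop 1] with n hn1
  haveI := hprob n
  have hn : 0 < n := hn1
  have hn' : (0:ℝ) < n := by exact_mod_cast hn
  have hfn := hf n
  have hp0 : 0 ≤ c/(n:ℝ) := by positivity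
  have hp1 : c/(n:ℝ) ≤ 1 := by
    rw [div_le_one hn']
    calc c ≤ 1 - δ := hc'
      _ ≤ 1 := by linarith
      _ ≤ n := by exact_mod_cast hn
  have hst : ∀ x z : Fin n → Bool, stepP n lam c (f n) x z ≠ ⊤ := by
    intro x z
    rw [EA.stepP_eq_ofReal c (f n) x z hp0 hp1]
    exact ENNReal.ofReal_ne_top
  set β := ENNReal.ofReal (1 - γ/(n:ℝ)) with hβ
  have hdrift : ∀ x : Fin n → Bool,
      ∑ z : Fin n → Bool, (Zc z : ℝ≥0∞) * stepP n lam c (f n) x z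
        ≤ β * (Zc x : ℝ≥0∞) := by
    intro x
    have hd := EA.drift_ennreal (f n) x c δ hn hδ0 hδ1 hc hc' hlam hfn
    rw [hβ, hγ]
    exact hd
  set Efun : ℕ → ℝ≥0∞ :=
    fun t => ∑ x : Fin n → Bool, (Zc x : ℝ≥0∞) * mAux (μ n) (X n) t x with hEdef
  have h2n0 : ((2:ℝ≥0∞)^n) ≠ 0 := by positivity
  have h2nt : ((2:ℝ≥0∞)^n) ≠ ⊤ := by
    apply ENNReal.pow_ne_top
    exact ENNReal.ofNat_ne_top
  have hE0 : Efun 0 ≤ (n : ℝ≥0∞) := by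
    rw [hEdef]
    have e1 : ∀ x : Fin n → Bool, (Zc x : ℝ≥0∞) * mAux (μ n) (X n) 0 x
        ≤ (n : ℝ≥0∞) * ((2:ℝ≥0∞)^n)⁻¹ := by
      intro x
      rw [EA.mAux_zero (μ n) (X n) (hinit n) x]
      apply mul_le_mul_left
      have : Zc x ≤ n := by
        calc Zc x ≤ (Finset.univ : Finset (Fin n)).card := Finset.card_filter_le _ _
          _ = n := by simp
      exact_mod_cast this
    calc ∑ x : Fin n → Bool, (Zc x : ℝ≥0∞) * mAux (μ n) (X n) 0 x
        ≤ ∑ _x : Fin n → Bool, (n : ℝ≥0∞) * ((2:ℝ≥0∞)^n)⁻¹ :=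
          Finset.sum_le_sum (fun x _ => e1 x)
      _ = (Fintype.card (Fin n → Bool)) • ((n : ℝ≥0∞) * ((2:ℝ≥0∞)^n)⁻¹) := by
          rw [Finset.sum_const, Finset.card_univ]
      _ = (2:ℝ≥0∞)^n * ((n : ℝ≥0∞) * ((2:ℝ≥0∞)^n)⁻¹) := by
          rw [nsmul_eq_mul]
          congr 1
          rw [Fintype.card_fun]
          simp
      _ = (n : ℝ≥0∞) := by
          rw [mul_comm (n : ℝ≥0∞) _, ← mul_assoc, ENNReal.mul_inv_cancel h2n0 h2nt, one_mul]
  have hEstep : ∀ t, Efun (t+1) ≤ β * Efun t := by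
    intro t
    rw [hEdef]
    calc ∑ z : Fin n → Bool, (Zc z : ℝ≥0∞) * mAux (μ n) (X n) (t+1) z
        ≤ ∑ z : Fin n → Bool, (Zc z : ℝ≥0∞)
            * ∑ x : Fin n → Bool, mAux (μ n) (X n) t x * stepP n lam c (f n) x z := by
          apply Finset.sum_le_sum
          intro z _
          exact mul_le_mul_right
            (EA.mAux_succ_le lam c (f n) (μ n) (X n) (hcond n) hst t z) _
      _ = ∑ x : Fin n → Bool, mAux (μ n) (X n) t x
            * ∑ z : Fin n → Bool, (Zc z : ℝ≥0∞) * stepP n lam c (f n) x z := by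
          rw [Finset.sum_congr rfl (fun z _ => Finset.mul_sum Finset.univ _ _)]
          rw [Finset.sum_comm]
          apply Finset.sum_congr rfl
          intro x _
          rw [Finset.mul_sum]
          apply Finset.sum_congr rfl
          intro z _
          ring
      _ ≤ ∑ x : Fin n → Bool, mAux (μ n) (X n) t x * (β * (Zc x : ℝ≥0∞)) :=
          Finset.sum_le_sum (fun x _ => mul_le_mul_right (hdrift x) _)
      _ = β * Efun t := by
          rw [hEdef, Finset.mul_sum]
          apply Finset.sum_congr rfl
          intro x _
          ring
  have hEN : ∀ t, Efun t ≤ β^t * (n : ℝ≥0∞) := by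
    intro t
    induction t with
    | zero => simpa using hE0
    | succ t ih =>
        calc Efun (t+1) ≤ β * Efun t := hEstep t
          _ ≤ β * (β^t * (n : ℝ≥0∞)) := mul_le_mul_right ih β
          _ = β^(t+1) * (n : ℝ≥0∞) := by rw [pow_succ]; ring
  set N := ⌈2/γ * (n : ℝ) * Real.log n⌉₊ with hNdef
  have hbase0 : 0 ≤ 1 - γ/(n:ℝ) := by
    have : γ/(n:ℝ) ≤ γ := by
      calc γ/(n:ℝ) ≤ γ/1 := by
            apply div_le_div_of_nonneg_left hγ0.le one_pos
            exact_mod_cast hn1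
        _ = γ := div_one γ
    linarith
  have hβN : β^N * (n : ℝ≥0∞) ≤ ENNReal.ofReal (1/(n:ℝ)) := by
    rw [hβ, ← ENNReal.ofReal_pow hbase0, ← ENNReal.ofReal_natCast n,
      ← ENNReal.ofReal_mul (pow_nonneg hbase0 _)]
    apply ENNReal.ofReal_le_ofReal
    exact EA.final_numeric γ hγ0 hγ1 n hn1
  have hEfin : Efun N ≤ ENNReal.ofReal (1/(n:ℝ)) := le_trans (hEN N) hβN
  have h7 : ∑ x ∈ (Finset.univ : Finset (Fin n → Bool)).erase (fun _ => true),
      μ n {ω | X n N ω = x} ≤ Efun N := by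
    calc ∑ x ∈ (Finset.univ : Finset (Fin n → Bool)).erase (fun _ => true),
          μ n {ω | X n N ω = x}
        ≤ ∑ x ∈ (Finset.univ : Finset (Fin n → Bool)).erase (fun _ => true),
            (Zc x : ℝ≥0∞) * mAux (μ n) (X n) N x := by
          apply Finset.sum_le_sum
          intro x hx
          have hx1 : x ≠ fun _ => true := (Finset.mem_erase.mp hx).1
          have hz1 : (1:ℝ≥0∞) ≤ (Zc x : ℝ≥0∞) := by
            have := EA.Zc_pos x hx1
            exact_mod_cast this
          calc μ n {ω | X n N ω = x} ≤ mAux (μ n) (X n) N x :=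
              EA.marginal_le (μ n) (X n) N x
            _ = 1 * mAux (μ n) (X n) N x := (one_mul _).symm
            _ ≤ (Zc x : ℝ≥0∞) * mAux (μ n) (X n) N x := mul_le_mul_left hz1 _
      _ ≤ Efun N := by
          rw [hEdef]
          exact Finset.sum_le_sum_of_subset (Finset.erase_subset _ _)
  have h8 : (1:ℝ≥0∞) ≤ μ n {ω | X n N ω = fun _ => true} + Efun N := by
    calc (1:ℝ≥0∞) ≤ ∑ x : Fin n → Bool, μ n {ω | X n N ω = x} :=
        EA.total_ge (μ n) (X n) N
      _ = μ n {ω | X n N ω = fun _ => true}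
          + ∑ x ∈ (Finset.univ : Finset (Fin n → Bool)).erase (fun _ => true),
              μ n {ω | X n N ω = x} :=
        (Finset.add_sum_erase _ _ (Finset.mem_univ _)).symm
      _ ≤ μ n {ω | X n N ω = fun _ => true} + Efun N := add_le_add le_rfl h7
  have h9 : μ n {ω | X n N ω = fun _ => true}
      ≤ μ n {ω | ∃ t ≤ ⌈2/γ * (n : ℝ) * Real.log (n:ℝ)⌉₊, X n t ω = fun _ => true} := by
    apply measure_mono
    intro ω hω
    exact ⟨N, le_rfl, hω⟩
  have h10 : (1:ℝ≥0∞) ≤ μ n {ω | ∃ t ≤ ⌈2/γ * (n : ℝ) * Real.log (n:ℝ)⌉₊,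
      X n t ω = fun _ => true} + ENNReal.ofReal (1/(n:ℝ)) := by
    calc (1:ℝ≥0∞) ≤ μ n {ω | X n N ω = fun _ => true} + Efun N := h8
      _ ≤ _ := add_le_add h9 hEfin
  exact tsub_le_iff_right.mpr h10
end

section
/- For x ∈ (0, 1/4], define g₋(x) := (1 − √(1 − 4x))/(2x(1−x)) and h₋(x) := f(g₋(x), x), where f(c,x) := c·x − e^{−c(1−x)} − x/(1−x). Then: (i) h₋ is strictly increasing on (0, 1/4]; (ii) h₋(x) → −1/e as x → 0⁺; (iii) h₋(1/4) = 1/3 − e^{−2} > 0; and consequently (iv) h₋ has a unique zero α₀ in (0, 1/4). -/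
/-- `f(c,x) := c·x − e^{−c(1−x)} − x/(1−x)`. -/
noncomputable def fcx (c x : ℝ) : ℝ := c * x - Real.exp (-(c * (1 - x))) - x / (1 - x)
/-- `g₋(x) := (1 − √(1 − 4x))/(2x(1−x))`. -/
noncomputable def gminus (x : ℝ) : ℝ := (1 - Real.sqrt (1 - 4 * x)) / (2 * x * (1 - x))
/-- `h₋(x) := f(g₋(x), x)`. -/
noncomputable def hminus (x : ℝ) : ℝ := fcx (gminus x) x

noncomputable def Hs (s : ℝ) : ℝ := (1 - s)^2 / (3 + s^2) - Real.exp (-2 / (1 + s))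

lemma hminus_eq {x : ℝ} (hx : 0 < x) (hx4 : x ≤ 1/4) :
    hminus x = Hs (Real.sqrt (1 - 4 * x)) := by
  set s := Real.sqrt (1 - 4 * x) with hs
  have h4 : (0:ℝ) ≤ 1 - 4 * x := by linarith
  have hs2 : s ^ 2 = 1 - 4 * x := Real.sq_sqrt h4
  have hs0 : 0 ≤ s := Real.sqrt_nonneg _
  have h1s : (0:ℝ) < 1 + s := by linarith
  have hx0 : x ≠ 0 := ne_of_gt hx
  have h1x : (1:ℝ) - x ≠ 0 := by intro h; nlinarith
  have e1 : gminus x * (1 - x) = 2 / (1 + s) := by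
    unfold gminus; rw [← hs]; field_simp; nlinarith [hs2]
  have e2 : gminus x * x - x / (1 - x) = (1 - s)^2 / (3 + s^2) := by
    unfold gminus; rw [← hs]
    have hden : (3:ℝ) + s^2 = 4 * (1 - x) := by linarith
    have hsq : (1 - s)^2 = 2 - 2*s - 4*x := by linear_combination hs2
    rw [hden, hsq]; field_simp; ring
  have hh : hminus x = (gminus x * x - x / (1 - x)) - Real.exp (-(gminus x * (1 - x))) := by
    unfold hminus fcx; ring
  rw [hh, e1, e2]
  unfold Hs
  rw [neg_div]

lemma hasDerivAt_Hs (s : ℝ) (h1 : (1:ℝ) + s ≠ 0) :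
    HasDerivAt Hs
      ((-2*(1-s)*(3+s)) / (3+s^2)^2 - Real.exp (-2/(1+s)) * (2/(1+s)^2)) s := by
  have h3 : (3:ℝ) + s^2 ≠ 0 := by positivity
  have dnum : HasDerivAt (fun t : ℝ => (1 - t)^2) (-(2*(1-s))) s := by
    have h := (((hasDerivAt_id s).const_sub 1).pow 2)
    refine h.congr_deriv ?_
    simp
  have dden : HasDerivAt (fun t : ℝ => 3 + t^2) (2*s) s := by
    have h := ((hasDerivAt_id s).pow 2).const_add 3
    refine h.congr_deriv ?_
    simp
  have dfrac := dnum.div dden h3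
  have dinner : HasDerivAt (fun t : ℝ => -2 / (1 + t)) (2/(1+s)^2) s := by
    have h := (hasDerivAt_const s (-2:ℝ)).div ((hasDerivAt_id s).const_add 1) h1
    refine h.congr_deriv ?_
    simp only [id]; ring
  have dexp := dinner.exp
  have key : (-2*(1-s)*(3+s)) / (3+s^2)^2 - Real.exp (-2/(1+s)) * (2/(1+s)^2)
      = (-(2*(1-s)) * (3+s^2) - (1-s)^2 * (2*s)) / (3+s^2)^2
        - Real.exp (-2/(1+s)) * (2/(1+s)^2) := by
    ring
  rw [key]
  exact dfrac.sub dexp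

lemma Hs_anti : StrictAntiOn Hs (Set.Icc (0:ℝ) 1) := by
  have hc : ContinuousOn Hs (Set.Icc (0:ℝ) 1) := fun s hs =>
    ((hasDerivAt_Hs s (by have := hs.1; intro h; linarith)).continuousAt).continuousWithinAt
  apply strictAntiOn_of_deriv_neg (convex_Icc 0 1) hc
  intro s hs
  rw [interior_Icc] at hs
  obtain ⟨h0, h1⟩ := hs
  have h1s : (1:ℝ) + s ≠ 0 := by intro h; linarith
  rw [(hasDerivAt_Hs s h1s).deriv]
  have t1 : (-2*(1-s)*(3+s)) / (3+s^2)^2 < 0 := by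
    apply div_neg_of_neg_of_pos
    · nlinarith
    · positivity
  have t2 : 0 < Real.exp (-2/(1+s)) * (2/(1+s)^2) := by positivity
  linarith

/-- (i) `h₋` is strictly increasing on `(0, 1/4]`; (ii) `h₋(x) → −1/e` as `x → 0⁺`;
(iii) `h₋(1/4) = 1/3 − e^{−2} > 0`; (iv) `h₋` has a unique zero `α₀` in `(0, 1/4)`. -/
theorem stmt14 :
    StrictMonoOn hminus (Set.Ioc (0 : ℝ) (1 / 4)) ∧
    Filter.Tendsto hminus (nhdsWithin 0 (Set.Ioi 0)) (nhds (-(1 / Real.exp 1))) ∧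
    (hminus (1 / 4) = 1 / 3 - Real.exp (-2) ∧ 0 < (1 : ℝ) / 3 - Real.exp (-2)) ∧
    (∃! α₀ : ℝ, α₀ ∈ Set.Ioo (0 : ℝ) (1 / 4) ∧ hminus α₀ = 0) := by
  have mono : StrictMonoOn hminus (Set.Ioc (0 : ℝ) (1/4)) := by
    intro x hx y hy hxy
    rw [hminus_eq hx.1 hx.2, hminus_eq hy.1 hy.2]
    have h4y : (0:ℝ) ≤ 1 - 4*y := by have := hy.2; linarith
    have memx : Real.sqrt (1 - 4*x) ∈ Set.Icc (0:ℝ) 1 :=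
      ⟨Real.sqrt_nonneg _, Real.sqrt_le_one.mpr (by have := hx.1; linarith)⟩
    have memy : Real.sqrt (1 - 4*y) ∈ Set.Icc (0:ℝ) 1 :=
      ⟨Real.sqrt_nonneg _, Real.sqrt_le_one.mpr (by have := hy.1; linarith)⟩
    exact Hs_anti memy memx (Real.sqrt_lt_sqrt h4y (by linarith))
  have tendH : Filter.Tendsto hminus (nhdsWithin 0 (Set.Ioi 0)) (nhds (-(1 / Real.exp 1))) := by
    have hcont1 : ContinuousAt Hs 1 := (hasDerivAt_Hs 1 (by norm_num)).continuousAt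
    have hsq : Filter.Tendsto (fun x : ℝ => Real.sqrt (1 - 4*x))
        (nhdsWithin 0 (Set.Ioi 0)) (nhds 1) := by
      have hc : Continuous (fun x : ℝ => Real.sqrt (1 - 4*x)) :=
        Real.continuous_sqrt.comp (by continuity)
      have h0 := hc.tendsto 0
      norm_num at h0
      exact h0.mono_left nhdsWithin_le_nhds
    have tH : Filter.Tendsto (fun x => Hs (Real.sqrt (1 - 4*x)))
        (nhdsWithin 0 (Set.Ioi 0)) (nhds (Hs 1)) := hcont1.tendsto.comp hsq
    have Hs1 : Hs 1 = -(1 / Real.exp 1) := by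
      show (1-1)^2/(3+1^2) - Real.exp (-2/(1+1)) = -(1 / Real.exp 1)
      norm_num [Real.exp_neg]
    have hmem : Set.Ioo (-(1:ℝ)) (1/4) ∈ nhds (0:ℝ) := isOpen_Ioo.mem_nhds (by norm_num)
    have ev : ∀ᶠ x in nhdsWithin 0 (Set.Ioi 0), Hs (Real.sqrt (1 - 4*x)) = hminus x := by
      filter_upwards [self_mem_nhdsWithin, mem_nhdsWithin_of_mem_nhds hmem] with x hx1 hx2
      exact (hminus_eq hx1 (le_of_lt hx2.2)).symm
    rw [← Hs1]
    exact tH.congr' ev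
  have h14 : hminus (1/4) = 1/3 - Real.exp (-2) := by
    rw [hminus_eq (by norm_num) (le_refl _)]
    have : (1:ℝ) - 4 * (1/4) = 0 := by norm_num
    rw [this, Real.sqrt_zero]
    unfold Hs
    norm_num
  have hpos : 0 < (1:ℝ)/3 - Real.exp (-2) := by
    have hm : Real.exp (-2) * Real.exp 2 = 1 := by rw [← Real.exp_add]; norm_num
    have h2 : Real.exp 2 = Real.exp 1 * Real.exp 1 := by rw [← Real.exp_add]; norm_num
    have he : (2.7:ℝ) < Real.exp 1 := by
      have := Real.exp_one_gt_d9; linarith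
    have h3 : (3:ℝ) < Real.exp 2 := by nlinarith
    nlinarith [Real.exp_pos (-2)]
  refine ⟨mono, tendH, ⟨h14, hpos⟩, ?_⟩
  have hneg : ∃ a, a ∈ Set.Ioo (0:ℝ) (1/4) ∧ hminus a < 0 := by
    have ev1 : ∀ᶠ x in nhdsWithin 0 (Set.Ioi 0), hminus x < 0 :=
      tendH.eventually_lt_const (by
        have := Real.exp_pos 1
        have : 0 < 1 / Real.exp 1 := by positivity
        linarith)
    have hmem : Set.Ioo (-(1:ℝ)) (1/4) ∈ nhds (0:ℝ) := isOpen_Ioo.mem_nhds (by norm_num)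
    have ev2 : ∀ᶠ x in nhdsWithin 0 (Set.Ioi 0), x ∈ Set.Ioo (0:ℝ) (1/4) := by
      filter_upwards [self_mem_nhdsWithin, mem_nhdsWithin_of_mem_nhds hmem] with x hx1 hx2
      exact ⟨hx1, hx2.2⟩
    obtain ⟨a, ha1, ha2⟩ := (ev2.and ev1).exists
    exact ⟨a, ha1, ha2⟩
  obtain ⟨a, ha, haneg⟩ := hneg
  have hcont : ContinuousOn hminus (Set.Icc a (1/4)) := by
    have c1 : ContinuousOn (fun y : ℝ => Hs (Real.sqrt (1 - 4*y))) (Set.Icc a (1/4)) := by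
      intro y _
      have hne : (1:ℝ) + Real.sqrt (1 - 4*y) ≠ 0 := by
        have := Real.sqrt_nonneg (1 - 4*y); intro h; linarith
      have caff : Continuous (fun y : ℝ => 1 - 4*y) := by continuity
      have csqrt : ContinuousAt (fun y : ℝ => Real.sqrt (1 - 4*y)) y :=
        (Real.continuous_sqrt.comp caff).continuousAt
      have hcomp : ContinuousAt (fun y : ℝ => Hs (Real.sqrt (1 - 4*y))) y :=
        ContinuousAt.comp (g := Hs) (f := fun y : ℝ => Real.sqrt (1 - 4*y)) (x := y) (hasDerivAt_Hs _ hne).continuousAt csqrt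
      exact hcomp.continuousWithinAt
    exact c1.congr (fun y hy => hminus_eq (lt_of_lt_of_le ha.1 hy.1) hy.2)
  have hsub := intermediate_value_Ioo (le_of_lt ha.2) hcont
  have h0mem : (0:ℝ) ∈ Set.Ioo (hminus a) (hminus (1/4)) := by
    constructor
    · exact haneg
    · rw [h14]; exact hpos
  obtain ⟨α, hα, hα0⟩ := hsub h0mem
  refine ⟨α, ⟨⟨lt_trans ha.1 hα.1, hα.2⟩, hα0⟩, ?_⟩
  rintro β ⟨hβ, hβ0⟩
  have αm : α ∈ Set.Ioc (0:ℝ) (1/4) := ⟨lt_trans ha.1 hα.1, le_of_lt hα.2⟩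
  have βm : β ∈ Set.Ioc (0:ℝ) (1/4) := ⟨hβ.1, le_of_lt hβ.2⟩
  exact mono.injOn βm αm (by rw [hβ0, hα0])
end

section
/- Let s be a random variable taking values in the nonnegative integers with first and second falling moments m₁ := E[s] and m₂ := E[s(s−1)], and suppose m₂ ≤ m₁ < ∞. Then 2·Pr[1 ≤ s ≤ 2] ≥ m₁ − m₂/2 ≥ m₁/2; in particular Pr[1 ≤ s ≤ 2] ≥ m₁/4 and m₁ ≤ 4. -/
/-- For a random variable `s` on ℕ with distribution `p` and falling moments
`m₁ = E[s]`, `m₂ = E[s(s−1)]` satisfying `m₂ ≤ m₁ < ∞`: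
`2·Pr[1 ≤ s ≤ 2] ≥ m₁ − m₂/2 ≥ m₁/2`; in particular `Pr[1 ≤ s ≤ 2] ≥ m₁/4`
and `m₁ ≤ 4`. Note `Pr[1 ≤ s ≤ 2] = p 1 + p 2`. -/
theorem stmt17 (p : ℕ → ℝ) (hp : ∀ k, 0 ≤ p k) (hpsum : Summable p)
    (hsum : ∑' k : ℕ, p k = 1)
    (hs1 : Summable fun k : ℕ => p k * (k : ℝ))
    (hs2 : Summable fun k : ℕ => p k * ((k : ℝ) * ((k : ℝ) - 1)))
    (hm : (∑' k : ℕ, p k * ((k : ℝ) * ((k : ℝ) - 1))) ≤ ∑' k : ℕ, p k * (k : ℝ)) :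
    (∑' k : ℕ, p k * (k : ℝ)) - (∑' k : ℕ, p k * ((k : ℝ) * ((k : ℝ) - 1))) / 2
        ≤ 2 * (p 1 + p 2) ∧
      (∑' k : ℕ, p k * (k : ℝ)) / 2
        ≤ (∑' k : ℕ, p k * (k : ℝ)) - (∑' k : ℕ, p k * ((k : ℝ) * ((k : ℝ) - 1))) / 2 ∧
      (∑' k : ℕ, p k * (k : ℝ)) / 4 ≤ p 1 + p 2 ∧
      (∑' k : ℕ, p k * (k : ℝ)) ≤ 4 := by
  set m1 := ∑' k : ℕ, p k * (k : ℝ) with hm1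
  set m2 := ∑' k : ℕ, p k * ((k : ℝ) * ((k : ℝ) - 1)) with hm2
  have hs2' : Summable fun k : ℕ => p k * ((k : ℝ) * ((k : ℝ) - 1)) / 2 := hs2.div_const 2
  have hg : Summable fun k : ℕ => p k * (k : ℝ) - p k * ((k : ℝ) * ((k : ℝ) - 1)) / 2 :=
    hs1.sub hs2'
  have htg : (∑' k : ℕ, (p k * (k : ℝ) - p k * ((k : ℝ) * ((k : ℝ) - 1)) / 2)) = m1 - m2 / 2 := by
    rw [Summable.tsum_sub hs1 hs2', tsum_div_const]
  -- dominating function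
  set h : ℕ → ℝ := fun k => if k = 1 then p 1 else if k = 2 then p 2 else 0 with hh
  have hhzero : ∀ k ∉ ({1, 2} : Finset ℕ), h k = 0 := by
    intro k hk
    simp only [Finset.mem_insert, Finset.mem_singleton, not_or] at hk
    simp [hh, hk.1, hk.2]
  have hhsum : Summable h := summable_of_ne_finset_zero hhzero
  have hth : (∑' k : ℕ, h k) = p 1 + p 2 := by
    rw [tsum_eq_sum hhzero]
    simp [hh]
  have hle : ∀ k : ℕ, p k * (k : ℝ) - p k * ((k : ℝ) * ((k : ℝ) - 1)) / 2 ≤ h k := by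
    intro k
    match k with
    | 0 => simp [hh]
    | 1 => simp [hh]
    | 2 => simp [hh]; ring_nf; simp
    | (n + 3) =>
      have hp' := hp (n + 3)
      have hc : (3 : ℝ) ≤ ((n + 3 : ℕ) : ℝ) := by
        push_cast; linarith [Nat.cast_nonneg (α := ℝ) n]
      have : h (n + 3) = 0 := by simp [hh]
      rw [this]
      nlinarith [mul_nonneg hp' (by linarith : (0:ℝ) ≤ ((n + 3 : ℕ) : ℝ))]
  have key : m1 - m2 / 2 ≤ p 1 + p 2 := by
    rw [← htg, ← hth]
    exact Summable.tsum_le_tsum hle hg hhsum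
  have hp12 : 0 ≤ p 1 + p 2 := add_nonneg (hp 1) (hp 2)
  have hp12le : p 1 + p 2 ≤ 1 := by
    have h' := Summable.sum_le_tsum ({1, 2} : Finset ℕ) (fun k _ => hp k) hpsum
    rw [hsum] at h'
    simpa using h'
  have h2 : m1 / 2 ≤ m1 - m2 / 2 := by linarith
  refine ⟨by linarith, h2, by linarith, by linarith⟩
end

section
/- Let n ≥ 1 and let Z ⊆ [n] be a nonempty set with |Z| = k. For 1 ≤ s ≤ n, let P(s) denote the probability that a uniformly random s-element subset of [n] intersects Z, i.e. P(s) = 1 − C(n−k, s)/C(n, s), where C(m, j) denotes the binomial coefficient (with C(m, j) = 0 for j > m). Then the sequence P(s)/s is non-increasing in s: for all 1 ≤ s < n, P(s+1)/(s+1) ≤ P(s)/s. -/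
/-- Key inequality: for `m < n` and any `s`,
`C(m,s) * (n - s + s*(n-m)) ≤ C(n,s) * (n - s)` in `ℤ`. -/
lemma stmt18_key (n m : ℕ) (hm : m < n) :
    ∀ s : ℕ, (m.choose s : ℤ) * ((n:ℤ) - s + s * ((n:ℤ) - m)) ≤ (n.choose s : ℤ) * ((n:ℤ) - s) := by
  intro s
  induction s with
  | zero => simp
  | succ s ih =>
    by_cases hsn : n < s + 1
    · rw [Nat.choose_eq_zero_of_lt hsn, Nat.choose_eq_zero_of_lt (lt_of_lt_of_le hm hsn.le)]
      simp
    push_neg at hsn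
    by_cases hsm : m < s + 1
    · rw [Nat.choose_eq_zero_of_lt hsm]
      have h1 : (0:ℤ) ≤ (n.choose (s+1) : ℤ) := by positivity
      have h2 : (0:ℤ) ≤ (n:ℤ) - (s+1:ℕ) := by push_cast; omega
      push_cast
      nlinarith
    · push_neg at hsm
      have hsm' : s ≤ m := by omega
      have hsn' : s ≤ n := by omega
      have idA : (n.choose (s+1) : ℤ) * ((s:ℤ)+1) = (n.choose s : ℤ) * ((n:ℤ) - s) := by
        have h := Nat.choose_succ_right_eq n s
        zify [hsn'] at h
        linarith
      have idB : (m.choose (s+1) : ℤ) * ((s:ℤ)+1) = (m.choose s : ℤ) * ((m:ℤ) - s) := by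
        have h := Nat.choose_succ_right_eq m s
        zify [hsm'] at h
        linarith
      have hB : (0:ℤ) ≤ (m.choose s : ℤ) := by positivity
      have hd : (1:ℤ) ≤ (n:ℤ) - m := by omega
      have hns1 : (0:ℤ) ≤ (n:ℤ) - ((s:ℤ)+1) := by omega
      have hpos : (0:ℤ) < (s:ℤ) + 1 := by positivity
      have H : (m.choose (s+1) : ℤ) * ((n:ℤ) - ((s:ℤ)+1) + ((s:ℤ)+1) * ((n:ℤ) - m)) * ((s:ℤ)+1)
          ≤ (n.choose (s+1) : ℤ) * ((n:ℤ) - ((s:ℤ)+1)) * ((s:ℤ)+1) := by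
        calc (m.choose (s+1) : ℤ) * ((n:ℤ) - ((s:ℤ)+1) + ((s:ℤ)+1) * ((n:ℤ) - m)) * ((s:ℤ)+1)
            = (m.choose s : ℤ) * ((m:ℤ) - s) * ((n:ℤ) - ((s:ℤ)+1) + ((s:ℤ)+1) * ((n:ℤ) - m)) := by
              linear_combination ((n:ℤ) - ((s:ℤ)+1) + ((s:ℤ)+1) * ((n:ℤ) - m)) * idB
          _ ≤ (n.choose s : ℤ) * ((n:ℤ) - s) * ((n:ℤ) - ((s:ℤ)+1)) := by
              nlinarith [mul_le_mul_of_nonneg_right ih hns1,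
                mul_nonneg hB (mul_nonneg (by positivity : (0:ℤ) ≤ (s:ℤ)+1)
                  (mul_nonneg (by linarith : (0:ℤ) ≤ (n:ℤ)-(m:ℤ)) (by linarith : (0:ℤ) ≤ (n:ℤ)-(m:ℤ)-1)))]
          _ = (n.choose (s+1) : ℤ) * ((n:ℤ) - ((s:ℤ)+1)) * ((s:ℤ)+1) := by
              linear_combination (((s:ℤ)+1) - (n:ℤ)) * idA
      have H' := le_of_mul_le_mul_right H hpos
      push_cast
      convert H' using 2

/-- Let `Z ⊆ [n]` be nonempty of size `k`, and let
`P(s) = 1 − C(n−k, s)/C(n, s)` be the probability that a uniformly random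
`s`-element subset of `[n]` intersects `Z`.  Then `P(s)/s` is non-increasing:
for all `1 ≤ s < n`, `P(s+1)/(s+1) ≤ P(s)/s`. -/
theorem stmt18 (n : ℕ) (hn : 1 ≤ n) (Z : Finset (Fin n)) (hZ : Z.Nonempty) :
    ∀ s : ℕ, 1 ≤ s → s < n →
      (1 - (((n - Z.card).choose (s + 1) : ℝ)) / ((n.choose (s + 1) : ℝ))) / ((s : ℝ) + 1)
        ≤ (1 - (((n - Z.card).choose s : ℝ)) / ((n.choose s : ℝ))) / (s : ℝ) := by
  intro s hs1 hsn
  set m : ℕ := n - Z.card with hmdef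
  have hk1 : 1 ≤ Z.card := Finset.card_pos.mpr hZ
  have hm : m < n := by
    have : Z.card ≤ n := by simpa using Finset.card_le_univ Z
    omega
  set A : ℝ := (n.choose s : ℝ) with hAdef
  set A' : ℝ := (n.choose (s+1) : ℝ) with hA'def
  set B : ℝ := (m.choose s : ℝ) with hBdef
  set B' : ℝ := (m.choose (s+1) : ℝ) with hB'def
  have hA : 0 < A := by rw [hAdef]; exact_mod_cast Nat.choose_pos hsn.le
  have hA' : 0 < A' := by rw [hA'def]; exact_mod_cast Nat.choose_pos hsn
  have hs0 : (0:ℝ) < (s:ℝ) := by exact_mod_cast hs1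
  have hs0' : (0:ℝ) < (s:ℝ) + 1 := by positivity
  rw [div_le_div_iff₀ hs0' hs0]
  have h1 : (1 - B'/A') * (s:ℝ) = (A' - B') * (s:ℝ) / A' := by field_simp
  have h2 : (1 - B/A) * ((s:ℝ)+1) = (A - B) * ((s:ℝ)+1) / A := by field_simp
  rw [h1, h2, div_le_div_iff₀ hA' hA]
  -- goal : (A' - B') * s * A ≤ (A - B) * (s+1) * A'
  have idA : A' * ((s:ℝ)+1) = A * ((n:ℝ) - s) := by
    have h := Nat.choose_succ_right_eq n s
    have h' : ((n.choose (s+1) : ℤ)) * ((s:ℤ)+1) = (n.choose s : ℤ) * ((n:ℤ) - s) := by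
      zify [hsn.le] at h; linarith
    rw [hA'def, hAdef]; exact_mod_cast h'
  have keyR : B * ((n:ℝ) - s + s * ((n:ℝ) - m)) ≤ A * ((n:ℝ) - s) := by
    have h := stmt18_key n m hm s
    rw [hBdef, hAdef]; exact_mod_cast h
  by_cases hsm : m < s
  · have hB0 : B = 0 := by rw [hBdef, Nat.choose_eq_zero_of_lt hsm]; norm_num
    have hB'0 : B' = 0 := by
      rw [hB'def, Nat.choose_eq_zero_of_lt (by omega)]; norm_num
    rw [hB0, hB'0]
    nlinarith [mul_nonneg hA.le hA'.le]
  · push_neg at hsm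
    have idB : B' * ((s:ℝ)+1) = B * ((m:ℝ) - s) := by
      have h := Nat.choose_succ_right_eq m s
      have h' : ((m.choose (s+1) : ℤ)) * ((s:ℤ)+1) = (m.choose s : ℤ) * ((m:ℤ) - s) := by
        zify [hsm] at h; linarith
      rw [hB'def, hBdef]; exact_mod_cast h'
    have hB : 0 ≤ B := by rw [hBdef]; positivity
    have H : (A' - B') * (s:ℝ) * A * ((s:ℝ)+1) ≤ (A - B) * ((s:ℝ)+1) * A' * ((s:ℝ)+1) := by
      calc (A' - B') * (s:ℝ) * A * ((s:ℝ)+1)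
          = (A * ((n:ℝ) - s) - B * ((m:ℝ) - s)) * (s:ℝ) * A := by
            linear_combination ((s:ℝ) * A) * idA - ((s:ℝ) * A) * idB
        _ ≤ (A - B) * ((s:ℝ)+1) * (A * ((n:ℝ) - s)) := by
            nlinarith [mul_le_mul_of_nonneg_left keyR hA.le,
              mul_nonneg hB (mul_nonneg hs0'.le (by positivity : (0:ℝ) ≤ A))]
        _ = (A - B) * ((s:ℝ)+1) * A' * ((s:ℝ)+1) := by
            linear_combination ((A - B) * ((s:ℝ)+1)) * idA.symm
    exact le_of_mul_le_mul_right H hs0'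
end

section
/- Let n ≥ 1, let Z ⊆ [n] be a nonempty set of 'zero positions', and let 𝒟 be a probability distribution on {0, 1, …, n} with m₁ := E[s] > 0 and m₂ := E[s(s−1)] < ∞ for s ~ 𝒟. Draw s ~ 𝒟 and then, conditionally on s, a uniformly random s-element subset S of [n]; let s₀₁ := |S ∩ Z| and s₁₀ := s − s₀₁. If Pr[s₀₁ > 0] > 0, then E[s₁₀ | s₀₁ > 0] ≤ m₂/m₁. -/
private lemma keyN19 (n z s : ℕ) (hz : z ≤ n) :
    (n - z).choose (s + 1) + z * (n - z).choose s ≤ n.choose (s + 1) := by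
  induction z with
  | zero => simp
  | succ z ih =>
    have ih' := ih (by omega)
    have hm : n - z = (n - (z + 1)) + 1 := by omega
    set m := n - (z + 1) with hmdef
    rw [hm] at ih'
    have hps : (m + 1).choose (s + 1) = m.choose s + m.choose (s + 1) :=
      Nat.choose_succ_succ m s
    have hmono : m.choose s ≤ (m + 1).choose s := Nat.choose_le_choose _ (Nat.le_succ m)
    calc m.choose (s + 1) + (z + 1) * m.choose s
        = (m.choose s + m.choose (s + 1)) + z * m.choose s := by ring
      _ = (m + 1).choose (s + 1) + z * m.choose s := by rw [hps]
      _ ≤ (m + 1).choose (s + 1) + z * (m + 1).choose s := by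
          exact Nat.add_le_add_left (Nat.mul_le_mul_left z hmono) _
      _ ≤ n.choose (s + 1) := ih'

private lemma stepN19 (n z t : ℕ) (hz : z ≤ n) (ht : t + 1 ≤ n) :
    t * ((n.choose (t+1) - (n-z).choose (t+1)) * n.choose t) ≤
      (t+1) * ((n.choose t - (n-z).choose t) * n.choose (t+1)) := by
  have hba : (n-z).choose t ≤ n.choose t := Nat.choose_le_choose _ (Nat.sub_le n z)
  have hba' : (n-z).choose (t+1) ≤ n.choose (t+1) := Nat.choose_le_choose _ (Nat.sub_le n z)
  by_cases hcase : t ≤ n - z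
  · have key := keyN19 n z t hz
    have h1 := Nat.choose_succ_right_eq n t
    have h2 := Nat.choose_succ_right_eq (n-z) t
    zify [hba, hba']
    zify [show t ≤ n by omega] at h1
    zify [hcase] at h2
    rw [show (((n:ℕ)-z:ℕ):ℤ) - (t:ℤ) = (n:ℤ) - z - t by push_cast [hz]; ring] at h2
    have keyz : ((n-z).choose (t+1) : ℤ) + z * (n-z).choose t ≤ n.choose (t+1) := by
      exact_mod_cast key
    have ha : (0:ℤ) ≤ (n.choose t : ℤ) := by positivity
    nlinarith [mul_nonneg ha (sub_nonneg.mpr keyz), h1, h2,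
      mul_le_mul_of_nonneg_left keyz ha]
  · have hb : (n-z).choose t = 0 := Nat.choose_eq_zero_of_lt (by omega)
    have hb' : (n-z).choose (t+1) = 0 := Nat.choose_eq_zero_of_lt (by omega)
    rw [hb, hb']
    simp
    nlinarith [Nat.choose_pos (show t ≤ n by omega)]

private lemma monoR19 (n z : ℕ) (hz : z ≤ n) {s t : ℕ} (hs : 1 ≤ s) (hst : s ≤ t) (ht : t ≤ n) :
    (s:ℝ) * (((n.choose t - (n-z).choose t : ℕ):ℝ) / (n.choose t : ℝ)) ≤
      (t:ℝ) * (((n.choose s - (n-z).choose s : ℕ):ℝ) / (n.choose s : ℝ)) := by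
  induction t, hst using Nat.le_induction with
  | base => exact le_rfl
  | succ t hst ih =>
    have htn : t ≤ n := by omega
    have ih' := ih htn
    have hCt : (0:ℝ) < (n.choose t : ℝ) := by exact_mod_cast Nat.choose_pos htn
    have hCt' : (0:ℝ) < (n.choose (t+1) : ℝ) := by exact_mod_cast Nat.choose_pos ht
    have hCs : (0:ℝ) < (n.choose s : ℝ) := by exact_mod_cast Nat.choose_pos (by omega)
    have hstep : (t:ℝ) * (((n.choose (t+1) - (n-z).choose (t+1) : ℕ):ℝ) / (n.choose (t+1):ℝ)) ≤
        ((t:ℝ)+1) * (((n.choose t - (n-z).choose t : ℕ):ℝ) / (n.choose t : ℝ)) := by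
      rw [mul_div_assoc', mul_div_assoc', div_le_div_iff₀ hCt' hCt]
      have := stepN19 n z t hz ht
      calc (t:ℝ) * ((n.choose (t+1) - (n-z).choose (t+1) : ℕ):ℝ) * (n.choose t:ℝ)
          = ((t * ((n.choose (t+1) - (n-z).choose (t+1)) * n.choose t) : ℕ) : ℝ) := by
            push_cast; ring
        _ ≤ (((t+1) * ((n.choose t - (n-z).choose t) * n.choose (t+1)) : ℕ) : ℝ) := by
            exact_mod_cast this
        _ = ((t:ℝ)+1) * ((n.choose t - (n-z).choose t : ℕ):ℝ) * (n.choose (t+1):ℝ) := by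
            push_cast; ring
    have ht1 : (1:ℝ) ≤ (t:ℝ) := by exact_mod_cast (show 1 ≤ t by omega)
    have hPt1 : (0:ℝ) ≤ (((n.choose (t+1) - (n-z).choose (t+1) : ℕ):ℝ) / (n.choose (t+1):ℝ)) := by
      positivity
    have hPs : (0:ℝ) ≤ (((n.choose s - (n-z).choose s : ℕ):ℝ) / (n.choose s:ℝ)) := by positivity
    have hs1 : (1:ℝ) ≤ (s:ℝ) := by exact_mod_cast hs
    have hstR : (s:ℝ) ≤ (t:ℝ) := by exact_mod_cast hst
    push_cast
    nlinarith [hstep, ih', mul_le_mul_of_nonneg_left hstep (le_trans zero_le_one hs1)]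

private lemma pairR19 (n z : ℕ) (hzn : z ≤ n) (A : ℕ → ℝ) (hA0 : A 0 = 0)
    (hAle : ∀ s, 1 ≤ s → A s ≤ ((s:ℝ) - 1) * ((n.choose s - (n-z).choose s : ℕ):ℝ))
    {s t : ℕ} (hs : s ≤ n) (ht : t ≤ n) (hst : s ≤ t) :
    A s / (n.choose s : ℝ) * t + A t / (n.choose t : ℝ) * s ≤
      (s:ℝ) * ((s:ℝ) - 1) * (((n.choose t - (n-z).choose t : ℕ):ℝ) / (n.choose t : ℝ)) +
      (t:ℝ) * ((t:ℝ) - 1) * (((n.choose s - (n-z).choose s : ℕ):ℝ) / (n.choose s : ℝ)) := by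
  have hCs : (0:ℝ) < (n.choose s : ℝ) := by exact_mod_cast Nat.choose_pos hs
  have hCt : (0:ℝ) < (n.choose t : ℝ) := by exact_mod_cast Nat.choose_pos ht
  rcases Nat.eq_zero_or_pos s with hs0 | hs1
  · subst hs0
    simp [hA0]
  · have ht1 : 1 ≤ t := le_trans hs1 hst
    have hQs : A s / (n.choose s : ℝ) ≤
        ((s:ℝ) - 1) * (((n.choose s - (n-z).choose s : ℕ):ℝ) / (n.choose s : ℝ)) := by
      rw [← mul_div_assoc]
      exact (div_le_div_iff_of_pos_right hCs).mpr (hAle s hs1)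
    have hQt : A t / (n.choose t : ℝ) ≤
        ((t:ℝ) - 1) * (((n.choose t - (n-z).choose t : ℕ):ℝ) / (n.choose t : ℝ)) := by
      rw [← mul_div_assoc]
      exact (div_le_div_iff_of_pos_right hCt).mpr (hAle t ht1)
    have hmono := monoR19 n z hzn hs1 hst ht
    have hPs : (0:ℝ) ≤ (((n.choose s - (n-z).choose s : ℕ):ℝ) / (n.choose s : ℝ)) := by positivity
    have hPt : (0:ℝ) ≤ (((n.choose t - (n-z).choose t : ℕ):ℝ) / (n.choose t : ℝ)) := by positivity
    have hs1R : (1:ℝ) ≤ (s:ℝ) := by exact_mod_cast hs1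
    have hstR : (s:ℝ) ≤ (t:ℝ) := by exact_mod_cast hst
    have htR : (0:ℝ) ≤ (t:ℝ) := by positivity
    have hsR : (0:ℝ) ≤ (s:ℝ) := by positivity
    nlinarith [mul_le_mul_of_nonneg_right hQs htR, mul_le_mul_of_nonneg_right hQt hsR,
      mul_nonneg (sub_nonneg.mpr hstR) (sub_nonneg.mpr hmono)]

private lemma assemble19 (N : ℕ) (p Q P : ℕ → ℝ) (hp : ∀ s, 0 ≤ p s)
    (hpair : ∀ s ∈ Finset.range N, ∀ t ∈ Finset.range N,
      Q s * t + Q t * s ≤ (s:ℝ) * ((s:ℝ) - 1) * P t + (t:ℝ) * ((t:ℝ) - 1) * P s) :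
    (∑ s ∈ Finset.range N, p s * Q s) * (∑ s ∈ Finset.range N, p s * s) ≤
      (∑ s ∈ Finset.range N, p s * ((s:ℝ) * ((s:ℝ) - 1))) * (∑ s ∈ Finset.range N, p s * P s) := by
  have h1 : (∑ s ∈ Finset.range N, p s * Q s) * (∑ s ∈ Finset.range N, p s * s)
      = ∑ s ∈ Finset.range N, ∑ t ∈ Finset.range N, (p s * Q s) * (p t * t) :=
    Finset.sum_mul_sum _ _ _ _
  have h2 : (∑ s ∈ Finset.range N, p s * Q s) * (∑ s ∈ Finset.range N, p s * s)
      = ∑ s ∈ Finset.range N, ∑ t ∈ Finset.range N, (p t * Q t) * (p s * s) := by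
    rw [Finset.sum_mul_sum]; exact Finset.sum_comm
  have h3 : (∑ s ∈ Finset.range N, p s * ((s:ℝ) * ((s:ℝ) - 1))) * (∑ s ∈ Finset.range N, p s * P s)
      = ∑ s ∈ Finset.range N, ∑ t ∈ Finset.range N, (p s * ((s:ℝ) * ((s:ℝ) - 1))) * (p t * P t) :=
    Finset.sum_mul_sum _ _ _ _
  have h4 : (∑ s ∈ Finset.range N, p s * ((s:ℝ) * ((s:ℝ) - 1))) * (∑ s ∈ Finset.range N, p s * P s)
      = ∑ s ∈ Finset.range N, ∑ t ∈ Finset.range N, (p t * ((t:ℝ) * ((t:ℝ) - 1))) * (p s * P s) := by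
    rw [Finset.sum_mul_sum]; exact Finset.sum_comm
  have hkey : ∑ s ∈ Finset.range N, ∑ t ∈ Finset.range N,
        ((p s * Q s) * (p t * t) + (p t * Q t) * (p s * s)) ≤
      ∑ s ∈ Finset.range N, ∑ t ∈ Finset.range N,
        ((p s * ((s:ℝ) * ((s:ℝ) - 1))) * (p t * P t) + (p t * ((t:ℝ) * ((t:ℝ) - 1))) * (p s * P s)) := by
    refine Finset.sum_le_sum fun s hs => Finset.sum_le_sum fun t ht => ?_
    have hpq := hpair s hs t ht
    have hnn : (0:ℝ) ≤ p s * p t := mul_nonneg (hp s) (hp t)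
    calc (p s * Q s) * (p t * t) + (p t * Q t) * (p s * s)
        = (p s * p t) * (Q s * t + Q t * s) := by ring
      _ ≤ (p s * p t) * ((s:ℝ) * ((s:ℝ) - 1) * P t + (t:ℝ) * ((t:ℝ) - 1) * P s) :=
          mul_le_mul_of_nonneg_left hpq hnn
      _ = (p s * ((s:ℝ) * ((s:ℝ) - 1))) * (p t * P t) + (p t * ((t:ℝ) * ((t:ℝ) - 1))) * (p s * P s) := by
          ring
  simp only [Finset.sum_add_distrib] at hkey
  linarith [hkey, h1, h2, h3, h4]

/-- Let `Z ⊆ [n]` be a nonempty set of zero positions and `𝒟` (given by `p`) a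
distribution on `{0, …, n}` with `m₁ = E[s] > 0`.  Draw `s ~ 𝒟` and then a
uniformly random `s`-element subset `S` of `[n]`; let `s₀₁ = |S ∩ Z|` and
`s₁₀ = s − s₀₁`.  If `Pr[s₀₁ > 0] > 0` then `E[s₁₀ | s₀₁ > 0] ≤ m₂/m₁`. -/
theorem stmt19 (n : ℕ) (hn : 1 ≤ n) (Z : Finset (Fin n)) (hZ : Z.Nonempty)
    (p : ℕ → ℝ) (hp : ∀ s, 0 ≤ p s)
    (hpsum : ∑ s ∈ Finset.range (n + 1), p s = 1)
    (hm1 : 0 < ∑ s ∈ Finset.range (n + 1), p s * (s : ℝ)) :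
    let m1 : ℝ := ∑ s ∈ Finset.range (n + 1), p s * (s : ℝ)
    let m2 : ℝ := ∑ s ∈ Finset.range (n + 1), p s * ((s : ℝ) * ((s : ℝ) - 1))
    let num : ℝ := ∑ s ∈ Finset.range (n + 1),
      ∑ S ∈ Finset.powersetCard s (Finset.univ : Finset (Fin n)),
        (p s / (n.choose s : ℝ)) *
          (if 0 < (S ∩ Z).card then (s : ℝ) - ((S ∩ Z).card : ℝ) else 0)
    let den : ℝ := ∑ s ∈ Finset.range (n + 1),
      ∑ S ∈ Finset.powersetCard s (Finset.univ : Finset (Fin n)),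
        (p s / (n.choose s : ℝ)) * (if 0 < (S ∩ Z).card then 1 else 0)
    0 < den → num / den ≤ m2 / m1 := by
  intro m1 m2 num den hden
  have hm1' : (0:ℝ) < m1 := hm1
  rw [div_le_div_iff₀ hden hm1']
  set z : ℕ := Z.card with hzdef
  have hzn : z ≤ n := by
    have := Finset.card_le_univ Z
    simpa [Finset.card_univ] using this
  -- A s : the inner numerator sum
  set A : ℕ → ℝ := fun s => ∑ S ∈ Finset.powersetCard s (Finset.univ : Finset (Fin n)),
    (if 0 < (S ∩ Z).card then (s : ℝ) - ((S ∩ Z).card : ℝ) else 0) with hAdef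
  -- counting lemma
  have hBcount : ∀ s : ℕ,
      (∑ S ∈ Finset.powersetCard s (Finset.univ : Finset (Fin n)),
        (if 0 < (S ∩ Z).card then (1:ℝ) else 0)) = ((n.choose s - (n - z).choose s : ℕ) : ℝ) := by
    intro s
    rw [Finset.sum_boole]
    congr 1
    have hneg : (Finset.powersetCard s (Finset.univ : Finset (Fin n))).filter
        (fun S => ¬ 0 < (S ∩ Z).card) = Finset.powersetCard s Zᶜ := by
      ext S
      simp only [Finset.mem_filter, Finset.mem_powersetCard, Finset.subset_univ, true_and,
        not_lt, Nat.le_zero, Finset.card_eq_zero]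
      constructor
      · rintro ⟨hcard, hint⟩
        refine ⟨fun x hx => Finset.mem_compl.mpr fun hxZ => ?_, hcard⟩
        exact Finset.notMem_empty x (hint ▸ Finset.mem_inter.mpr ⟨hx, hxZ⟩)
      · rintro ⟨hsub, hcard⟩
        refine ⟨hcard, Finset.eq_empty_iff_forall_notMem.mpr fun x hx => ?_⟩
        have := Finset.mem_inter.mp hx
        exact Finset.mem_compl.mp (hsub this.1) this.2
    have hsplit := Finset.card_filter_add_card_filter_not
      (s := Finset.powersetCard s (Finset.univ : Finset (Fin n))) (p := fun S => 0 < (S ∩ Z).card)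
    rw [hneg, Finset.card_powersetCard, Finset.card_powersetCard, Finset.card_compl,
      Finset.card_univ, Fintype.card_fin, ← hzdef] at hsplit
    omega
  -- A 0 = 0
  have hA0 : A 0 = 0 := by
    rw [hAdef]
    simp
  -- pointwise bound
  have hAle : ∀ s, 1 ≤ s → A s ≤ ((s:ℝ) - 1) * ((n.choose s - (n-z).choose s : ℕ):ℝ) := by
    intro s hs1
    rw [hAdef, ← hBcount s, Finset.mul_sum]
    refine Finset.sum_le_sum fun S _ => ?_
    by_cases h : 0 < (S ∩ Z).card
    · simp only [h, if_true]
      have h1 : (1:ℝ) ≤ ((S ∩ Z).card : ℝ) := by exact_mod_cast h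
      linarith
    · simp [h]
  -- rewrite num and den
  have hnum : num = ∑ s ∈ Finset.range (n + 1), p s * (A s / (n.choose s : ℝ)) := by
    refine Finset.sum_congr rfl fun s _ => ?_
    rw [← Finset.mul_sum, hAdef]
    ring
  have hdenr : den = ∑ s ∈ Finset.range (n + 1),
      p s * (((n.choose s - (n-z).choose s : ℕ):ℝ) / (n.choose s : ℝ)) := by
    refine Finset.sum_congr rfl fun s _ => ?_
    rw [← Finset.mul_sum, hBcount s]
    ring
  rw [hnum, hdenr]
  refine assemble19 (n+1) p (fun s => A s / (n.choose s : ℝ))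
    (fun s => ((n.choose s - (n-z).choose s : ℕ):ℝ) / (n.choose s : ℝ)) hp ?_
  intro s hs t ht
  have hsn : s ≤ n := Nat.lt_succ_iff.mp (Finset.mem_range.mp hs)
  have htn : t ≤ n := Nat.lt_succ_iff.mp (Finset.mem_range.mp ht)
  rcases le_total s t with hst | hts
  · exact pairR19 n z hzn A hA0 hAle hsn htn hst
  · have := pairR19 n z hzn A hA0 hAle htn hsn hts
    linarith
end
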